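/- arXiv:1805.08708 — 6 statements merged into one kernel-verified Lean document; each statement's English description precedes it below -/
import Mathlib

section
/- If $\{N_n\}_n$ is a sequence of normal matrices with singular value symbol $k$, then for every natural number $s$, the sequence $\{N_n^s\}_n$ has singular value symbol $k^s$. -/
open MeasureTheory Filter Matrix

noncomputable def singVals {n : ℕ} (A : Matrix (Fin n) (Fin n) ℂ) : Fin n → ℝ :=
  fun i => Real.sqrt ((Matrix.isHermitian_conjTranspose_mul_self A).eigenvalues i)

/-- `A ∼_σ k` on the domain `Dset`: singular value distribution. -/
def SingSymb {α : Type*} [MeasureSpace α] (Dset : Set α)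
    (A : ∀ n : ℕ, Matrix (Fin n) (Fin n) ℂ) (k : α → ℂ) : Prop :=
  ∀ F : C(ℝ, ℂ), HasCompactSupport F →
    Tendsto (fun n : ℕ => (n : ℂ)⁻¹ * ∑ i, F (singVals (A n) i)) atTop
      (nhds (((volume Dset).toReal)⁻¹ • ∫ x in Dset, F ‖k x‖))

/-- `A ∼_λ k` on the domain `Dset`: eigenvalue (Weyl) distribution, where the
eigenvalues of `A n` (with multiplicity) are the roots of its characteristic polynomial. -/
def SpecSymb {α : Type*} [MeasureSpace α] (Dset : Set α)
    (A : ∀ n : ℕ, Matrix (Fin n) (Fin n) ℂ) (k : α → ℂ) : Prop :=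
  ∀ F : C(ℂ, ℂ), HasCompactSupport F →
    Tendsto (fun n : ℕ =>
        (n : ℂ)⁻¹ * (Multiset.map (fun z => F z) (A n).charpoly.roots).sum) atTop
      (nhds (((volume Dset).toReal)⁻¹ • ∫ x in Dset, F (k x)))

/-- Zero-distributed sequence: `A ∼_σ 0`. -/
def ZeroDist (A : ∀ n : ℕ, Matrix (Fin n) (Fin n) ℂ) : Prop :=
  ∀ F : C(ℝ, ℂ), HasCompactSupport F →
    Tendsto (fun n : ℕ => (n : ℂ)⁻¹ * ∑ i, F (singVals (A n) i)) atTop (nhds (F 0))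


open Polynomial Finset

lemma my_charpoly_conj {m : ℕ} (U M V : Matrix (Fin m) (Fin m) ℂ)
    (hUV : U * V = 1) : (U * M * V).charpoly = M.charpoly := by
  have hcomm : ∀ W : Matrix (Fin m) (Fin m) ℂ[X],
      W * scalar (Fin m) X = scalar (Fin m) X * W :=
    fun W => (scalar_commute X (fun r => Commute.all X r) W).symm
  have hmat : charmatrix (U * M * V) =
      U.map (C : ℂ →+* ℂ[X]) * charmatrix M * V.map (C : ℂ →+* ℂ[X]) := by
    unfold charmatrix
    rw [RingHom.mapMatrix_apply, RingHom.mapMatrix_apply, mul_sub, sub_mul]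
    congr 1
    · rw [hcomm, mul_assoc, ← Matrix.map_mul, hUV,
        Matrix.map_one _ (map_zero C) (map_one C), Matrix.mul_one]
    · rw [← Matrix.map_mul, ← Matrix.map_mul]
  rw [Matrix.charpoly, Matrix.charpoly, hmat, det_mul, det_mul]
  have h1 : (U.map (C : ℂ →+* ℂ[X])).det * (V.map (C : ℂ →+* ℂ[X])).det = 1 := by
    rw [← det_mul, ← Matrix.map_mul, hUV, Matrix.map_one _ (map_zero C) (map_one C), det_one]
  calc (U.map (C : ℂ →+* ℂ[X])).det * (charmatrix M).det * (V.map (C : ℂ →+* ℂ[X])).det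
      = (U.map (C : ℂ →+* ℂ[X])).det * (V.map (C : ℂ →+* ℂ[X])).det * (charmatrix M).det := by
        ring
    _ = (charmatrix M).det := by rw [h1, one_mul]

lemma my_charpoly_diagonal {m : ℕ} (f : Fin m → ℂ) :
    (diagonal f).charpoly = ∏ i, (X - C (f i)) := by
  rw [charpoly_of_upperTriangular _ (blockTriangular_diagonal f)]
  simp [diagonal_apply_eq]

lemma my_charpoly_hermitian {m : ℕ} {B : Matrix (Fin m) (Fin m) ℂ} (hB : B.IsHermitian) :
    B.charpoly = ∏ i, (X - C ((hB.eigenvalues i : ℝ) : ℂ)) := by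
  conv_lhs => rw [hB.spectral_theorem, Unitary.conjStarAlgAut_apply]
  rw [my_charpoly_conj _ _ _ (Unitary.mul_star_self_of_mem (SetLike.coe_mem _)),
    my_charpoly_diagonal]
  rfl

lemma my_pow_conj {m : ℕ} (U D : Matrix (Fin m) (Fin m) ℂ)
    (hUV : U * star U = 1) (hVU : star U * U = 1) (s : ℕ) :
    (U * D * star U) ^ s = U * D ^ s * star U := by
  induction s with
  | zero => rw [pow_zero, pow_zero, Matrix.mul_one, hUV]
  | succ t ih =>
      rw [pow_succ, pow_succ, ih]
      calc U * D ^ t * star U * (U * D * star U)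
          = U * D ^ t * (star U * U) * D * star U := by noncomm_ring
        _ = U * (D ^ t * D) * star U := by rw [hVU]; noncomm_ring

lemma my_sqrt_pow (x : ℝ) (hx : 0 ≤ x) (s : ℕ) : Real.sqrt (x ^ s) = Real.sqrt x ^ s := by
  have h : (Real.sqrt x ^ s) ^ 2 = x ^ s := by
    rw [← pow_mul, mul_comm, pow_mul, Real.sq_sqrt hx]
  rw [← h, Real.sqrt_sq (by positivity)]

lemma my_roots_prod {m : ℕ} (f : Fin m → ℝ) :
    (∏ i, (X - C ((f i : ℝ) : ℂ))).roots = Multiset.map (fun i => ((f i : ℝ) : ℂ)) univ.val := by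
  rw [Finset.prod_eq_multiset_prod,
    show (fun i : Fin m => X - C ((f i : ℝ) : ℂ))
      = (fun a => X - C a) ∘ (fun i : Fin m => ((f i : ℝ) : ℂ)) from rfl,
    ← Multiset.map_map]
  exact roots_multiset_prod_X_sub_C _

open scoped ComplexOrder in
lemma my_sum_singVals_pow {m : ℕ} (s : ℕ) (A : Matrix (Fin m) (Fin m) ℂ) (hA : IsStarNormal A)
    (G : ℝ → ℂ) :
    ∑ i, G (singVals (A ^ s) i) = ∑ i, G (singVals A i ^ s) := by
  set hH := Matrix.isHermitian_conjTranspose_mul_self A with hHdef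
  set hB := Matrix.isHermitian_conjTranspose_mul_self (A ^ s) with hBdef
  set d := hH.eigenvalues with hd
  set e := hB.eigenvalues with he
  have hcomm : Commute (Aᴴ) A := by
    rw [← star_eq_conjTranspose]; exact hA.star_comm_self
  have key : (A ^ s)ᴴ * A ^ s = (Aᴴ * A) ^ s := by
    rw [conjTranspose_pow, ← hcomm.mul_pow]
  have hU1 : (hH.eigenvectorUnitary : Matrix (Fin m) (Fin m) ℂ) *
      star (hH.eigenvectorUnitary : Matrix (Fin m) (Fin m) ℂ) = 1 :=
    Unitary.mul_star_self_of_mem (SetLike.coe_mem _)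
  have hU2 : star (hH.eigenvectorUnitary : Matrix (Fin m) (Fin m) ℂ) *
      (hH.eigenvectorUnitary : Matrix (Fin m) (Fin m) ℂ) = 1 :=
    Unitary.star_mul_self_of_mem (SetLike.coe_mem _)
  have hdiag : diagonal (RCLike.ofReal ∘ d) ^ s = diagonal (fun i => ((d i ^ s : ℝ) : ℂ)) := by
    rw [diagonal_pow,
      show (RCLike.ofReal ∘ d) ^ s = (fun i => ((d i ^ s : ℝ) : ℂ)) from
        funext fun i => by simp [Pi.pow_apply]]
  have h2 : (A ^ s)ᴴ * A ^ s = (hH.eigenvectorUnitary : Matrix (Fin m) (Fin m) ℂ) *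
      diagonal (fun i => ((d i ^ s : ℝ) : ℂ)) *
      star (hH.eigenvectorUnitary : Matrix (Fin m) (Fin m) ℂ) := by
    rw [key]
    conv_lhs => rw [hH.spectral_theorem, Unitary.conjStarAlgAut_apply]
    rw [my_pow_conj _ _ hU1 hU2, hdiag]
  have hcp : ((A ^ s)ᴴ * A ^ s).charpoly = ∏ i, (X - C ((d i ^ s : ℝ) : ℂ)) := by
    rw [h2, my_charpoly_conj _ _ _ hU1, my_charpoly_diagonal]
  have hcp2 := my_charpoly_hermitian hB
  have hroots : Multiset.map (fun i => ((e i : ℝ) : ℂ)) univ.val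
      = Multiset.map (fun i => ((d i ^ s : ℝ) : ℂ)) univ.val := by
    rw [← my_roots_prod e, ← my_roots_prod (fun i => d i ^ s), ← hcp2, ← hcp]
  have me : Multiset.map e univ.val = Multiset.map (fun i => d i ^ s) univ.val := by
    apply Multiset.map_injective Complex.ofReal_injective
    rw [Multiset.map_map, Multiset.map_map]
    exact hroots
  have hsv : ∀ i, singVals (A ^ s) i = Real.sqrt (e i) := fun i => rfl
  have hsv2 : ∀ i, singVals A i = Real.sqrt (d i) := fun i => rfl
  calc ∑ i, G (singVals (A ^ s) i) = ∑ i, G (Real.sqrt (e i)) := by simp [hsv]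
    _ = (Multiset.map (fun t => G (Real.sqrt t)) (Multiset.map e univ.val)).sum := by
        rw [Multiset.map_map, Finset.sum_eq_multiset_sum]; rfl
    _ = (Multiset.map (fun t => G (Real.sqrt t))
          (Multiset.map (fun i => d i ^ s) univ.val)).sum := by rw [me]
    _ = ∑ i, G (Real.sqrt (d i ^ s)) := by
        rw [Multiset.map_map, Finset.sum_eq_multiset_sum]; rfl
    _ = ∑ i, G (singVals A i ^ s) := by
        refine Finset.sum_congr rfl fun i _ => ?_
        rw [hsv2, my_sqrt_pow _ ((Matrix.posSemidef_conjTranspose_mul_self A).eigenvalues_nonneg i)]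

/-- If a normal sequence has singular value symbol `k`, its `s`-th powers have
singular value symbol `k^s`. -/
theorem normal_pow_singular_symbol {q : ℕ}
    (Dset : Set (EuclideanSpace ℝ (Fin q))) (hD0 : 0 < volume Dset) (hD1 : volume Dset < ⊤)
    (N : ∀ n : ℕ, Matrix (Fin n) (Fin n) ℂ) (hN : ∀ n, IsStarNormal (N n))
    (k : EuclideanSpace ℝ (Fin q) → ℂ) (hk : SingSymb Dset N k) (s : ℕ) :
    SingSymb Dset (fun n => (N n) ^ s) (fun x => (k x) ^ s) := by
  intro F hF
  have hvol : ((volume Dset).toReal) ≠ 0 :=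
    (ENNReal.toReal_pos hD0.ne' hD1.ne).ne'
  rcases Nat.eq_zero_or_pos s with hs | hs
  · subst hs
    have hconst : ∀ n : ℕ, ∑ i : Fin n, F (singVals ((N n) ^ 0) i) = (n : ℂ) * F 1 := by
      intro n
      rw [my_sum_singVals_pow 0 (N n) (hN n) F]
      simp [pow_zero]
    have htarget : (((volume Dset).toReal)⁻¹ : ℝ) •
        ∫ x in Dset, F ‖(k x) ^ 0‖ = F 1 := by
      simp only [pow_zero, norm_one]
      rw [setIntegral_const, smul_smul, measureReal_def, inv_mul_cancel₀ hvol, one_smul]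
    rw [htarget]
    have hev : (fun _ : ℕ => F 1) =ᶠ[atTop]
        (fun n : ℕ => (n : ℂ)⁻¹ * ∑ i, F (singVals ((N n) ^ 0) i)) := by
      filter_upwards [eventually_gt_atTop 0] with n hn
      rw [hconst n, ← mul_assoc, inv_mul_cancel₀ (by exact_mod_cast hn.ne'), one_mul]
    exact tendsto_const_nhds.congr' hev
  · set G : C(ℝ, ℂ) := F.comp ⟨fun t => |t| ^ s, by fun_prop⟩ with hGdef
    have hGapp : ∀ t : ℝ, G t = F (|t| ^ s) := fun t => rfl
    obtain ⟨R, hR⟩ := hF.isBounded.subset_closedBall 0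
    set M : ℝ := max R 1 with hM
    have hG : HasCompactSupport G := by
      refine HasCompactSupport.intro (isCompact_Icc (a := -M) (b := M)) fun x hx => ?_
      have hMx : M < |x| := by
        rw [Set.mem_Icc, not_and_or, not_le, not_le] at hx
        rcases hx with h | h
        · exact lt_abs.2 (Or.inr (by linarith))
        · exact lt_abs.2 (Or.inl h)
      have h1 : (1 : ℝ) ≤ |x| := le_trans (le_max_right R 1) hMx.le
      have h2 : R < |x| ^ s :=
        lt_of_le_of_lt (le_max_left R 1) (lt_of_lt_of_le hMx (le_self_pow₀ h1 hs.ne'))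
      have hnot : |x| ^ s ∉ tsupport (⇑F) := by
        intro hmem
        have := hR hmem
        rw [Metric.mem_closedBall, Real.dist_eq, sub_zero] at this
        have : |x| ^ s ≤ R := le_trans (le_abs_self _) this
        linarith
      rw [hGapp]
      exact image_eq_zero_of_notMem_tsupport hnot
    have hkey := hk G hG
    have hfun : (fun n : ℕ => (n : ℂ)⁻¹ * ∑ i, G (singVals (N n) i))
        = fun n : ℕ => (n : ℂ)⁻¹ * ∑ i, F (singVals ((N n) ^ s) i) := by
      funext n
      congr 1
      rw [my_sum_singVals_pow s (N n) (hN n) F]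
      refine Finset.sum_congr rfl fun i _ => ?_
      rw [hGapp, abs_of_nonneg (show (0:ℝ) ≤ singVals (N n) i from Real.sqrt_nonneg _)]
    have hint : (fun x => G ‖k x‖) = fun x => F ‖(k x) ^ s‖ := by
      funext x
      rw [hGapp, abs_of_nonneg (norm_nonneg _)]
      congr 1
      exact (norm_pow (k x) s).symm
    rw [hfun, hint] at hkey
    exact hkey
end

section
/- Let $a\in C^\infty([0,1])$ (or just $C^1$), $f$ a trigonometric polynomial of degree $k$, $m = \lfloor\sqrt n\rfloor$, and let $LT_n(a,f) = [D_m(a) \otimes T_{\lfloor n/m\rfloor}(f)] \oplus 0_{n \bmod m}$. Then $LT_n(a,f) - D_n(a)T_n(f) = R_n + N_n$ where $\mathrm{rk}(R_n) = o(n)$ and $\|N_n\| = o(1)$; consequently $\{LT_n(a,f)\}_n$ and $\{D_n(a)T_n(f)\}_n$ are acs equivalent (their difference is zero-distributed). -/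
open MeasureTheory Filter Matrix

/-- The Toeplitz matrix `T_n(f) = [f_{i-j}]` of a trigonometric polynomial with
Fourier coefficients `c`. -/
def toeplitzM (c : ℤ → ℂ) (n : ℕ) : Matrix (Fin n) (Fin n) ℂ :=
  fun i j => c ((i : ℤ) - (j : ℤ))

/-- The diagonal sampling matrix `D_n(a) = diag(a(i/n))`. -/
noncomputable def diagSampling (a : ℝ → ℂ) (n : ℕ) : Matrix (Fin n) (Fin n) ℂ :=
  Matrix.diagonal (fun i : Fin n => a (((i : ℕ) + 1 : ℝ) / (n : ℝ)))

/-- The locally Toeplitz operator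
`LT_n(a,f) = [D_m(a) ⊗ T_{⌊n/m⌋}(f)] ⊕ 0_{n mod m}` with `m = ⌊√n⌋`:
a block diagonal matrix with `m` Toeplitz blocks of size `q = ⌊n/m⌋`, the `s`-th
block scaled by `a(s/m)`, followed by an `(n mod m) × (n mod m)` zero block. -/
noncomputable def LTop (a : ℝ → ℂ) (c : ℤ → ℂ) (n : ℕ) : Matrix (Fin n) (Fin n) ℂ :=
  fun i j =>
    let m := Nat.sqrt n
    let q := n / m
    if (i : ℕ) < m * q ∧ (j : ℕ) < m * q ∧ (i : ℕ) / q = (j : ℕ) / q then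
      a (((i : ℕ) / q + 1 : ℝ) / (m : ℝ)) * c (((i : ℕ) % q : ℤ) - ((j : ℕ) % q : ℤ))
    else 0

lemma band_card (n mdeg : ℕ) (t : ℤ) :
    ((Finset.univ : Finset (Fin n)).filter (fun j : Fin n => |t - (j:ℤ)| ≤ (mdeg:ℤ))).card
      ≤ 2*mdeg+1 := by
  classical
  have key : ((Finset.univ : Finset (Fin n)).filter (fun j : Fin n => |t - (j:ℤ)| ≤ (mdeg:ℤ))).card
      ≤ (Finset.range (2*mdeg+1)).card := by
    apply Finset.card_le_card_of_injOn (fun j : Fin n => ((j:ℤ) - (t - mdeg)).toNat)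
    · intro j hj
      simp only [Finset.mem_coe, Finset.mem_filter] at hj
      have := abs_le.1 hj.2
      rw [Finset.mem_coe, Finset.mem_range]
      dsimp only
      omega
    · intro x hx y hy hxy
      simp only [Finset.coe_filter, Set.mem_setOf_eq] at hx hy
      have h1 := abs_le.1 hx.2
      have h2 := abs_le.1 hy.2
      apply Fin.ext
      simp only at hxy
      omega
  simpa using key

lemma rank_le_row_support {n : ℕ} (A : Matrix (Fin n) (Fin n) ℂ) (S : Finset (Fin n))
    (h : ∀ i ∉ S, ∀ j, A i j = 0) : A.rank ≤ S.card := by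
  classical
  set C : Matrix (Fin n) {x // x ∈ S} ℂ := fun i s => if (s : Fin n) = i then 1 else 0 with hC
  set B : Matrix {x // x ∈ S} (Fin n) ℂ := A.submatrix Subtype.val id with hB
  have hAB : A = C * B := by
    ext i j
    rw [Matrix.mul_apply]
    by_cases hi : i ∈ S
    · rw [Finset.sum_eq_single (⟨i, hi⟩ : {x // x ∈ S})]
      · simp [hC, hB]
      · intro b _ hb
        have : (b : Fin n) ≠ i := fun hbi => hb (Subtype.ext hbi)
        simp [hC, this]
      · intro h'; exact absurd (Finset.mem_univ _) h'
    · rw [h i hi j]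
      symm
      apply Finset.sum_eq_zero
      intro s _
      have : (s : Fin n) ≠ i := fun hsi => hi (hsi ▸ s.2)
      simp [hC, this]
  calc A.rank = (C * B).rank := by rw [← hAB]
    _ ≤ B.rank := Matrix.rank_mul_le_right _ _
    _ ≤ Fintype.card {x // x ∈ S} := Matrix.rank_le_card_height _
    _ = S.card := Fintype.card_coe S

lemma row_sum_le {n mdeg : ℕ} (t : ℤ) (g : Fin n → ℝ) (D : ℝ) (hD : 0 ≤ D)
    (hgD : ∀ j, g j ≤ D)
    (hz : ∀ j : Fin n, ¬ |t - (j:ℤ)| ≤ (mdeg:ℤ) → g j = 0) :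
    ∑ j, g j ≤ (2*mdeg+1) * D := by
  classical
  have h1 : ∑ j, g j = ∑ j ∈ Finset.univ.filter (fun j : Fin n => |t - (j:ℤ)| ≤ (mdeg:ℤ)), g j := by
    symm
    apply Finset.sum_subset (Finset.filter_subset _ _)
    intro j _ hj
    simp only [Finset.mem_filter, Finset.mem_univ, true_and] at hj
    exact hz j hj
  rw [h1]
  calc ∑ j ∈ Finset.univ.filter (fun j : Fin n => |t - (j:ℤ)| ≤ (mdeg:ℤ)), g j
      ≤ (Finset.univ.filter (fun j : Fin n => |t - (j:ℤ)| ≤ (mdeg:ℤ))).card • D :=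
        Finset.sum_le_card_nsmul _ _ _ (fun j _ => hgD j)
    _ ≤ (2*mdeg+1) * D := by
        rw [nsmul_eq_mul]
        exact mul_le_mul_of_nonneg_right (by exact_mod_cast band_card n mdeg t) hD

lemma tendsto_div_sqrt (Cst : ℝ) :
    Tendsto (fun n : ℕ => Cst / (Nat.sqrt n : ℝ)) atTop (nhds 0) := by
  have h1 : Tendsto Nat.sqrt atTop atTop :=
    Filter.tendsto_atTop_atTop.2 (fun b => ⟨b*b, fun n hn => Nat.le_sqrt.2 hn⟩)
  exact (tendsto_const_div_atTop_nhds_zero_nat Cst).comp h1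

lemma eigenvalues_le_of_rowsum {n : ℕ} (H : Matrix (Fin n) (Fin n) ℂ) (hH : H.IsHermitian)
    (B : ℝ) (h : ∀ k, ∑ j, ‖H k j‖ ≤ B) (i : Fin n) : hH.eigenvalues i ≤ B := by
  classical
  have hv : H *ᵥ ⇑(hH.eigenvectorBasis i) = ((hH.eigenvalues i : ℝ) : ℂ) • ⇑(hH.eigenvectorBasis i) := by
    rw [hH.mulVec_eigenvectorBasis i]
    funext x
    simp [Complex.real_smul]
  have hvne : ⇑(hH.eigenvectorBasis i) ≠ 0 := by
    intro hcontra
    apply hH.eigenvectorBasis.orthonormal.ne_zero i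
    ext x
    exact congrFun hcontra x
  have heig : Module.End.HasEigenvalue (Matrix.toLin' H) ((hH.eigenvalues i : ℝ) : ℂ) :=
    Module.End.hasEigenvalue_of_hasEigenvector
      ⟨Module.End.mem_eigenspace_iff.2 (by rw [Matrix.toLin'_apply]; exact hv), hvne⟩
  obtain ⟨k, hk⟩ := eigenvalue_mem_ball heig
  rw [Metric.mem_closedBall, dist_eq_norm] at hk
  have h2 : ‖((hH.eigenvalues i : ℝ) : ℂ)‖ ≤ ‖H k k‖ + ∑ j ∈ Finset.univ.erase k, ‖H k j‖ := by
    have : ((hH.eigenvalues i : ℝ) : ℂ) = (((hH.eigenvalues i : ℝ) : ℂ) - H k k) + H k k := by ring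
    rw [this]
    exact (norm_add_le _ _).trans (by linarith [hk])
  have h3 : ‖H k k‖ + ∑ j ∈ Finset.univ.erase k, ‖H k j‖ = ∑ j, ‖H k j‖ :=
    Finset.add_sum_erase Finset.univ (fun j => ‖H k j‖) (Finset.mem_univ k)
  have h4 : hH.eigenvalues i ≤ ‖((hH.eigenvalues i : ℝ) : ℂ)‖ := by
    rw [Complex.norm_real, Real.norm_eq_abs]
    exact le_abs_self _
  linarith [h k]

lemma singVals_le_of_bounds {n : ℕ} (A : Matrix (Fin n) (Fin n) ℂ) (B : ℝ) (hB : 0 ≤ B)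
    (hrow : ∀ i, ∑ j, ‖A i j‖ ≤ B) (hcol : ∀ j, ∑ i, ‖A i j‖ ≤ B) (i : Fin n) :
    singVals A i ≤ B := by
  have hrs : ∀ k, ∑ j, ‖(Aᴴ * A) k j‖ ≤ B * B := by
    intro k
    calc ∑ j, ‖(Aᴴ * A) k j‖ ≤ ∑ j, ∑ l, ‖A l k‖ * ‖A l j‖ := by
          apply Finset.sum_le_sum; intro j _
          rw [Matrix.mul_apply]
          refine (norm_sum_le _ _).trans ?_
          apply Finset.sum_le_sum; intro l _
          rw [Matrix.conjTranspose_apply, norm_mul, norm_star]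
      _ = ∑ l, ‖A l k‖ * ∑ j, ‖A l j‖ := by
          rw [Finset.sum_comm]
          exact Finset.sum_congr rfl (fun l _ => (Finset.mul_sum _ _ _).symm)
      _ ≤ ∑ l, ‖A l k‖ * B :=
          Finset.sum_le_sum (fun l _ => mul_le_mul_of_nonneg_left (hrow l) (norm_nonneg _))
      _ ≤ B * B := by
          rw [← Finset.sum_mul]
          exact mul_le_mul_of_nonneg_right (hcol k) hB
  have hei := eigenvalues_le_of_rowsum _ (Matrix.isHermitian_conjTranspose_mul_self A) (B*B) hrs i
  calc singVals A i ≤ Real.sqrt (B*B) := Real.sqrt_le_sqrt hei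
    _ = B := Real.sqrt_mul_self hB

lemma sum_sq_singVals {n : ℕ} (A : Matrix (Fin n) (Fin n) ℂ) :
    ∑ i, (singVals A i)^2 = ∑ i, ∑ j, ‖A i j‖^2 := by
  classical
  have hH := Matrix.isHermitian_conjTranspose_mul_self A
  have h1 : ∀ i, (singVals A i)^2 = hH.eigenvalues i := fun i =>
    Real.sq_sqrt (Matrix.eigenvalues_conjTranspose_mul_self_nonneg A i)
  have h2 : (Aᴴ * A).trace = ∑ i, ((hH.eigenvalues i : ℝ) : ℂ) := by
    conv_lhs => rw [hH.spectral_theorem]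
    rw [Unitary.conjStarAlgAut_apply, Matrix.trace_mul_cycle, Unitary.coe_star_mul_self, Matrix.one_mul,
      Matrix.trace_diagonal]
    rfl
  have h3 : (Aᴴ * A).trace = ∑ i, ∑ j, ((‖A j i‖^2 : ℝ) : ℂ) := by
    rw [Matrix.trace]
    apply Finset.sum_congr rfl
    intro i _
    rw [Matrix.diag_apply, Matrix.mul_apply]
    apply Finset.sum_congr rfl
    intro j _
    rw [Matrix.conjTranspose_apply]
    have : (star (A j i)) * A j i = ((Complex.normSq (A j i) : ℝ) : ℂ) := by
      rw [Complex.star_def, Complex.normSq_eq_conj_mul_self]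
    rw [this, Complex.normSq_eq_norm_sq]
  have h4 : (∑ i, ((hH.eigenvalues i : ℝ) : ℂ)) = ∑ i, ∑ j, ((‖A j i‖^2 : ℝ) : ℂ) := by
    rw [← h2, h3]
  have h5 : ∑ i, hH.eigenvalues i = ∑ i, ∑ j, ‖A j i‖^2 := by
    have := congrArg Complex.re h4
    simpa [Complex.re_sum, ← Complex.ofReal_pow, Complex.ofReal_re] using this
  calc ∑ i, (singVals A i)^2 = ∑ i, hH.eigenvalues i := by
        exact Finset.sum_congr rfl (fun i _ => h1 i)
    _ = ∑ i, ∑ j, ‖A j i‖^2 := h5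
    _ = ∑ i, ∑ j, ‖A i j‖^2 := Finset.sum_comm

lemma zeroDist_of_sq (A : ∀ n : ℕ, Matrix (Fin n) (Fin n) ℂ)
    (h : Tendsto (fun n : ℕ => (∑ i, (singVals (A n) i)^2) / (n:ℝ)) atTop (nhds 0)) :
    ZeroDist A := by
  intro F hF
  obtain ⟨K, hK⟩ : ∃ K : ℝ, ∀ x : ℝ, ‖F x‖ ≤ K := by
    obtain ⟨K, hK⟩ := (F.continuous.norm).bounded_above_of_compact_support hF.norm
    exact ⟨K, fun x => (Real.le_norm_self _).trans (hK x)⟩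
  set K1 := max K 1 with hK1def
  have hK1pos : (0:ℝ) < K1 := lt_of_lt_of_le one_pos (le_max_right _ _)
  have hK1b : ∀ x, ‖F x‖ ≤ K1 := fun x => (hK x).trans (le_max_left _ _)
  rw [Metric.tendsto_atTop]
  intro ε hε
  obtain ⟨δ, hδpos, hδ⟩ := Metric.continuousAt_iff.1 (F.continuous.continuousAt (x := 0)) (ε/2)
    (half_pos hε)
  obtain ⟨N1, hN1⟩ := Metric.tendsto_atTop.1 h (ε/(4*K1) * δ^2)
    (mul_pos (div_pos hε (by linarith)) (pow_pos hδpos 2))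
  refine ⟨max N1 1, fun n hn => ?_⟩
  have hn1 : 1 ≤ n := le_trans (le_max_right _ _) hn
  have hnN := hN1 n (le_trans (le_max_left _ _) hn)
  have hnpos : (0:ℝ) < n := by exact_mod_cast hn1
  set σ := singVals (A n) with hσdef
  have hσ0 : ∀ i, 0 ≤ σ i := fun i => Real.sqrt_nonneg _
  have hsum0 : 0 ≤ ∑ i, (σ i)^2 := Finset.sum_nonneg (fun i _ => sq_nonneg _)
  rw [Real.dist_eq, sub_zero, abs_of_nonneg (div_nonneg hsum0 hnpos.le)] at hnN
  classical
  set T := Finset.univ.filter (fun i : Fin n => δ ≤ σ i) with hT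
  have hTcard : (T.card : ℝ) * δ^2 ≤ ∑ i, (σ i)^2 := by
    calc (T.card:ℝ) * δ^2 = ∑ _i ∈ T, δ^2 := by rw [Finset.sum_const, nsmul_eq_mul]
      _ ≤ ∑ i ∈ T, (σ i)^2 := Finset.sum_le_sum (fun i hi => by
          have h2 := (Finset.mem_filter.1 hi).2
          nlinarith [hδpos.le])
      _ ≤ ∑ i, (σ i)^2 := Finset.sum_le_sum_of_subset_of_nonneg (Finset.filter_subset _ _)
          (fun i _ _ => sq_nonneg _)
  have hnc : (n:ℂ) ≠ 0 := Nat.cast_ne_zero.2 (by omega)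
  have hsplit : (n:ℂ)⁻¹ * (∑ i, F (σ i)) - F 0 = (n:ℂ)⁻¹ * ∑ i, (F (σ i) - F 0) := by
    rw [Finset.sum_sub_distrib, Finset.sum_const, Finset.card_univ, Fintype.card_fin]
    field_simp
    rw [nsmul_eq_mul]
  rw [dist_eq_norm, hsplit, norm_mul, norm_inv]
  have hnormn : ‖(n:ℂ)‖ = (n:ℝ) := by
    rw [Complex.norm_natCast]
  rw [hnormn]
  have hbound : ‖∑ i, (F (σ i) - F 0)‖ ≤ (n:ℝ) * (ε/2) + (T.card : ℝ) * (2*K1) := by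
    refine (norm_sum_le _ _).trans ?_
    rw [← Finset.sum_filter_add_sum_filter_not Finset.univ (fun i : Fin n => δ ≤ σ i)]
    have hA : ∑ i ∈ T, ‖F (σ i) - F 0‖ ≤ (T.card : ℝ) * (2*K1) := by
      rw [← nsmul_eq_mul]
      apply Finset.sum_le_card_nsmul
      intro i _
      calc ‖F (σ i) - F 0‖ ≤ ‖F (σ i)‖ + ‖F 0‖ := norm_sub_le _ _
        _ ≤ K1 + K1 := add_le_add (hK1b _) (hK1b _)
        _ = 2*K1 := by ring
    have hB : ∑ i ∈ Finset.univ.filter (fun i : Fin n => ¬ δ ≤ σ i), ‖F (σ i) - F 0‖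
        ≤ (n:ℝ) * (ε/2) := by
      calc ∑ i ∈ Finset.univ.filter (fun i : Fin n => ¬ δ ≤ σ i), ‖F (σ i) - F 0‖
          ≤ (Finset.univ.filter (fun i : Fin n => ¬ δ ≤ σ i)).card • (ε/2) := by
            apply Finset.sum_le_card_nsmul
            intro i hi
            have h2 : σ i < δ := lt_of_not_ge (Finset.mem_filter.1 hi).2
            have := hδ (x := σ i) (by
              rw [Real.dist_eq, sub_zero, abs_of_nonneg (hσ0 i)]; exact h2)
            rw [dist_eq_norm] at this
            exact this.le
        _ ≤ (n:ℝ) * (ε/2) := by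
            rw [nsmul_eq_mul]
            apply mul_le_mul_of_nonneg_right _ (by positivity)
            have := Finset.card_filter_le Finset.univ (fun i : Fin n => ¬ δ ≤ σ i)
            rw [Finset.card_univ, Fintype.card_fin] at this
            exact_mod_cast this
    linarith
  have hfinal : (n:ℝ)⁻¹ * ‖∑ i, (F (σ i) - F 0)‖ < ε := by
    have h1 : (n:ℝ)⁻¹ * ‖∑ i, (F (σ i) - F 0)‖
        ≤ (n:ℝ)⁻¹ * ((n:ℝ) * (ε/2) + (T.card : ℝ) * (2*K1)) := by
      apply mul_le_mul_of_nonneg_left hbound (by positivity)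
    have hcardn : (T.card : ℝ) / (n:ℝ) < ε/(4*K1) := by
      rw [div_lt_iff₀ hnpos]
      have hs2 : (∑ i, (σ i)^2) < ε/(4*K1) * δ^2 * (n:ℝ) := by
        have := (div_lt_iff₀ hnpos).1 hnN
        linarith
      have h6 : (T.card : ℝ) * δ^2 < (ε/(4*K1) * (n:ℝ)) * δ^2 := by
        calc (T.card : ℝ) * δ^2 ≤ ∑ i, (σ i)^2 := hTcard
          _ < ε/(4*K1) * δ^2 * (n:ℝ) := hs2
          _ = (ε/(4*K1) * (n:ℝ)) * δ^2 := by ring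
      exact lt_of_mul_lt_mul_right h6 (sq_nonneg δ)
    have h4 : (n:ℝ)⁻¹ * ((n:ℝ) * (ε/2) + (T.card : ℝ) * (2*K1))
        = ε/2 + ((T.card : ℝ)/(n:ℝ)) * (2*K1) := by
      field_simp
    have h5 : ((T.card : ℝ)/(n:ℝ)) * (2*K1) < ε/2 := by
      calc ((T.card : ℝ)/(n:ℝ)) * (2*K1) < (ε/(4*K1)) * (2*K1) :=
            mul_lt_mul_of_pos_right hcardn (by positivity)
        _ = ε/2 := by field_simp; ring
    linarith
  exact hfinal



lemma star_mul_self_eq_normSq (z : ℂ) : star z * z = ((‖z‖^2 : ℝ) : ℂ) := by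
  rw [Complex.star_def, ← Complex.normSq_eq_conj_mul_self, Complex.normSq_eq_norm_sq]

lemma sum_star_mul_self {α : Type*} [Fintype α] (w : α → ℂ) :
    ∑ i, star (w i) * w i = ((∑ i, ‖w i‖^2 : ℝ) : ℂ) := by
  push_cast
  exact Finset.sum_congr rfl (fun i _ => (star_mul_self_eq_normSq _).trans (by norm_cast))

lemma schur_vec_bound {n : ℕ} (Nm : Matrix (Fin n) (Fin n) ℂ) (B : ℝ) (hB : 0 ≤ B)
    (hrow : ∀ i, ∑ j, ‖Nm i j‖ ≤ B) (hcol : ∀ j, ∑ i, ‖Nm i j‖ ≤ B) (v : Fin n → ℂ) :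
    ∑ i, ‖(Nm.mulVec v) i‖^2 ≤ B^2 * ∑ j, ‖v j‖^2 := by
  have step1 : ∀ i, ‖(Nm.mulVec v) i‖^2 ≤ B * ∑ j, ‖Nm i j‖ * ‖v j‖^2 := by
    intro i
    have h1 : ‖(Nm.mulVec v) i‖ ≤ ∑ j, ‖Nm i j‖ * ‖v j‖ := by
      rw [Matrix.mulVec, dotProduct]
      exact (norm_sum_le _ _).trans (le_of_eq (Finset.sum_congr rfl fun j _ => norm_mul _ _))
    have h2 : (∑ j, ‖Nm i j‖ * ‖v j‖)^2 ≤ (∑ j, ‖Nm i j‖) * ∑ j, ‖Nm i j‖ * ‖v j‖^2 := by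
      have hcs := Finset.sum_mul_sq_le_sq_mul_sq Finset.univ
        (fun j => Real.sqrt ‖Nm i j‖) (fun j => Real.sqrt ‖Nm i j‖ * ‖v j‖)
      have e1 : ∀ j : Fin n, Real.sqrt ‖Nm i j‖ * (Real.sqrt ‖Nm i j‖ * ‖v j‖)
          = ‖Nm i j‖ * ‖v j‖ := fun j => by
        rw [← mul_assoc, Real.mul_self_sqrt (norm_nonneg _)]
      have e2 : ∀ j : Fin n, (Real.sqrt ‖Nm i j‖)^2 = ‖Nm i j‖ := fun j =>
        Real.sq_sqrt (norm_nonneg _)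
      have e3 : ∀ j : Fin n, (Real.sqrt ‖Nm i j‖ * ‖v j‖)^2 = ‖Nm i j‖ * ‖v j‖^2 := fun j => by
        rw [mul_pow, Real.sq_sqrt (norm_nonneg _)]
      calc (∑ j, ‖Nm i j‖ * ‖v j‖)^2
          = (∑ j, Real.sqrt ‖Nm i j‖ * (Real.sqrt ‖Nm i j‖ * ‖v j‖))^2 := by
            rw [Finset.sum_congr rfl (fun j _ => (e1 j).symm)]
        _ ≤ (∑ j, (Real.sqrt ‖Nm i j‖)^2) * ∑ j, (Real.sqrt ‖Nm i j‖ * ‖v j‖)^2 := hcs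
        _ = (∑ j, ‖Nm i j‖) * ∑ j, ‖Nm i j‖ * ‖v j‖^2 := by
            rw [Finset.sum_congr rfl (fun j _ => e2 j), Finset.sum_congr rfl (fun j _ => e3 j)]
    calc ‖(Nm.mulVec v) i‖^2 ≤ (∑ j, ‖Nm i j‖ * ‖v j‖)^2 := by
          apply pow_le_pow_left₀ (norm_nonneg _) h1
      _ ≤ (∑ j, ‖Nm i j‖) * ∑ j, ‖Nm i j‖ * ‖v j‖^2 := h2
      _ ≤ B * ∑ j, ‖Nm i j‖ * ‖v j‖^2 := by
          apply mul_le_mul_of_nonneg_right (hrow i)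
          exact Finset.sum_nonneg fun j _ => mul_nonneg (norm_nonneg _) (sq_nonneg _)
  calc ∑ i, ‖(Nm.mulVec v) i‖^2 ≤ ∑ i, B * ∑ j, ‖Nm i j‖ * ‖v j‖^2 :=
        Finset.sum_le_sum (fun i _ => step1 i)
    _ = B * ∑ j, (∑ i, ‖Nm i j‖) * ‖v j‖^2 := by
        rw [← Finset.mul_sum]
        congr 1
        rw [Finset.sum_comm]
        exact Finset.sum_congr rfl (fun j _ => (Finset.sum_mul _ _ _).symm)
    _ ≤ B * ∑ j, B * ‖v j‖^2 := by
        apply mul_le_mul_of_nonneg_left _ hB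
        exact Finset.sum_le_sum fun j _ =>
          mul_le_mul_of_nonneg_right (hcol j) (sq_nonneg _)
    _ = B^2 * ∑ j, ‖v j‖^2 := by rw [← Finset.mul_sum]; ring

lemma orth_collapse {n : ℕ} (T : Finset (Fin n)) (U : Matrix (Fin n) (Fin n) ℂ)
    (horth : ∀ t t' : {x // x ∈ T},
      (∑ i, star (U i (t:Fin n)) * U i (t':Fin n)) = if t = t' then (1:ℂ) else 0)
    (f g : {x // x ∈ T} → ℂ) :
    ∑ i, (star (∑ t : {x // x ∈ T}, U i (t:Fin n) * f t))
      * (∑ t' : {x // x ∈ T}, U i (t':Fin n) * g t') = ∑ t, star (f t) * g t := by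
  classical
  have e1 : ∀ i, (star (∑ t : {x // x ∈ T}, U i (t:Fin n) * f t))
      * (∑ t' : {x // x ∈ T}, U i (t':Fin n) * g t')
      = ∑ t : {x // x ∈ T}, ∑ t' : {x // x ∈ T},
          (star (f t) * g t') * (star (U i (t:Fin n)) * U i (t':Fin n)) := by
    intro i
    rw [star_sum, Finset.sum_mul_sum]
    apply Finset.sum_congr rfl; intro t _
    apply Finset.sum_congr rfl; intro t' _
    rw [star_mul']
    ring
  calc ∑ i, (star (∑ t : {x // x ∈ T}, U i (t:Fin n) * f t))
        * (∑ t' : {x // x ∈ T}, U i (t':Fin n) * g t')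
      = ∑ i, ∑ t : {x // x ∈ T}, ∑ t' : {x // x ∈ T},
          (star (f t) * g t') * (star (U i (t:Fin n)) * U i (t':Fin n)) :=
        Finset.sum_congr rfl (fun i _ => e1 i)
    _ = ∑ t : {x // x ∈ T}, ∑ t' : {x // x ∈ T},
          (star (f t) * g t') * (∑ i, star (U i (t:Fin n)) * U i (t':Fin n)) := by
        rw [Finset.sum_comm]
        apply Finset.sum_congr rfl; intro t _
        rw [Finset.sum_comm]
        exact Finset.sum_congr rfl (fun t' _ => (Finset.mul_sum _ _ _).symm)
    _ = ∑ t : {x // x ∈ T}, ∑ t' : {x // x ∈ T},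
          (star (f t) * g t') * (if t = t' then (1:ℂ) else 0) := by
        apply Finset.sum_congr rfl; intro t _
        exact Finset.sum_congr rfl (fun t' _ => by rw [horth])
    _ = ∑ t, star (f t) * g t := by
        apply Finset.sum_congr rfl; intro t _
        rw [Finset.sum_congr rfl (fun t' (_ : t' ∈ Finset.univ) => mul_ite_zero ..)]
        · rw [Finset.sum_ite_eq]
          simp

lemma qf_eq {n : ℕ} (P : Matrix (Fin n) (Fin n) ℂ) (v : Fin n → ℂ) :
    ∑ i, star (v i) * ((Pᴴ * P).mulVec v) i
      = ∑ k, star ((P.mulVec v) k) * ((P.mulVec v) k) := by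
  have lhs_eq : ∀ i, star (v i) * ((Pᴴ * P).mulVec v) i
      = ∑ j, ∑ k, (star (v i) * star (P k i)) * (P k j * v j) := by
    intro i
    rw [Matrix.mulVec, dotProduct, Finset.mul_sum]
    apply Finset.sum_congr rfl; intro j _
    rw [Matrix.mul_apply, Finset.sum_mul, Finset.mul_sum]
    apply Finset.sum_congr rfl; intro k _
    rw [Matrix.conjTranspose_apply]
    ring
  have rhs_eq : ∀ k, star ((P.mulVec v) k) * ((P.mulVec v) k)
      = ∑ i, ∑ j, (star (v i) * star (P k i)) * (P k j * v j) := by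
    intro k
    rw [Matrix.mulVec, dotProduct, star_sum, Finset.sum_mul_sum]
    apply Finset.sum_congr rfl; intro i _
    apply Finset.sum_congr rfl; intro j _
    rw [star_mul']
    ring
  calc ∑ i, star (v i) * ((Pᴴ * P).mulVec v) i
      = ∑ i, ∑ j, ∑ k, (star (v i) * star (P k i)) * (P k j * v j) :=
        Finset.sum_congr rfl (fun i _ => lhs_eq i)
    _ = ∑ j, ∑ k, ∑ i, (star (v i) * star (P k i)) * (P k j * v j) := by
        rw [Finset.sum_comm]
        exact Finset.sum_congr rfl (fun j _ => Finset.sum_comm)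
    _ = ∑ k, ∑ i, ∑ j, (star (v i) * star (P k i)) * (P k j * v j) := by
        rw [Finset.sum_comm]
        exact Finset.sum_congr rfl (fun k _ => Finset.sum_comm)
    _ = ∑ k, star ((P.mulVec v) k) * ((P.mulVec v) k) :=
        Finset.sum_congr rfl (fun k _ => (rhs_eq k).symm)

lemma count_le_of_decomp {n : ℕ} (P Rm Nm : Matrix (Fin n) (Fin n) ℂ)
    (hPRN : P = Rm + Nm) (Scol : Finset (Fin n))
    (hR : ∀ i j, j ∉ Scol → Rm i j = 0)
    (B δ : ℝ) (hB : 0 ≤ B) (hBδ : B < δ)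
    (hrow : ∀ i, ∑ j, ‖Nm i j‖ ≤ B) (hcol : ∀ j, ∑ i, ‖Nm i j‖ ≤ B) :
    (Finset.univ.filter (fun i => δ ≤ singVals P i)).card ≤ Scol.card := by
  classical
  by_contra hlt
  push_neg at hlt
  set hH := Matrix.isHermitian_conjTranspose_mul_self P with hHdef
  set T := Finset.univ.filter (fun i => δ ≤ singVals P i) with hTdef
  have hδpos : 0 < δ := lt_of_le_of_lt hB hBδ
  have heigT : ∀ t : {x // x ∈ T}, δ^2 ≤ hH.eigenvalues (t : Fin n) := by
    intro t
    have ht := (Finset.mem_filter.1 t.2).2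
    have h0 := Matrix.eigenvalues_conjTranspose_mul_self_nonneg P (t : Fin n)
    exact (Real.le_sqrt hδpos.le h0).1 ht
  obtain ⟨U, hUdef⟩ : ∃ U : Matrix (Fin n) (Fin n) ℂ,
      U = (hH.eigenvectorUnitary : Matrix (Fin n) (Fin n) ℂ) := ⟨_, rfl⟩
  have hUU : star U * U = 1 := by
    rw [hUdef]; exact Unitary.coe_star_mul_self hH.eigenvectorUnitary
  have horth : ∀ t t' : {x // x ∈ T},
      (∑ i, star (U i (t:Fin n)) * U i (t':Fin n)) = if t = t' then (1:ℂ) else 0 := by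
    intro t t'
    have h1 : (star U * U) (t:Fin n) (t':Fin n) = (1 : Matrix (Fin n) (Fin n) ℂ) (t:Fin n) (t':Fin n) := by
      rw [hUU]
    rw [Matrix.mul_apply] at h1
    have h2 : ∀ i, (star U) (t:Fin n) i = star (U i (t:Fin n)) := fun i => Matrix.star_apply _ _ _
    rw [Finset.sum_congr rfl (fun i _ => by rw [h2 i])] at h1
    rw [h1, Matrix.one_apply]
    by_cases h : t = t'
    · rw [if_pos h, if_pos (by rw [h])]
    · rw [if_neg h, if_neg (fun hc => h (Subtype.ext hc))]
  -- H * U = U * D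
  have hspec : Pᴴ * P = U * Matrix.diagonal (RCLike.ofReal ∘ hH.eigenvalues) * star U := by
    rw [hUdef]; exact hH.spectral_theorem
  have hHU : Pᴴ * P * U = U * Matrix.diagonal (RCLike.ofReal ∘ hH.eigenvalues) := by
    conv_lhs => rw [hspec]
    rw [Matrix.mul_assoc, hUU, Matrix.mul_one]
  -- the map to Scol coordinates
  set M0 : Matrix {x // x ∈ Scol} {x // x ∈ T} ℂ :=
    Matrix.of (fun s t => U (s : Fin n) (t : Fin n)) with hM0
  have hnotinj : ¬ Function.Injective (Matrix.mulVecLin M0) := by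
    intro hinj
    have := LinearMap.finrank_le_finrank_of_injective hinj
    rw [Module.finrank_fintype_fun_eq_card, Module.finrank_fintype_fun_eq_card,
      Fintype.card_coe, Fintype.card_coe] at this
    omega
  obtain ⟨c, hc0, hφc⟩ : ∃ c : {x // x ∈ T} → ℂ, c ≠ 0 ∧ M0.mulVec c = 0 := by
    rw [Function.not_injective_iff] at hnotinj
    obtain ⟨x, y, hxy, hne⟩ := hnotinj
    refine ⟨x - y, sub_ne_zero_of_ne hne, ?_⟩
    have : M0.mulVecLin (x - y) = 0 := by rw [map_sub, hxy, sub_self]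
    simpa [Matrix.mulVecLin_apply] using this
  set v : Fin n → ℂ := fun i => ∑ t : {x // x ∈ T}, U i (t:Fin n) * c t with hv
  have hvS : ∀ s : Fin n, s ∈ Scol → v s = 0 := by
    intro s hs
    have := congrFun hφc ⟨s, hs⟩
    simpa [Matrix.mulVec, dotProduct, hM0, hv] using this
  have hRv : Rm.mulVec v = 0 := by
    funext i
    rw [Matrix.mulVec, dotProduct]
    apply Finset.sum_eq_zero
    intro j _
    by_cases hj : j ∈ Scol
    · rw [hvS j hj, mul_zero]
    · rw [hR i j hj, zero_mul]
  have hPv : P.mulVec v = Nm.mulVec v := by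
    rw [hPRN, Matrix.add_mulVec, hRv, zero_add]
  -- energy identities
  have hE : ∑ i, ‖v i‖^2 = ∑ t : {x // x ∈ T}, ‖c t‖^2 := by
    have h1 := orth_collapse T U horth c c
    have h2 : ∑ i, star (v i) * v i = ∑ t : {x // x ∈ T}, star (c t) * c t := h1
    rw [sum_star_mul_self, sum_star_mul_self] at h2
    exact_mod_cast h2
  -- quadratic form
  have hQ : ((∑ k, ‖(P.mulVec v) k‖^2 : ℝ) : ℂ)
      = ∑ t : {x // x ∈ T}, ((hH.eigenvalues (t:Fin n) : ℝ) : ℂ) * (star (c t) * c t) := by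
    have hHv : ∀ i, ((Pᴴ * P).mulVec v) i
        = ∑ t : {x // x ∈ T}, U i (t:Fin n) * (((hH.eigenvalues (t:Fin n) : ℝ) : ℂ) * c t) := by
      intro i
      rw [Matrix.mulVec, dotProduct]
      have step : ∀ j, (Pᴴ * P) i j * v j
          = ∑ t : {x // x ∈ T}, (Pᴴ * P) i j * U j (t:Fin n) * c t := by
        intro j
        rw [hv, Finset.mul_sum]
        exact Finset.sum_congr rfl (fun t _ => by ring)
      rw [Finset.sum_congr rfl (fun j _ => step j), Finset.sum_comm]
      apply Finset.sum_congr rfl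
      intro t _
      have hcolT : ∑ j, (Pᴴ * P) i j * U j (t:Fin n) = (Pᴴ * P * U) i (t:Fin n) :=
        (Matrix.mul_apply).symm
      calc ∑ j, (Pᴴ * P) i j * U j (t:Fin n) * c t
          = (∑ j, (Pᴴ * P) i j * U j (t:Fin n)) * c t := by rw [Finset.sum_mul]
        _ = (Pᴴ * P * U) i (t:Fin n) * c t := by rw [hcolT]
        _ = (U * Matrix.diagonal ((RCLike.ofReal : ℝ → ℂ) ∘ hH.eigenvalues)) i (t:Fin n) * c t := by
            rw [hHU]
        _ = U i (t:Fin n) * (((hH.eigenvalues (t:Fin n) : ℝ) : ℂ) * c t) := by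
            rw [Matrix.mul_diagonal]
            simp only [Function.comp_apply]
            have hco : (RCLike.ofReal (hH.eigenvalues (t:Fin n)) : ℂ)
                = ((hH.eigenvalues (t:Fin n) : ℝ) : ℂ) := rfl
            rw [hco]
            ring
    have h3 : ∑ i, star (v i) * ((Pᴴ * P).mulVec v) i
        = ∑ t : {x // x ∈ T}, star (c t) * (((hH.eigenvalues (t:Fin n) : ℝ) : ℂ) * c t) := by
      have := orth_collapse T U horth c
        (fun t => ((hH.eigenvalues (t:Fin n) : ℝ) : ℂ) * c t)
      calc ∑ i, star (v i) * ((Pᴴ * P).mulVec v) i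
          = ∑ i, (star (∑ t : {x // x ∈ T}, U i (t:Fin n) * c t))
              * (∑ t' : {x // x ∈ T}, U i (t':Fin n)
                  * (((hH.eigenvalues (t':Fin n) : ℝ) : ℂ) * c t')) := by
            apply Finset.sum_congr rfl; intro i _
            rw [hHv i, hv]
        _ = _ := this
    rw [← sum_star_mul_self (fun k => (P.mulVec v) k), ← qf_eq, h3]
    exact Finset.sum_congr rfl (fun t _ => by ring)
  -- extract real inequality
  have hQr : ∑ k, ‖(P.mulVec v) k‖^2 = ∑ t : {x // x ∈ T}, hH.eigenvalues (t:Fin n) * ‖c t‖^2 := by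
    have h4 := congrArg Complex.re hQ
    rw [Complex.ofReal_re] at h4
    rw [h4, Complex.re_sum]
    apply Finset.sum_congr rfl
    intro t _
    rw [star_mul_self_eq_normSq, ← Complex.ofReal_mul, Complex.ofReal_re]
  have hEpos : 0 < ∑ t : {x // x ∈ T}, ‖c t‖^2 := by
    have hex : ∃ t, c t ≠ 0 := by
      by_contra hno
      push_neg at hno
      exact hc0 (funext hno)
    obtain ⟨t0, ht0⟩ := hex
    have h5 : 0 < ‖c t0‖^2 := pow_pos (norm_pos_iff.2 ht0) 2
    have h6 : ‖c t0‖^2 ≤ ∑ t : {x // x ∈ T}, ‖c t‖^2 :=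
      Finset.single_le_sum (fun t _ => sq_nonneg (‖c t‖)) (Finset.mem_univ t0)
    linarith
  have hlow : δ^2 * ∑ t : {x // x ∈ T}, ‖c t‖^2 ≤ ∑ k, ‖(P.mulVec v) k‖^2 := by
    rw [hQr, Finset.mul_sum]
    apply Finset.sum_le_sum
    intro t _
    exact mul_le_mul_of_nonneg_right (heigT t) (sq_nonneg _)
  have hhigh : ∑ k, ‖(P.mulVec v) k‖^2 ≤ B^2 * ∑ t : {x // x ∈ T}, ‖c t‖^2 := by
    rw [hPv, ← hE]
    exact schur_vec_bound Nm B hB hrow hcol v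
  have hEq : δ^2 * ∑ t : {x // x ∈ T}, ‖c t‖^2 ≤ B^2 * ∑ t : {x // x ∈ T}, ‖c t‖^2 :=
    le_trans hlow hhigh
  have h8 : δ^2 ≤ B^2 := by
    by_contra hcon
    push_neg at hcon
    nlinarith [hEq, hEpos]
  nlinarith [h8, hBδ, hB, hδpos]


lemma zeroDist_of_count (A : ∀ n : ℕ, Matrix (Fin n) (Fin n) ℂ) (κ : ℕ → ℝ)
    (hκ : Filter.Tendsto (fun n => κ n / (n:ℝ)) Filter.atTop (nhds 0))
    (hcount : ∀ δ : ℝ, 0 < δ → ∀ᶠ n in Filter.atTop,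
      ((Finset.univ.filter (fun i : Fin n => δ ≤ singVals (A n) i)).card : ℝ) ≤ κ n) :
    ZeroDist A := by
  classical
  intro F hF
  obtain ⟨K, hK⟩ : ∃ K : ℝ, ∀ x : ℝ, ‖F x‖ ≤ K := by
    obtain ⟨K, hK⟩ := (F.continuous.norm).bounded_above_of_compact_support hF.norm
    exact ⟨K, fun x => (Real.le_norm_self _).trans (hK x)⟩
  set K1 := max K 1 with hK1def
  have hK1pos : (0:ℝ) < K1 := lt_of_lt_of_le one_pos (le_max_right _ _)
  have hK1b : ∀ x, ‖F x‖ ≤ K1 := fun x => (hK x).trans (le_max_left _ _)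
  rw [Metric.tendsto_nhds]
  intro ε hε
  obtain ⟨δ, hδpos, hδ⟩ := Metric.continuousAt_iff.1 (F.continuous.continuousAt (x := 0)) (ε/2)
    (half_pos hε)
  have hev1 := hcount δ hδpos
  have hev2 : ∀ᶠ n : ℕ in Filter.atTop, κ n / (n:ℝ) < ε/(4*K1) :=
    hκ.eventually (eventually_lt_nhds (by positivity) |>.mono (fun x hx => hx))
  have hev3 : ∀ᶠ n : ℕ in Filter.atTop, 1 ≤ n := Filter.eventually_ge_atTop 1
  filter_upwards [hev1, hev2, hev3] with n hcard hκn hn1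
  have hnpos : (0:ℝ) < n := by exact_mod_cast hn1
  set σ := singVals (A n) with hσdef
  have hσ0 : ∀ i, 0 ≤ σ i := fun i => Real.sqrt_nonneg _
  set T := Finset.univ.filter (fun i : Fin n => δ ≤ σ i) with hT
  have hnc : (n:ℂ) ≠ 0 := Nat.cast_ne_zero.2 (by omega)
  have hsplit : (n:ℂ)⁻¹ * (∑ i, F (σ i)) - F 0 = (n:ℂ)⁻¹ * ∑ i, (F (σ i) - F 0) := by
    rw [Finset.sum_sub_distrib, Finset.sum_const, Finset.card_univ, Fintype.card_fin]
    field_simp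
    rw [nsmul_eq_mul]
  rw [dist_eq_norm, hsplit, norm_mul, norm_inv]
  have hnormn : ‖(n:ℂ)‖ = (n:ℝ) := by rw [Complex.norm_natCast]
  rw [hnormn]
  have hbound : ‖∑ i, (F (σ i) - F 0)‖ ≤ (n:ℝ) * (ε/2) + (T.card : ℝ) * (2*K1) := by
    refine (norm_sum_le _ _).trans ?_
    rw [← Finset.sum_filter_add_sum_filter_not Finset.univ (fun i : Fin n => δ ≤ σ i)]
    have hA : ∑ i ∈ T, ‖F (σ i) - F 0‖ ≤ (T.card : ℝ) * (2*K1) := by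
      rw [← nsmul_eq_mul]
      apply Finset.sum_le_card_nsmul
      intro i _
      calc ‖F (σ i) - F 0‖ ≤ ‖F (σ i)‖ + ‖F 0‖ := norm_sub_le _ _
        _ ≤ K1 + K1 := add_le_add (hK1b _) (hK1b _)
        _ = 2*K1 := by ring
    have hB : ∑ i ∈ Finset.univ.filter (fun i : Fin n => ¬ δ ≤ σ i), ‖F (σ i) - F 0‖
        ≤ (n:ℝ) * (ε/2) := by
      calc ∑ i ∈ Finset.univ.filter (fun i : Fin n => ¬ δ ≤ σ i), ‖F (σ i) - F 0‖
          ≤ (Finset.univ.filter (fun i : Fin n => ¬ δ ≤ σ i)).card • (ε/2) := by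
            apply Finset.sum_le_card_nsmul
            intro i hi
            have h2 : σ i < δ := lt_of_not_ge (Finset.mem_filter.1 hi).2
            have := hδ (x := σ i) (by
              rw [Real.dist_eq, sub_zero, abs_of_nonneg (hσ0 i)]; exact h2)
            rw [dist_eq_norm] at this
            exact this.le
        _ ≤ (n:ℝ) * (ε/2) := by
            rw [nsmul_eq_mul]
            apply mul_le_mul_of_nonneg_right _ (by positivity)
            have := Finset.card_filter_le Finset.univ (fun i : Fin n => ¬ δ ≤ σ i)
            rw [Finset.card_univ, Fintype.card_fin] at this
            exact_mod_cast this
    linarith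
  have h1 : (n:ℝ)⁻¹ * ‖∑ i, (F (σ i) - F 0)‖
      ≤ (n:ℝ)⁻¹ * ((n:ℝ) * (ε/2) + (T.card : ℝ) * (2*K1)) :=
    mul_le_mul_of_nonneg_left hbound (by positivity)
  have hcardn : (T.card : ℝ) / (n:ℝ) < ε/(4*K1) := by
    have h2 : (T.card : ℝ) / (n:ℝ) ≤ κ n / (n:ℝ) :=
      div_le_div_of_nonneg_right hcard hnpos.le
    linarith
  have h4 : (n:ℝ)⁻¹ * ((n:ℝ) * (ε/2) + (T.card : ℝ) * (2*K1))
      = ε/2 + ((T.card : ℝ)/(n:ℝ)) * (2*K1) := by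
    field_simp
  have h5 : ((T.card : ℝ)/(n:ℝ)) * (2*K1) < ε/2 := by
    calc ((T.card : ℝ)/(n:ℝ)) * (2*K1) < (ε/(4*K1)) * (2*K1) :=
          mul_lt_mul_of_pos_right hcardn (by positivity)
      _ = ε/2 := by field_simp; ring
  linarith



lemma mod_sub_eq (qq x y : ℕ) (h : x / qq = y / qq) :
    ((x:ℤ) % (qq:ℤ)) - ((y:ℤ) % (qq:ℤ)) = (x:ℤ) - (y:ℤ) := by
  have h1 := Nat.div_add_mod x qq
  have h2 := Nat.div_add_mod y qq
  have h3 : qq * (x / qq) = qq * (y / qq) := by rw [h]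
  omega

/-- the in-block sampling point of `LTop` (with *real* division `i/q`). -/
noncomputable def samp (n : ℕ) (i : Fin n) : ℝ :=
  (((i:ℕ) : ℝ) / ((n / Nat.sqrt n : ℕ) : ℝ) + 1) / ((Nat.sqrt n : ℕ) : ℝ)

noncomputable def NX (a : ℝ → ℂ) (c : ℤ → ℂ) (n : ℕ) : Matrix (Fin n) (Fin n) ℂ :=
  fun i j =>
    if (i : ℕ) < Nat.sqrt n * (n / Nat.sqrt n) ∧ (j : ℕ) < Nat.sqrt n * (n / Nat.sqrt n) ∧
        (i : ℕ) / (n / Nat.sqrt n) = (j : ℕ) / (n / Nat.sqrt n) ∧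
        (i : ℕ) + n / Nat.sqrt n ≤ Nat.sqrt n * (n / Nat.sqrt n) then
      (a (samp n i) - a (((i : ℕ) + 1 : ℝ) / (n : ℝ))) * c ((i : ℤ) - (j : ℤ))
    else 0

noncomputable def RX (a : ℝ → ℂ) (c : ℤ → ℂ) (n : ℕ) : Matrix (Fin n) (Fin n) ℂ :=
  (LTop a c n - diagSampling a n * toeplitzM c n) - NX a c n

lemma decompRN (a : ℝ → ℂ) (c : ℤ → ℂ) (n : ℕ) :
    LTop a c n - diagSampling a n * toeplitzM c n = RX a c n + NX a c n := by
  rw [RX]; abel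

lemma LTop_apply (a : ℝ → ℂ) (c : ℤ → ℂ) (n : ℕ) (i j : Fin n) :
    LTop a c n i j =
      if (i : ℕ) < Nat.sqrt n * (n / Nat.sqrt n) ∧ (j : ℕ) < Nat.sqrt n * (n / Nat.sqrt n) ∧
          (i : ℕ) / (n / Nat.sqrt n) = (j : ℕ) / (n / Nat.sqrt n) then
        a (samp n i) * c ((i : ℤ) - (j : ℤ))
      else 0 := by
  simp only [LTop, samp]
  by_cases h : (i : ℕ) < Nat.sqrt n * (n / Nat.sqrt n) ∧ (j : ℕ) < Nat.sqrt n * (n / Nat.sqrt n) ∧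
      (i : ℕ) / (n / Nat.sqrt n) = (j : ℕ) / (n / Nat.sqrt n)
  · rw [if_pos h, if_pos h, mod_sub_eq _ _ _ h.2.2]
  · rw [if_neg h, if_neg h]

lemma diff_apply (a : ℝ → ℂ) (c : ℤ → ℂ) (n : ℕ) (i j : Fin n) :
    (LTop a c n - diagSampling a n * toeplitzM c n) i j =
      LTop a c n i j - a (((i : ℕ) + 1 : ℝ) / (n : ℝ)) * c ((i : ℤ) - (j : ℤ)) := by
  simp [Matrix.sub_apply, diagSampling, toeplitzM, Matrix.diagonal_mul]

lemma RX_in_zero (a : ℝ → ℂ) (c : ℤ → ℂ) (n : ℕ) (i j : Fin n)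
    (h : (i : ℕ) < Nat.sqrt n * (n / Nat.sqrt n) ∧ (j : ℕ) < Nat.sqrt n * (n / Nat.sqrt n) ∧
        (i : ℕ) / (n / Nat.sqrt n) = (j : ℕ) / (n / Nat.sqrt n) ∧
        (i : ℕ) + n / Nat.sqrt n ≤ Nat.sqrt n * (n / Nat.sqrt n)) :
    RX a c n i j = 0 := by
  rw [RX, Matrix.sub_apply, diff_apply, LTop_apply]
  have hN : NX a c n i j
      = (a (samp n i) - a (((i : ℕ) + 1 : ℝ) / (n : ℝ))) * c ((i : ℤ) - (j : ℤ)) := by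
    rw [NX, if_pos h]
  rw [hN, if_pos ⟨h.1, h.2.1, h.2.2.1⟩]
  ring

lemma RX_band_zero (a : ℝ → ℂ) (c : ℤ → ℂ) (mdeg : ℕ)
    (hc : ∀ k : ℤ, (mdeg : ℤ) < |k| → c k = 0) (n : ℕ) (i j : Fin n)
    (h : ¬ |(i:ℤ) - (j:ℤ)| ≤ (mdeg:ℤ)) : RX a c n i j = 0 := by
  have hc0 : c ((i:ℤ) - (j:ℤ)) = 0 := hc _ (lt_of_not_ge (fun hle => h hle))
  rw [RX, Matrix.sub_apply, diff_apply, LTop_apply, NX]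
  split_ifs <;> simp [hc0]

lemma NX_band_zero (a : ℝ → ℂ) (c : ℤ → ℂ) (mdeg : ℕ)
    (hc : ∀ k : ℤ, (mdeg : ℤ) < |k| → c k = 0) (n : ℕ) (i j : Fin n)
    (h : ¬ |(i:ℤ) - (j:ℤ)| ≤ (mdeg:ℤ)) : NX a c n i j = 0 := by
  have hc0 : c ((i:ℤ) - (j:ℤ)) = 0 := hc _ (lt_of_not_ge (fun hle => h hle))
  rw [NX]
  split_ifs <;> simp [hc0]

lemma in_S_of (mdeg q M i j : ℕ) (hq : 0 < q)
    (hij : |(i:ℤ) - (j:ℤ)| ≤ (mdeg:ℤ))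
    (hnc : ¬(i < M*q ∧ j < M*q ∧ i/q = j/q)) :
    i % q < mdeg ∨ q ≤ i % q + mdeg ∨ (M-1)*q ≤ i + mdeg := by
  have habs := abs_le.1 hij
  have hji : j ≤ i + mdeg := by omega
  have hij' : i ≤ j + mdeg := by omega
  have hMq : (M-1)*q ≤ M*q := Nat.mul_le_mul_right q (Nat.sub_le M 1)
  by_cases h1 : i < M*q
  · by_cases h2 : j < M*q
    · have h3 : i/q ≠ j/q := fun h => hnc ⟨h1, h2, h⟩
      have ei := Nat.div_add_mod i q
      have ej := Nat.div_add_mod j q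
      have hri : i % q < q := Nat.mod_lt _ hq
      have hrj : j % q < q := Nat.mod_lt _ hq
      rcases lt_or_gt_of_ne h3 with hlt | hgt
      · right; left
        have hA : q * (i/q + 1) ≤ q * (j/q) := Nat.mul_le_mul_left q hlt
        have hB : q * (j/q) ≤ j := Nat.le.intro ej
        have hC : q * (i/q + 1) = q * (i/q) + q := by ring
        linarith
      · left
        have hA : q * (j/q + 1) ≤ q * (i/q) := Nat.mul_le_mul_left q hgt
        have hB : j < q * (j/q) + q := by linarith
        have hC : q * (j/q + 1) = q * (j/q) + q := by ring
        have hD : q * (i/q) ≤ i := Nat.le.intro ei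
        linarith
    · right; right; omega
  · right; right; omega

/-- The bad-row (and bad-column) index set. -/
def badS (mdeg n : ℕ) : Finset (Fin n) :=
  Finset.univ.filter (fun i : Fin n =>
    (i:ℕ) % (n / Nat.sqrt n) < mdeg ∨
    (n / Nat.sqrt n) ≤ (i:ℕ) % (n / Nat.sqrt n) + mdeg ∨
    (Nat.sqrt n - 1) * (n / Nat.sqrt n) ≤ (i:ℕ) + mdeg)

lemma sub_one_mul_add (M q : ℕ) (hM : 1 ≤ M) : (M-1)*q + q = M*q := by
  have h : M - 1 + 1 = M := Nat.succ_pred_eq_of_pos hM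
  calc (M-1)*q + q = (M-1+1)*q := by ring
    _ = M*q := by rw [h]

lemma RX_row_zero (a : ℝ → ℂ) (c : ℤ → ℂ) (mdeg : ℕ)
    (hc : ∀ k : ℤ, (mdeg : ℤ) < |k| → c k = 0) (n : ℕ) (i : Fin n)
    (hi : i ∉ badS mdeg n) (j : Fin n) : RX a c n i j = 0 := by
  classical
  simp only [badS, Finset.mem_filter, Finset.mem_univ, true_and, not_or, not_le, not_lt] at hi
  obtain ⟨hA, hB, hC⟩ := hi
  by_cases hband : |(i:ℤ) - (j:ℤ)| ≤ (mdeg:ℤ)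
  · have hq : 0 < n / Nat.sqrt n := by omega
    by_cases hcond : (i:ℕ) < Nat.sqrt n * (n / Nat.sqrt n) ∧
        (j:ℕ) < Nat.sqrt n * (n / Nat.sqrt n) ∧
        (i:ℕ) / (n / Nat.sqrt n) = (j:ℕ) / (n / Nat.sqrt n)
    · have hM1 : 1 ≤ Nat.sqrt n := by
        rcases Nat.eq_zero_or_pos (Nat.sqrt n) with h0 | h1
        · exfalso; rw [h0, Nat.zero_mul] at hcond; exact absurd hcond.1 (by omega)
        · exact h1
      have hid := sub_one_mul_add (Nat.sqrt n) (n / Nat.sqrt n) hM1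
      have hex : (i:ℕ) + n / Nat.sqrt n ≤ Nat.sqrt n * (n / Nat.sqrt n) := by omega
      exact RX_in_zero a c n i j ⟨hcond.1, hcond.2.1, hcond.2.2, hex⟩
    · have := in_S_of mdeg (n / Nat.sqrt n) (Nat.sqrt n) (i:ℕ) (j:ℕ) hq hband hcond
      omega
  · exact RX_band_zero a c mdeg hc n i j hband

lemma RX_col_zero (a : ℝ → ℂ) (c : ℤ → ℂ) (mdeg : ℕ)
    (hc : ∀ k : ℤ, (mdeg : ℤ) < |k| → c k = 0) (n : ℕ) (j : Fin n)
    (hj : j ∉ badS mdeg n) (i : Fin n) : RX a c n i j = 0 := by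
  classical
  simp only [badS, Finset.mem_filter, Finset.mem_univ, true_and, not_or, not_le, not_lt] at hj
  obtain ⟨hA, hB, hC⟩ := hj
  by_cases hband : |(i:ℤ) - (j:ℤ)| ≤ (mdeg:ℤ)
  · have hq : 0 < n / Nat.sqrt n := by omega
    by_cases hcond : (i:ℕ) < Nat.sqrt n * (n / Nat.sqrt n) ∧
        (j:ℕ) < Nat.sqrt n * (n / Nat.sqrt n) ∧
        (i:ℕ) / (n / Nat.sqrt n) = (j:ℕ) / (n / Nat.sqrt n)
    · have hM1 : 1 ≤ Nat.sqrt n := by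
        rcases Nat.eq_zero_or_pos (Nat.sqrt n) with h0 | h1
        · exfalso; rw [h0, Nat.zero_mul] at hcond; exact absurd hcond.1 (by omega)
        · exact h1
      have hid := sub_one_mul_add (Nat.sqrt n) (n / Nat.sqrt n) hM1
      by_cases hex : (i:ℕ) + n / Nat.sqrt n ≤ Nat.sqrt n * (n / Nat.sqrt n)
      · exact RX_in_zero a c n i j ⟨hcond.1, hcond.2.1, hcond.2.2, hex⟩
      · exfalso
        have h1 : (Nat.sqrt n - 1) * (n / Nat.sqrt n) ≤ (i:ℕ) := by omega
        have h2 : Nat.sqrt n - 1 ≤ (i:ℕ) / (n / Nat.sqrt n) :=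
          (Nat.le_div_iff_mul_le hq).2 h1
        have h3 : (Nat.sqrt n - 1) * (n / Nat.sqrt n)
            ≤ ((i:ℕ) / (n / Nat.sqrt n)) * (n / Nat.sqrt n) :=
          Nat.mul_le_mul_right _ h2
        rw [hcond.2.2] at h3
        have h4 : ((j:ℕ) / (n / Nat.sqrt n)) * (n / Nat.sqrt n) ≤ (j:ℕ) :=
          Nat.div_mul_le_self _ _
        omega
    · have hnc' : ¬((j:ℕ) < Nat.sqrt n * (n / Nat.sqrt n) ∧
          (i:ℕ) < Nat.sqrt n * (n / Nat.sqrt n) ∧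
          (j:ℕ) / (n / Nat.sqrt n) = (i:ℕ) / (n / Nat.sqrt n)) :=
        fun h => hcond ⟨h.2.1, h.1, h.2.2.symm⟩
      have hband' : |(j:ℤ) - (i:ℤ)| ≤ (mdeg:ℤ) := by rw [abs_sub_comm]; exact hband
      have := in_S_of mdeg (n / Nat.sqrt n) (Nat.sqrt n) (j:ℕ) (i:ℕ) hq hband' hnc'
      omega
  · exact RX_band_zero a c mdeg hc n i j hband

lemma nat_div_div_sqrt (n : ℕ) (hn : 1 ≤ n) : n / (n / n.sqrt) = n.sqrt := by
  have hM : 0 < n.sqrt := Nat.sqrt_pos.2 hn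
  have hMM : n.sqrt * n.sqrt ≤ n := by
    have := Nat.sqrt_le' n
    nlinarith [this]
  have hkM : n.sqrt ≤ n / n.sqrt := (Nat.le_div_iff_mul_le hM).2 hMM
  have hr : n % n.sqrt < n.sqrt := Nat.mod_lt n hM
  have hk : 0 < n / n.sqrt := lt_of_lt_of_le hM hkM
  have hne : n = (n / n.sqrt) * n.sqrt + n % n.sqrt := by
    rw [mul_comm]
    exact (Nat.div_add_mod n n.sqrt).symm
  calc n / (n / n.sqrt) = ((n / n.sqrt) * n.sqrt + n % n.sqrt) / (n / n.sqrt) := by rw [← hne]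
    _ = n.sqrt + (n % n.sqrt) / (n / n.sqrt) := by rw [Nat.mul_add_div hk]
    _ = n.sqrt := by rw [Nat.div_eq_of_lt (lt_of_lt_of_le hr hkM), add_zero]

lemma filter_mod_card (n q mm bound : ℕ) (hq : 0 < q) (hb : n / q < bound) :
    (Finset.univ.filter (fun i : Fin n => (i:ℕ) % q < mm)).card ≤ bound * mm := by
  classical
  have key : (Finset.univ.filter (fun i : Fin n => (i:ℕ) % q < mm)).card
      ≤ ((Finset.range bound) ×ˢ (Finset.range mm)).card := by
    apply Finset.card_le_card_of_injOn (fun i : Fin n => ((i:ℕ)/q, (i:ℕ)%q))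
    · intro i hi
      simp only [Finset.mem_coe, Finset.mem_filter, Finset.mem_univ, true_and] at hi
      rw [Finset.mem_coe, Finset.mem_product, Finset.mem_range, Finset.mem_range]
      exact ⟨lt_of_le_of_lt (Nat.div_le_div_right i.2.le) hb, hi⟩
    · intro x hx y hy hxy
      rw [Prod.mk.injEq] at hxy
      apply Fin.ext
      calc (x:ℕ) = q * ((x:ℕ)/q) + (x:ℕ)%q := (Nat.div_add_mod _ _).symm
        _ = q * ((y:ℕ)/q) + (y:ℕ)%q := by rw [hxy.1, hxy.2]
        _ = (y:ℕ) := Nat.div_add_mod _ _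
  rwa [Finset.card_product, Finset.card_range, Finset.card_range] at key

lemma filter_modhi_card (n q mm bound : ℕ) (hq : 0 < q) (hb : n / q < bound) :
    (Finset.univ.filter (fun i : Fin n => q ≤ (i:ℕ) % q + mm)).card ≤ bound * mm := by
  classical
  have key : (Finset.univ.filter (fun i : Fin n => q ≤ (i:ℕ) % q + mm)).card
      ≤ ((Finset.range bound) ×ˢ (Finset.range mm)).card := by
    apply Finset.card_le_card_of_injOn (fun i : Fin n => ((i:ℕ)/q, (i:ℕ)%q + mm - q))
    · intro i hi
      simp only [Finset.mem_coe, Finset.mem_filter, Finset.mem_univ, true_and] at hi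
      rw [Finset.mem_coe, Finset.mem_product, Finset.mem_range, Finset.mem_range]
      refine ⟨lt_of_le_of_lt (Nat.div_le_div_right i.2.le) hb, ?_⟩
      have hri : (i:ℕ) % q < q := Nat.mod_lt _ hq
      dsimp only
      omega
    · intro x hx y hy hxy
      simp only [Finset.coe_filter, Set.mem_setOf_eq] at hx hy
      rw [Prod.mk.injEq] at hxy
      have hrx : (x:ℕ) % q < q := Nat.mod_lt _ hq
      have hry : (y:ℕ) % q < q := Nat.mod_lt _ hq
      have hmods : (x:ℕ) % q = (y:ℕ) % q := by omega
      apply Fin.ext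
      calc (x:ℕ) = q * ((x:ℕ)/q) + (x:ℕ)%q := (Nat.div_add_mod _ _).symm
        _ = q * ((y:ℕ)/q) + (y:ℕ)%q := by rw [hxy.1, hmods]
        _ = (y:ℕ) := Nat.div_add_mod _ _
  rwa [Finset.card_product, Finset.card_range, Finset.card_range] at key

lemma filter_tail_card (n mm T B : ℕ) (h : n + mm ≤ T + B) :
    (Finset.univ.filter (fun i : Fin n => T ≤ (i:ℕ) + mm)).card ≤ B := by
  classical
  have key : (Finset.univ.filter (fun i : Fin n => T ≤ (i:ℕ) + mm)).card
      ≤ (Finset.range B).card := by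
    apply Finset.card_le_card_of_injOn (fun i : Fin n => (i:ℕ) + mm - T)
    · intro i hi
      simp only [Finset.mem_coe, Finset.mem_filter, Finset.mem_univ, true_and] at hi
      have := i.2
      rw [Finset.mem_coe, Finset.mem_range]
      dsimp only
      omega
    · intro x hx y hy hxy
      simp only [Finset.coe_filter, Set.mem_setOf_eq] at hx hy
      have hxy' : (x:ℕ) + mm - T = (y:ℕ) + mm - T := hxy
      apply Fin.ext
      omega
  rwa [Finset.card_range] at key

lemma badS_card (mdeg n : ℕ) (hn : 1 ≤ n) :
    (badS mdeg n).card
      ≤ 2*((Nat.sqrt n + 1) * mdeg) + (Nat.sqrt n + n / Nat.sqrt n + mdeg) := by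
  classical
  have hM : 0 < Nat.sqrt n := Nat.sqrt_pos.2 hn
  have hq : 0 < n / Nat.sqrt n := Nat.div_pos (Nat.sqrt_le_self n) hM
  have hnq : n / (n / Nat.sqrt n) = Nat.sqrt n := nat_div_div_sqrt n hn
  have hb : n / (n / Nat.sqrt n) < Nat.sqrt n + 1 := by omega
  have h1 := filter_mod_card n (n / Nat.sqrt n) mdeg (Nat.sqrt n + 1) hq hb
  have h2 := filter_modhi_card n (n / Nat.sqrt n) mdeg (Nat.sqrt n + 1) hq hb
  have hid := sub_one_mul_add (Nat.sqrt n) (n / Nat.sqrt n) hM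
  have hdm := Nat.div_add_mod n (Nat.sqrt n)
  have hrM := Nat.mod_lt n hM
  have h3 := filter_tail_card n mdeg ((Nat.sqrt n - 1) * (n / Nat.sqrt n))
    (Nat.sqrt n + n / Nat.sqrt n + mdeg) (by omega)
  rw [badS]
  rw [Finset.filter_or, Finset.filter_or]
  calc (Finset.univ.filter (fun i : Fin n => (i:ℕ) % (n / Nat.sqrt n) < mdeg)
        ∪ (Finset.univ.filter (fun i : Fin n => (n / Nat.sqrt n) ≤ (i:ℕ) % (n / Nat.sqrt n) + mdeg)
          ∪ Finset.univ.filter (fun i : Fin n =>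
              (Nat.sqrt n - 1) * (n / Nat.sqrt n) ≤ (i:ℕ) + mdeg))).card
      ≤ (Finset.univ.filter (fun i : Fin n => (i:ℕ) % (n / Nat.sqrt n) < mdeg)).card
        + ((Finset.univ.filter (fun i : Fin n => (n / Nat.sqrt n) ≤ (i:ℕ) % (n / Nat.sqrt n) + mdeg)).card
          + (Finset.univ.filter (fun i : Fin n =>
              (Nat.sqrt n - 1) * (n / Nat.sqrt n) ≤ (i:ℕ) + mdeg)).card) :=
        le_trans (Finset.card_union_le _ _) (by
          exact add_le_add le_rfl (Finset.card_union_le _ _))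
    _ ≤ (Nat.sqrt n + 1) * mdeg + ((Nat.sqrt n + 1) * mdeg
          + (Nat.sqrt n + n / Nat.sqrt n + mdeg)) := by
        exact add_le_add h1 (add_le_add h2 h3)
    _ = 2*((Nat.sqrt n + 1) * mdeg) + (Nat.sqrt n + n / Nat.sqrt n + mdeg) := by ring


lemma real_est (iR qR MR nR : ℝ) (hM : 1 ≤ MR) (hqM : MR ≤ qR) (hn1 : MR*qR ≤ nR)
    (hn2 : nR ≤ MR*qR + MR) (hi0 : 0 ≤ iR) (hin : iR + 1 ≤ nR) (hiq : iR + qR ≤ MR*qR) :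
    (0:ℝ) ≤ (iR/qR + 1)/MR - (iR+1)/nR ∧
    (iR/qR + 1)/MR - (iR+1)/nR ≤ 2/MR ∧
    (iR/qR + 1)/MR ≤ 1 ∧ (0:ℝ) ≤ (iR/qR + 1)/MR := by
  have hM0 : (0:ℝ) < MR := by linarith
  have hq0 : (0:ℝ) < qR := by linarith
  have hn0 : (0:ℝ) < nR := by nlinarith
  set z := iR / qR with hz
  have hzq : z * qR = iR := div_mul_cancel₀ _ (ne_of_gt hq0)
  have hz0 : 0 ≤ z := div_nonneg hi0 hq0.le
  have hzM : z + 1 ≤ MR := by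
    have h1 : (z + 1) * qR ≤ MR * qR := by
      rw [add_mul, one_mul, hzq]; exact hiq
    exact le_of_mul_le_mul_right h1 hq0
  have hMzq : MR * (z * qR) = MR * iR := by rw [hzq]
  have hA : (iR+1)*MR ≤ (z+1)*nR := by
    have p1 : (0:ℝ) ≤ (z+1) * (nR - MR*qR) := mul_nonneg (by linarith) (by linarith)
    have p2 : (0:ℝ) ≤ MR * (qR - 1) := mul_nonneg hM0.le (by linarith)
    nlinarith [p1, p2, hMzq]
  have hkey : (z+1)*nR ≤ 2*nR + MR*(iR+1) := by
    have p3 : (0:ℝ) ≤ z * (MR*qR + MR - nR) := mul_nonneg hz0 (by linarith)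
    have p4 : (0:ℝ) ≤ (MR - 1 - z) * MR := mul_nonneg (by linarith) hM0.le
    have p6 : (0:ℝ) ≤ MR * (qR - MR) := mul_nonneg hM0.le (by linarith)
    nlinarith [p3, p4, p6, hMzq, hn1]
  refine ⟨?_, ?_, ?_, ?_⟩
  · have h1 : (iR+1)/nR ≤ (z+1)/MR := by
      rw [div_le_div_iff₀ hn0 hM0]
      exact hA
    linarith
  · have hfrac : (z+1)/MR ≤ 2/MR + (iR+1)/nR := by
      rw [div_add_div _ _ (ne_of_gt hM0) (ne_of_gt hn0), div_le_div_iff₀ hM0 (mul_pos hM0 hn0)]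
      nlinarith [hkey, hM0]
    linarith
  · rw [div_le_one hM0]
    exact hzM
  · positivity

lemma nat_facts_sqrt (n : ℕ) (hn : 1 ≤ n) :
    1 ≤ Nat.sqrt n ∧ Nat.sqrt n ≤ n / Nat.sqrt n ∧
    Nat.sqrt n * (n / Nat.sqrt n) ≤ n ∧ n ≤ Nat.sqrt n * (n / Nat.sqrt n) + Nat.sqrt n := by
  have hM : 0 < Nat.sqrt n := Nat.sqrt_pos.2 hn
  have hMM : Nat.sqrt n * Nat.sqrt n ≤ n := by
    have := Nat.sqrt_le' n
    nlinarith [this]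
  refine ⟨hM, (Nat.le_div_iff_mul_le hM).2 hMM, ?_, ?_⟩
  · have := Nat.div_mul_le_self n (Nat.sqrt n)
    calc Nat.sqrt n * (n / Nat.sqrt n) = (n / Nat.sqrt n) * Nat.sqrt n := by ring
      _ ≤ n := this
  · have hdm := Nat.div_add_mod n (Nat.sqrt n)
    have hrm := Nat.mod_lt n hM
    omega


lemma NX_entry_bound (a : ℝ → ℂ) (c : ℤ → ℂ) (L Cmax : ℝ) (hL0 : 0 ≤ L) (hCmax0 : 0 ≤ Cmax)
    (hL : ∀ x ∈ Set.Icc (0:ℝ) 1, ∀ y ∈ Set.Icc (0:ℝ) 1, ‖a x - a y‖ ≤ L * |x - y|)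
    (hcb : ∀ k : ℤ, ‖c k‖ ≤ Cmax)
    (n : ℕ) (i j : Fin n) :
    ‖NX a c n i j‖ ≤ Cmax * (L * (2 / (Nat.sqrt n : ℝ))) := by
  have hn1 : 1 ≤ n := i.pos
  obtain ⟨hM1, hqM, hMq_n, hn_Mq⟩ := nat_facts_sqrt n hn1
  have hrhs0 : (0:ℝ) ≤ Cmax * (L * (2 / (Nat.sqrt n : ℝ))) :=
    mul_nonneg hCmax0 (mul_nonneg hL0 (by positivity))
  rw [NX]
  split_ifs with h
  · obtain ⟨hi, hj, hij, hex⟩ := h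
    have hre := real_est ((i:ℕ):ℝ) ((n / Nat.sqrt n : ℕ):ℝ) ((Nat.sqrt n : ℕ):ℝ) (n:ℝ)
      (by exact_mod_cast hM1) (by exact_mod_cast hqM)
      (by exact_mod_cast hMq_n) (by exact_mod_cast hn_Mq)
      (by positivity) (by exact_mod_cast i.2) (by exact_mod_cast hex)
    obtain ⟨he0, he2, he1, he0'⟩ := hre
    have hn0 : (0:ℝ) < (n:ℝ) := by exact_mod_cast hn1
    have hy0 : (0:ℝ) ≤ (((i:ℕ):ℝ) + 1)/(n:ℝ) := by positivity
    have hy1 : (((i:ℕ):ℝ) + 1)/(n:ℝ) ≤ 1 := by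
      rw [div_le_one hn0]
      exact_mod_cast i.2
    have hxmem : samp n i ∈ Set.Icc (0:ℝ) 1 := by
      rw [samp]; exact ⟨he0', he1⟩
    have hymem : (((i:ℕ):ℝ) + 1)/(n:ℝ) ∈ Set.Icc (0:ℝ) 1 := ⟨hy0, hy1⟩
    have habs : |samp n i - (((i:ℕ):ℝ) + 1)/(n:ℝ)| ≤ 2 / (Nat.sqrt n : ℝ) := by
      rw [samp, abs_of_nonneg he0]
      exact he2
    calc ‖(a (samp n i) - a ((((i:ℕ):ℝ) + 1)/(n:ℝ))) * c ((i:ℤ)-(j:ℤ))‖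
        = ‖a (samp n i) - a ((((i:ℕ):ℝ) + 1)/(n:ℝ))‖ * ‖c ((i:ℤ)-(j:ℤ))‖ := norm_mul _ _
      _ ≤ (L * (2 / (Nat.sqrt n : ℝ))) * Cmax := by
          apply mul_le_mul _ (hcb _) (norm_nonneg _) (mul_nonneg hL0 (by positivity))
          exact (hL _ hxmem _ hymem).trans (mul_le_mul_of_nonneg_left habs hL0)
      _ = Cmax * (L * (2 / (Nat.sqrt n : ℝ))) := by ring
  · rw [norm_zero]
    exact hrhs0

/-- `LT_n(a,f) - D_n(a) T_n(f)` splits as a rank-`o(n)` plus a norm-`o(1)` sequence;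
consequently `{LT_n(a,f)}_n` and `{D_n(a)T_n(f)}_n` are acs equivalent
(their difference is zero-distributed).  (The spectral norm of a matrix is its
largest singular value, here written `⨆ i, singVals _ i`.) -/
theorem LT_acs_equiv_DT (a : ℝ → ℂ) (ha : ContDiffOn ℝ 1 a (Set.Icc 0 1))
    (m : ℕ) (c : ℤ → ℂ) (hc : ∀ k : ℤ, (m : ℤ) < |k| → c k = 0) :
    ∃ R N : ∀ n : ℕ, Matrix (Fin n) (Fin n) ℂ,
      (∀ n, LTop a c n - diagSampling a n * toeplitzM c n = R n + N n) ∧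
      Tendsto (fun n : ℕ => ((R n).rank : ℝ) / (n : ℝ)) atTop (nhds 0) ∧
      Tendsto (fun n : ℕ => ⨆ i, singVals (N n) i) atTop (nhds 0) ∧
      ZeroDist (fun n => LTop a c n - diagSampling a n * toeplitzM c n) := by
  classical
  obtain ⟨L0, hL0b⟩ := isCompact_Icc.exists_bound_of_continuousOn
    (ha.continuousOn_derivWithin (uniqueDiffOn_Icc one_pos) le_rfl)
  set L : NNReal := ⟨max L0 0, le_max_right _ _⟩ with hLdef
  have hLip : LipschitzOnWith L a (Set.Icc 0 1) := by
    apply (convex_Icc (0:ℝ) 1).lipschitzOnWith_of_nnnorm_derivWithin_le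
      (ha.differentiableOn one_ne_zero)
    intro x hx
    rw [← NNReal.coe_le_coe, coe_nnnorm]
    exact (hL0b x hx).trans (le_max_left _ _)
  have hL : ∀ x ∈ Set.Icc (0:ℝ) 1, ∀ y ∈ Set.Icc (0:ℝ) 1, ‖a x - a y‖ ≤ (L:ℝ) * |x - y| := by
    intro x hx y hy
    have := hLip.dist_le_mul x hx y hy
    rwa [dist_eq_norm, Real.dist_eq] at this
  have hL0 : (0:ℝ) ≤ (L:ℝ) := L.2
  set Cmax : ℝ := ∑ k ∈ Finset.Icc (-(m:ℤ)) (m:ℤ), ‖c k‖ with hCmaxdef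
  have hCmax0 : 0 ≤ Cmax := Finset.sum_nonneg (fun _ _ => norm_nonneg _)
  have hcb : ∀ k : ℤ, ‖c k‖ ≤ Cmax := by
    intro k
    by_cases hk : |k| ≤ (m:ℤ)
    · exact Finset.single_le_sum (f := fun k : ℤ => ‖c k‖) (fun _ _ => norm_nonneg _)
        (Finset.mem_Icc.2 ⟨(abs_le.1 hk).1, (abs_le.1 hk).2⟩)
    · rw [hc k (lt_of_not_ge hk), norm_zero]; exact hCmax0
  set Bn : ℕ → ℝ := fun n => (2*m+1) * (Cmax * ((L:ℝ) * (2 / (Nat.sqrt n : ℝ)))) with hBdef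
  have hDn0 : ∀ n : ℕ, (0:ℝ) ≤ Cmax * ((L:ℝ) * (2 / (Nat.sqrt n : ℝ))) :=
    fun n => mul_nonneg hCmax0 (mul_nonneg hL0 (by positivity))
  have hBn0 : ∀ n, 0 ≤ Bn n := fun n => mul_nonneg (by positivity) (hDn0 n)
  have hentry : ∀ n (i j : Fin n), ‖NX a c n i j‖ ≤ Cmax * ((L:ℝ) * (2 / (Nat.sqrt n : ℝ))) :=
    fun n i j => NX_entry_bound a c (L:ℝ) Cmax hL0 hCmax0 hL hcb n i j
  have hrowN : ∀ n (i : Fin n), ∑ j, ‖NX a c n i j‖ ≤ Bn n := by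
    intro n i
    apply row_sum_le (i:ℤ) (fun j => ‖NX a c n i j‖) _ (hDn0 n) (fun j => hentry n i j)
    intro j hj
    rw [NX_band_zero a c m hc n i j hj, norm_zero]
  have hcolN : ∀ n (j : Fin n), ∑ i, ‖NX a c n i j‖ ≤ Bn n := by
    intro n j
    apply row_sum_le (j:ℤ) (fun i => ‖NX a c n i j‖) _ (hDn0 n) (fun i => hentry n i j)
    intro i hi
    have hib : ¬ |(i:ℤ) - (j:ℤ)| ≤ (m:ℤ) := by rwa [abs_sub_comm]
    rw [NX_band_zero a c m hc n i j hib, norm_zero]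
  have hNsing : ∀ n (i : Fin n), singVals (NX a c n) i ≤ Bn n :=
    fun n i => singVals_le_of_bounds _ _ (hBn0 n) (hrowN n) (hcolN n) i
  have hBtend : Tendsto Bn atTop (nhds 0) := by
    apply (tendsto_div_sqrt ((2*m+1) * (Cmax * ((L:ℝ) * 2)))).congr
    intro n
    simp only [hBdef]
    ring
  have hbadcard : ∀ᶠ n : ℕ in atTop,
      (((badS m n).card : ℝ)) / n ≤ (5*m+2 : ℝ) / (Nat.sqrt n : ℝ) := by
    rw [eventually_atTop]
    refine ⟨1, fun n hn1 => ?_⟩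
    obtain ⟨hM1, hqM, hMq_n, hn_Mq⟩ := nat_facts_sqrt n hn1
    have hn0 : (0:ℝ) < n := by exact_mod_cast hn1
    have hM0 : (0:ℝ) < (Nat.sqrt n : ℝ) := by exact_mod_cast hM1
    have hcard := badS_card m n hn1
    have hqM_le_n : (n / Nat.sqrt n) * Nat.sqrt n ≤ n := Nat.div_mul_le_self n _
    have step1 : (((badS m n).card : ℝ)) / n
        ≤ ((2*((Nat.sqrt n + 1) * m) + (Nat.sqrt n + n / Nat.sqrt n + m) : ℕ) : ℝ) / n :=
      div_le_div_of_nonneg_right (by exact_mod_cast hcard) hn0.le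
    refine step1.trans ?_
    rw [div_le_div_iff₀ hn0 hM0]
    push_cast
    have e1 : ((Nat.sqrt n : ℝ)) * (Nat.sqrt n : ℝ) ≤ (n:ℝ) := by
      have h' : Nat.sqrt n * Nat.sqrt n ≤ n := by nlinarith [Nat.sqrt_le' n]
      exact_mod_cast h'
    have e2 : ((n / Nat.sqrt n : ℕ) : ℝ) * (Nat.sqrt n : ℝ) ≤ (n:ℝ) := by exact_mod_cast hqM_le_n
    have e3 : (1:ℝ) ≤ (Nat.sqrt n : ℝ) := by exact_mod_cast hM1
    have e4 : (0:ℝ) ≤ (m:ℝ) := by positivity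
    have p1 : (0:ℝ) ≤ (m:ℝ) * ((n:ℝ) - (Nat.sqrt n : ℝ)*(Nat.sqrt n : ℝ)) :=
      mul_nonneg e4 (by linarith)
    have p2 : (0:ℝ) ≤ (m:ℝ) * ((Nat.sqrt n : ℝ)*(Nat.sqrt n : ℝ) - (Nat.sqrt n : ℝ)) :=
      mul_nonneg e4 (by nlinarith)
    nlinarith [p1, p2, e1, e2]
  have hκ : Tendsto (fun n : ℕ => (((badS m n).card : ℝ)) / n) atTop (nhds 0) :=
    squeeze_zero' (Filter.Eventually.of_forall (fun n => by positivity)) hbadcard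
      (tendsto_div_sqrt _)
  refine ⟨RX a c, NX a c, fun n => decompRN a c n, ?_, ?_, ?_⟩
  · apply squeeze_zero' (Filter.Eventually.of_forall (fun n => by positivity))
      (Filter.Eventually.of_forall (fun n => ?_)) hκ
    have hr : (RX a c n).rank ≤ (badS m n).card :=
      rank_le_row_support _ _ (fun i hi j => RX_row_zero a c m hc n i hi j)
    exact div_le_div_of_nonneg_right (by exact_mod_cast hr) (Nat.cast_nonneg n)
  · apply squeeze_zero'
      (Filter.Eventually.of_forall (fun n => Real.iSup_nonneg (fun i => Real.sqrt_nonneg _)))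
      (Filter.Eventually.of_forall (fun n => Real.iSup_le (fun i => hNsing n i) (hBn0 n)))
      hBtend
  · apply zeroDist_of_count _ (fun n => (((badS m n).card : ℝ))) hκ
    intro δ hδ
    filter_upwards [hBtend.eventually (eventually_lt_nhds hδ)] with n hBlt
    have hcount := count_le_of_decomp (LTop a c n - diagSampling a n * toeplitzM c n)
      (RX a c n) (NX a c n) (decompRN a c n) (badS m n)
      (fun i j hj => RX_col_zero a c m hc n j hj i)
      (Bn n) δ (hBn0 n) hBlt (hrowN n) (hcolN n)
    exact_mod_cast hcount
end

section
/- Let $\{D_n\}_n$ and $\{D'_n\}_n$ be sequences of diagonal matrices with spectral symbols $h$ and $k$ respectively on the same domain $D$. If $\{D_n\}_n$ and $\{D'_n\}_n$ are acs equivalent (their difference is zero-distributed), then $k$ is a rearranged version of $h$, i.e. $\frac{1}{l(D)}\int_D F(h) = \frac{1}{l(D)}\int_D F(k)$ for every $F\in C_c(\mathbb{C})$. -/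
open MeasureTheory Filter Matrix

/- ### Auxiliary lemmas -/

lemma charpoly_diag_roots {n : ℕ} (c : Fin n → ℂ) :
    (Matrix.diagonal c).charpoly.roots = Multiset.map c Finset.univ.val := by
  rw [Matrix.charpoly_of_upperTriangular _ (Matrix.blockTriangular_diagonal c)]
  have : (∏ i : Fin n, (Polynomial.X - Polynomial.C ((Matrix.diagonal c) i i)))
      = ((Multiset.map c Finset.univ.val).map
          (fun a : ℂ => Polynomial.X - Polynomial.C a)).prod := by
    rw [Multiset.map_map, Finset.prod_eq_multiset_prod]
    simp [Function.comp, Matrix.diagonal_apply_eq]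
  rw [this, Polynomial.roots_multiset_prod_X_sub_C]

lemma charpoly_conj_unitary {n : ℕ} (U B : Matrix (Fin n) (Fin n) ℂ)
    (h1 : U * star U = 1) :
    (U * B * star U).charpoly = B.charpoly := by
  let φ : Matrix (Fin n) (Fin n) ℂ →+* Matrix (Fin n) (Fin n) (Polynomial ℂ) :=
    (Polynomial.C : ℂ →+* Polynomial ℂ).mapMatrix
  have hcomm : ∀ M : Matrix (Fin n) (Fin n) (Polynomial ℂ),
      Matrix.scalar (Fin n) (Polynomial.X : Polynomial ℂ) * M
        = M * Matrix.scalar (Fin n) (Polynomial.X : Polynomial ℂ) := by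
    intro M
    exact (Matrix.scalar_commute (Polynomial.X : Polynomial ℂ)
      (fun r => Commute.all _ _) M).eq
  have key : charmatrix (U * B * star U) = φ U * charmatrix B * φ (star U) := by
    have e1 : φ U * Matrix.scalar (Fin n) (Polynomial.X : Polynomial ℂ) * φ (star U)
        = Matrix.scalar (Fin n) (Polynomial.X : Polynomial ℂ) := by
      rw [← hcomm (φ U), mul_assoc, ← map_mul φ, h1, map_one φ, mul_one]
    show Matrix.scalar (Fin n) (Polynomial.X : Polynomial ℂ) - φ (U * B * star U)
        = φ U * (Matrix.scalar (Fin n) (Polynomial.X : Polynomial ℂ) - φ B) * φ (star U)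
    rw [mul_sub, sub_mul, e1]
    congr 1
    rw [map_mul φ, map_mul φ]
  rw [Matrix.charpoly, key, Matrix.det_mul, Matrix.det_mul, Matrix.charpoly]
  have : (φ U).det * (charmatrix B).det * (φ (star U)).det
      = (charmatrix B).det * ((φ U).det * (φ (star U)).det) := by ring
  rw [this, ← Matrix.det_mul, ← map_mul φ, h1, map_one φ, Matrix.det_one, mul_one]

lemma hermitian_eig_roots {n : ℕ} {A : Matrix (Fin n) (Fin n) ℂ} (hA : A.IsHermitian) :
    A.charpoly.roots
      = Multiset.map (fun i => (hA.eigenvalues i : ℂ)) Finset.univ.val := by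
  have hU := (Matrix.mem_unitaryGroup_iff).mp (hA.eigenvectorUnitary).2
  conv_lhs => rw [hA.spectral_theorem]
  rw [Unitary.conjStarAlgAut_apply, charpoly_conj_unitary _ _ hU, charpoly_diag_roots]
  exact Multiset.map_congr rfl fun i _ => rfl

lemma sum_roots_diag {n : ℕ} (c : Fin n → ℂ) (F : ℂ → ℂ) :
    (Multiset.map (fun z => F z) (Matrix.diagonal c).charpoly.roots).sum
      = ∑ i, F (c i) := by
  rw [charpoly_diag_roots, Multiset.map_map, Finset.sum_eq_multiset_sum]
  rfl

lemma sum_singVals_diag {n : ℕ} (c : Fin n → ℂ) (G : ℝ → ℂ) :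
    (∑ i, G (singVals (Matrix.diagonal c) i)) = ∑ i, G (‖c i‖) := by
  have hH := Matrix.isHermitian_conjTranspose_mul_self (Matrix.diagonal c)
  have hMeq : (Matrix.diagonal c)ᴴ * Matrix.diagonal c
      = Matrix.diagonal (fun i => ((‖c i‖ ^ 2 : ℝ) : ℂ)) := by
    rw [Matrix.diagonal_conjTranspose, Matrix.diagonal_mul_diagonal]
    refine congrArg Matrix.diagonal (funext fun i => ?_)
    simp only [Pi.mul_apply, Pi.star_apply, Complex.star_def]
    rw [← Complex.normSq_eq_norm_sq, Complex.normSq_eq_conj_mul_self]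
  -- multiset of eigenvalues equals multiset of |c i|^2
  have h1 : Multiset.map (fun i => (hH.eigenvalues i : ℂ)) Finset.univ.val
      = Multiset.map (fun i => ((‖c i‖ ^ 2 : ℝ) : ℂ)) Finset.univ.val := by
    rw [← hermitian_eig_roots hH]
    conv_lhs => rw [hMeq]
    rw [charpoly_diag_roots]
  have h2 : Multiset.map hH.eigenvalues Finset.univ.val
      = Multiset.map (fun i => (‖c i‖ ^ 2 : ℝ)) Finset.univ.val := by
    apply Multiset.map_injective (Complex.ofReal_injective)
    rw [Multiset.map_map, Multiset.map_map]
    exact h1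
  have h3 : Multiset.map (fun i => G (Real.sqrt (hH.eigenvalues i))) Finset.univ.val
      = Multiset.map (fun i => G (Real.sqrt (‖c i‖ ^ 2))) Finset.univ.val := by
    have := congrArg (Multiset.map (fun t : ℝ => G (Real.sqrt t))) h2
    rwa [Multiset.map_map, Multiset.map_map] at this
  calc (∑ i, G (singVals (Matrix.diagonal c) i))
      = (Multiset.map (fun i => G (Real.sqrt (hH.eigenvalues i))) Finset.univ.val).sum := by
        rw [Finset.sum_eq_multiset_sum]; rfl
    _ = (Multiset.map (fun i => G (Real.sqrt (‖c i‖ ^ 2))) Finset.univ.val).sum := by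
        rw [h3]
    _ = ∑ i, G (‖c i‖) := by
        rw [Finset.sum_eq_multiset_sum]
        congr 1
        apply Multiset.map_congr rfl
        intro i _
        rw [Real.sqrt_sq (norm_nonneg _)]

/-- If two diagonal sequences have spectral symbols `h` and `k` on the same
domain and are acs equivalent, then `k` is a rearranged version of `h`. -/
theorem diag_acs_equiv_rearranged {q : ℕ}
    (Dset : Set (EuclideanSpace ℝ (Fin q))) (hD0 : 0 < volume Dset) (hD1 : volume Dset < ⊤)
    (d d' : ∀ n : ℕ, Fin n → ℂ) (h k : EuclideanSpace ℝ (Fin q) → ℂ)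
    (hd : SpecSymb Dset (fun n => Matrix.diagonal (d n)) h)
    (hd' : SpecSymb Dset (fun n => Matrix.diagonal (d' n)) k)
    (hacs : ZeroDist (fun n => Matrix.diagonal (d n) - Matrix.diagonal (d' n))) :
    ∀ F : C(ℂ, ℂ), HasCompactSupport F →
      ((volume Dset).toReal)⁻¹ • ∫ x in Dset, F (h x) =
      ((volume Dset).toReal)⁻¹ • ∫ x in Dset, F (k x) := by
  intro F hF
  -- reformulate the eigenvalue distributions as sums over diagonal entries
  have hd2 : Tendsto (fun n : ℕ => (n : ℂ)⁻¹ * ∑ i, F (d n i)) atTop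
      (nhds (((volume Dset).toReal)⁻¹ • ∫ x in Dset, F (h x))) := by
    have := hd F hF
    simpa only [sum_roots_diag] using this
  have hd'2 : Tendsto (fun n : ℕ => (n : ℂ)⁻¹ * ∑ i, F (d' n i)) atTop
      (nhds (((volume Dset).toReal)⁻¹ • ∫ x in Dset, F (k x))) := by
    have := hd' F hF
    simpa only [sum_roots_diag] using this
  -- the difference tends to 0
  have hdiff : Tendsto (fun n : ℕ =>
      ((n : ℂ)⁻¹ * ∑ i, F (d n i)) - ((n : ℂ)⁻¹ * ∑ i, F (d' n i))) atTop (nhds 0) := by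
    obtain ⟨M0, hM0⟩ := hF.exists_bound_of_continuous F.continuous
    set M : ℝ := max M0 0 with hMdef
    have hMnn : (0 : ℝ) ≤ M := le_max_right _ _
    have hMb : ∀ z : ℂ, ‖F z‖ ≤ M := fun z => (hM0 z).trans (le_max_left _ _)
    have hUC : UniformContinuous F :=
      hF.uniformContinuous_of_continuous F.continuous
    rw [Metric.tendsto_atTop]
    intro ε hε
    obtain ⟨δ, hδpos, hδ⟩ := Metric.uniformContinuous_iff.mp hUC (ε / 2) (by positivity)
    -- the bump function
    set gr : ℝ → ℝ := fun t => max 0 (1 - |t| / δ) with hgr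
    have hgr_cont : Continuous gr := by fun_prop
    set G : C(ℝ, ℂ) := ⟨fun t => ((gr t : ℝ) : ℂ), by fun_prop⟩ with hGdef
    have hGsupp : HasCompactSupport G := by
      apply HasCompactSupport.intro (isCompact_Icc (a := -δ) (b := δ))
      intro x hx
      have hx' : δ < |x| := by
        rcases abs_cases x with ⟨h1, h2⟩ <;>
          simp only [Set.mem_Icc, not_and_or, not_le] at hx <;> rcases hx with hx | hx <;> linarith
      have : 1 - |x| / δ < 0 := by
        rw [sub_neg]
        rw [lt_div_iff₀ hδpos]
        linarith
      simp only [hGdef, ContinuousMap.coe_mk, hgr]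
      rw [max_eq_left this.le]
      exact Complex.ofReal_zero
    have hG0 : G 0 = 1 := by
      simp [hGdef, hgr, abs_zero, hδpos.ne']
    -- the real averaged sums
    set r : ℕ → ℝ := fun n => (n : ℝ)⁻¹ * ∑ i, gr (‖d n i - d' n i‖) with hrdef
    have hzero := hacs G hGsupp
    have hseq : ∀ n : ℕ, ((n : ℂ)⁻¹ *
        ∑ i, G (singVals ((fun n => Matrix.diagonal (d n) - Matrix.diagonal (d' n)) n) i))
        = ((r n : ℝ) : ℂ) := by
      intro n
      have hmat : Matrix.diagonal (d n) - Matrix.diagonal (d' n)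
          = Matrix.diagonal (fun i => d n i - d' n i) := by
        rw [Matrix.diagonal_sub]
      simp only [hmat]
      rw [sum_singVals_diag (fun i => d n i - d' n i) G]
      simp only [hGdef, ContinuousMap.coe_mk, hrdef]
      push_cast
      ring
    have hr : Tendsto r atTop (nhds 1) := by
      have h1 := (Complex.continuous_re.tendsto (G 0)).comp hzero
      have h2 := h1.congr (fun n => congrArg Complex.re (hseq n))
      simp only [Complex.ofReal_re, hG0, Complex.one_re] at h2
      exact h2
    -- choose the threshold
    have hεpos' : (0 : ℝ) < ε / (4 * (M + 1)) := by positivity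
    have hev1 : ∀ᶠ n : ℕ in atTop, 1 - r n < ε / (4 * (M + 1)) := by
      have := Metric.tendsto_atTop.mp hr (ε / (4 * (M + 1))) hεpos'
      obtain ⟨N, hN⟩ := this
      filter_upwards [eventually_ge_atTop N] with n hn
      have := hN n hn
      rw [Real.dist_eq] at this
      have := abs_lt.mp this
      linarith [this.1]
    have hev2 : ∀ᶠ n : ℕ in atTop, 1 ≤ n := eventually_ge_atTop 1
    obtain ⟨N1, hN1⟩ := eventually_atTop.mp hev1
    obtain ⟨N2, hN2⟩ := eventually_atTop.mp hev2
    refine ⟨max N1 N2, fun n hn => ?_⟩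
    have hn1 : 1 - r n < ε / (4 * (M + 1)) := hN1 n (le_trans (le_max_left _ _) hn)
    have hn2 : 1 ≤ n := hN2 n (le_trans (le_max_right _ _) hn)
    have hnpos : (0 : ℝ) < (n : ℝ) := by exact_mod_cast hn2
    -- pointwise bound
    set gi : Fin n → ℝ := fun i => gr (‖d n i - d' n i‖) with hgidef
    have hgile : ∀ i, gi i ≤ 1 := by
      intro i
      simp only [hgidef, hgr]
      apply max_le
      · linarith
      · have : 0 ≤ |‖d n i - d' n i‖| / δ := by positivity
        linarith
    have hpt : ∀ i : Fin n, ‖F (d n i) - F (d' n i)‖ ≤ ε / 2 + 2 * M * (1 - gi i) := by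
      intro i
      by_cases hcase : ‖d n i - d' n i‖ < δ
      · have hdist : dist (d n i) (d' n i) < δ := by
          rw [Complex.dist_eq]; exact hcase
        have := hδ hdist
        rw [dist_eq_norm] at this
        have hge : 0 ≤ 2 * M * (1 - gi i) := by
          have := hgile i
          nlinarith
        linarith
      · push_neg at hcase
        have hgi0 : gi i = 0 := by
          simp only [hgidef, hgr]
          have habs : |‖d n i - d' n i‖| = ‖d n i - d' n i‖ :=
            abs_of_nonneg (norm_nonneg _)
          rw [habs]
          have : 1 - ‖d n i - d' n i‖ / δ ≤ 0 := by
            rw [sub_nonpos, le_div_iff₀ hδpos]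
            linarith
          exact max_eq_left this
        rw [hgi0]
        have : ‖F (d n i) - F (d' n i)‖ ≤ ‖F (d n i)‖ + ‖F (d' n i)‖ := norm_sub_le _ _
        have h1 := hMb (d n i)
        have h2 := hMb (d' n i)
        linarith
    -- assemble
    have hrewrite : ((n : ℂ)⁻¹ * ∑ i, F (d n i)) - ((n : ℂ)⁻¹ * ∑ i, F (d' n i))
        = (n : ℂ)⁻¹ * ∑ i, (F (d n i) - F (d' n i)) := by
      rw [Finset.sum_sub_distrib, mul_sub]
    rw [dist_eq_norm, sub_zero, hrewrite]
    have hnorm : ‖(n : ℂ)⁻¹ * ∑ i, (F (d n i) - F (d' n i))‖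
        = (n : ℝ)⁻¹ * ‖∑ i, (F (d n i) - F (d' n i))‖ := by
      rw [norm_mul, norm_inv, Complex.norm_natCast]
    rw [hnorm]
    have hsumle : ‖∑ i, (F (d n i) - F (d' n i))‖ ≤ ∑ i, (ε / 2 + 2 * M * (1 - gi i)) := by
      refine le_trans (norm_sum_le _ _) ?_
      exact Finset.sum_le_sum fun i _ => hpt i
    have hsumval : (∑ i, (ε / 2 + 2 * M * (1 - gi i)))
        = (n : ℝ) * (ε / 2) + 2 * M * ((n : ℝ) - ∑ i, gi i) := by
      rw [Finset.sum_add_distrib, Finset.sum_const, Finset.card_univ, Fintype.card_fin]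
      rw [← Finset.mul_sum, Finset.sum_sub_distrib, Finset.sum_const, Finset.card_univ,
        Fintype.card_fin]
      simp only [nsmul_eq_mul, mul_one, smul_eq_mul]
      try ring
    have hstep : (n : ℝ)⁻¹ * ((n : ℝ) * (ε / 2) + 2 * M * ((n : ℝ) - ∑ i, gi i))
        = ε / 2 + 2 * M * (1 - r n) := by
      have hrn : r n = (n : ℝ)⁻¹ * ∑ i, gi i := rfl
      rw [hrn]
      field_simp
      try ring
    calc (n : ℝ)⁻¹ * ‖∑ i, (F (d n i) - F (d' n i))‖
        ≤ (n : ℝ)⁻¹ * ((n : ℝ) * (ε / 2) + 2 * M * ((n : ℝ) - ∑ i, gi i)) := by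
          rw [← hsumval]
          exact mul_le_mul_of_nonneg_left hsumle (by positivity)
      _ = ε / 2 + 2 * M * (1 - r n) := hstep
      _ < ε := by
          have hb : 2 * M * (1 - r n) ≤ 2 * M * (ε / (4 * (M + 1))) :=
            mul_le_mul_of_nonneg_left hn1.le (by positivity)
          have heq : 2 * M * (ε / (4 * (M + 1))) = (2 * M * ε) / (4 * (M + 1)) := by ring
          have hc : (2 * M * ε) / (4 * (M + 1)) < ε / 2 := by
            rw [div_lt_div_iff₀ (by positivity) (by norm_num : (0:ℝ) < 2)]
            nlinarith
          rw [heq] at hb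
          linarith
  -- conclude by uniqueness of limits
  have hcomb : Tendsto (fun n : ℕ => (n : ℂ)⁻¹ * ∑ i, F (d' n i)) atTop
      (nhds (((volume Dset).toReal)⁻¹ • ∫ x in Dset, F (h x))) := by
    have := hd2.sub hdiff
    simpa using this
  exact tendsto_nhds_unique hcomb hd'2
end

section
/- There exists a sequence $\{A_n\}_n$ of matrices with $A_n^2 = 0$ for all $n$ and with singular value symbol $\chi_{[0,1/2]}$ on $[0,1]$, such that no sequence $\{N_n\}_n$ of normal matrices is acs equivalent to $\{A_n\}_n$. Concretely, one may take $A_{2n} = \begin{pmatrix} 0_n & I_n \\ 0_n & 0_n\end{pmatrix}$ and the analogous odd-size matrices. -/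
open MeasureTheory Filter Matrix

variable {n : ℕ}

noncomputable def cardBig (X : Matrix (Fin n) (Fin n) ℂ) (t : ℝ) : ℕ :=
  (Finset.univ.filter (fun i => t < singVals X i)).card

lemma singVals_nonneg (X : Matrix (Fin n) (Fin n) ℂ) (i : Fin n) : 0 ≤ singVals X i :=
  Real.sqrt_nonneg _

open scoped ComplexOrder in
lemma eig_nonneg (X : Matrix (Fin n) (Fin n) ℂ) (i : Fin n) :
    0 ≤ (Matrix.isHermitian_conjTranspose_mul_self X).eigenvalues i :=
  (Matrix.posSemidef_conjTranspose_mul_self X).eigenvalues_nonneg i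

lemma sq_singVals (X : Matrix (Fin n) (Fin n) ℂ) (i : Fin n) :
    singVals X i ^ 2 = (Matrix.isHermitian_conjTranspose_mul_self X).eigenvalues i :=
  Real.sq_sqrt (eig_nonneg X i)

lemma cardBig_mono (X : Matrix (Fin n) (Fin n) ℂ) {s t : ℝ} (h : s ≤ t) :
    cardBig X t ≤ cardBig X s := by
  apply Finset.card_le_card
  intro i hi
  simp only [Finset.mem_filter, Finset.mem_univ, true_and] at *
  linarith

lemma cardBig_le (X : Matrix (Fin n) (Fin n) ℂ) (t : ℝ) : cardBig X t ≤ n := by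
  simpa [cardBig] using (Finset.card_filter_le Finset.univ (fun i => t < singVals X i))

lemma eigL {H : Matrix (Fin n) (Fin n) ℂ} (hH : H.IsHermitian) (i : Fin n) :
    toEuclideanLin H (hH.eigenvectorBasis i) = (hH.eigenvalues i : ℂ) • hH.eigenvectorBasis i := by
  have h := hH.mulVec_eigenvectorBasis i
  apply PiLp.ext
  intro j
  have hj := congrFun h j
  simp only [Pi.smul_apply, Complex.real_smul] at hj
  simpa [toEuclideanLin_apply, PiLp.smul_apply, Complex.real_smul] using hj

lemma quadform (X : Matrix (Fin n) (Fin n) ℂ) (s : Finset (Fin n)) (c : Fin n → ℂ) :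
    ‖toEuclideanLin X (∑ i ∈ s, c i • (Matrix.isHermitian_conjTranspose_mul_self X).eigenvectorBasis i)‖^2
      = ∑ i ∈ s, (Matrix.isHermitian_conjTranspose_mul_self X).eigenvalues i * ‖c i‖^2 ∧
    ‖(∑ i ∈ s, c i • (Matrix.isHermitian_conjTranspose_mul_self X).eigenvectorBasis i : EuclideanSpace ℂ (Fin n))‖^2
      = ∑ i ∈ s, ‖c i‖^2 := by
  set hH := Matrix.isHermitian_conjTranspose_mul_self X with hHdef
  set b := hH.eigenvectorBasis with hbdef
  set lam := hH.eigenvalues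
  set v := ∑ i ∈ s, c i • b i with hv
  constructor
  · have h1 : ‖toEuclideanLin X v‖^2 = RCLike.re (inner ℂ v (toEuclideanLin (Xᴴ*X) v) : ℂ) := by
      have h1' : toEuclideanLin (Xᴴ*X) v = toEuclideanLin Xᴴ (toEuclideanLin X v) := by
        simp [toEuclideanLin_apply, mulVec_mulVec]
      rw [h1', Matrix.toEuclideanLin_conjTranspose_eq_adjoint, LinearMap.adjoint_inner_right,
        inner_self_eq_norm_sq]
    have h2 : toEuclideanLin (Xᴴ*X) v = ∑ i ∈ s, ((lam i : ℂ) * c i) • b i := by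
      rw [hv, map_sum]
      refine Finset.sum_congr rfl fun i _ => ?_
      rw [LinearMap.map_smul, eigL hH i, smul_smul, mul_comm]
    rw [h1, h2, hv, Orthonormal.inner_sum (b.orthonormal)]
    rw [map_sum]
    refine Finset.sum_congr rfl fun i _ => ?_
    have : (starRingEnd ℂ) (c i) * ((lam i : ℂ) * c i) = (lam i : ℂ) * ((starRingEnd ℂ) (c i) * c i) := by ring
    rw [this, RCLike.conj_mul]
    simp [RCLike.re_to_complex, Complex.mul_re]
    exact Or.inl (by rw [← Complex.ofReal_pow]; exact Complex.ofReal_re _)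
  · have : (‖v‖:ℝ)^2 = RCLike.re (inner ℂ v v : ℂ) := (inner_self_eq_norm_sq v).symm
    rw [this, hv, Orthonormal.inner_sum (b.orthonormal), map_sum]
    refine Finset.sum_congr rfl fun i _ => ?_
    rw [RCLike.conj_mul, ← RCLike.ofReal_pow, RCLike.ofReal_re]

lemma span_repr {b : OrthonormalBasis (Fin n) ℂ (EuclideanSpace ℂ (Fin n))}
    (s : Finset (Fin n)) {v : EuclideanSpace ℂ (Fin n)}
    (hv : v ∈ Submodule.span ℂ (Set.range (fun i : s => b i.1))) :
    ∃ c : Fin n → ℂ, v = ∑ i ∈ s, c i • b i ∧ ∀ i ∉ s, c i = 0 := by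
  classical
  obtain ⟨c, hc⟩ := (Submodule.mem_span_range_iff_exists_fun ℂ).mp hv
  refine ⟨fun i => if h : i ∈ s then c ⟨i, h⟩ else 0, ?_, fun i hi => by simp [hi]⟩
  rw [← hc, ← Finset.sum_coe_sort s (fun i => (if h : i ∈ s then c ⟨i, h⟩ else 0) • b i)]
  refine Finset.sum_congr rfl fun i _ => ?_
  simp [i.2]

lemma finrank_span_filter (b : OrthonormalBasis (Fin n) ℂ (EuclideanSpace ℂ (Fin n)))
    (s : Finset (Fin n)) :
    Module.finrank ℂ (Submodule.span ℂ (Set.range (fun i : s => b i.1))) = s.card := by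
  have hli : LinearIndependent ℂ (fun i : s => b i.1) :=
    (b.orthonormal.comp _ Subtype.val_injective).linearIndependent
  rw [finrank_span_eq_card hli, Fintype.card_coe]

lemma lemA (X : Matrix (Fin n) (Fin n) ℂ) {t : ℝ} (ht : 0 ≤ t) :
    ∃ V : Submodule ℂ (EuclideanSpace ℂ (Fin n)),
      Module.finrank ℂ V + cardBig X t = n ∧
      ∀ v ∈ V, ‖toEuclideanLin X v‖ ≤ t * ‖v‖ := by
  classical
  set b := (Matrix.isHermitian_conjTranspose_mul_self X).eigenvectorBasis with hb
  set s : Finset (Fin n) := Finset.univ.filter (fun i => singVals X i ≤ t) with hs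
  refine ⟨Submodule.span ℂ (Set.range (fun i : s => b i.1)), ?_, ?_⟩
  · rw [finrank_span_filter]
    have heq : Finset.univ.filter (fun i => t < singVals X i)
        = Finset.univ.filter (fun i => ¬ (singVals X i ≤ t)) := by
      ext i; simp [not_le]
    rw [cardBig, heq, hs, Finset.card_filter_add_card_filter_not]
    simp
  · intro v hv
    obtain ⟨c, hc, -⟩ := span_repr s hv
    have hq := quadform X s c
    rw [← hb, ← hc] at hq
    have hbound : ‖toEuclideanLin X v‖^2 ≤ t^2 * ‖v‖^2 := by
      rw [hq.1, hq.2, Finset.mul_sum]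
      refine Finset.sum_le_sum fun i hi => ?_
      have hit : singVals X i ≤ t := by
        rw [hs] at hi; simpa using hi
      have hlam : (Matrix.isHermitian_conjTranspose_mul_self X).eigenvalues i ≤ t^2 := by
        rw [← sq_singVals]
        exact pow_le_pow_left₀ (singVals_nonneg X i) hit 2
      exact mul_le_mul_of_nonneg_right hlam (by positivity)
    nlinarith [norm_nonneg (toEuclideanLin X v), norm_nonneg v,
      mul_nonneg ht (norm_nonneg v)]

lemma lemB (X : Matrix (Fin n) (Fin n) ℂ) {t : ℝ} (ht : 0 ≤ t)
    (V : Submodule ℂ (EuclideanSpace ℂ (Fin n)))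
    (hV : ∀ v ∈ V, ‖toEuclideanLin X v‖ ≤ t * ‖v‖) :
    Module.finrank ℂ V + cardBig X t ≤ n := by
  classical
  by_contra hcon
  push_neg at hcon
  set b := (Matrix.isHermitian_conjTranspose_mul_self X).eigenvectorBasis with hb
  set s : Finset (Fin n) := Finset.univ.filter (fun i => t < singVals X i) with hs
  have hsc : s.card = cardBig X t := rfl
  set W := Submodule.span ℂ (Set.range (fun i : s => b i.1)) with hW
  have hWrank : Module.finrank ℂ W = s.card := finrank_span_filter b s
  have h1 := Submodule.finrank_sup_add_finrank_inf_eq V W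
  have h2 : Module.finrank ℂ ↥(V ⊔ W) ≤ n := by
    have := Submodule.finrank_le (V ⊔ W)
    simpa [finrank_euclideanSpace] using this
  have hpos : 0 < Module.finrank ℂ ↥(V ⊓ W) := by omega
  have hne : (V ⊓ W) ≠ ⊥ := by
    intro h
    rw [h] at hpos
    simp [finrank_bot] at hpos
  obtain ⟨v, hvmem, hvne⟩ := Submodule.exists_mem_ne_zero_of_ne_bot hne
  obtain ⟨c, hc, hc0⟩ := span_repr s (hvmem.2)
  have hex : ∃ i ∈ s, c i ≠ 0 := by
    by_contra hall
    push_neg at hall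
    apply hvne
    rw [hc]
    exact Finset.sum_eq_zero fun i hi => by rw [hall i hi, zero_smul]
  obtain ⟨i0, hi0s, hi0⟩ := hex
  have hq := quadform X s c
  rw [← hb, ← hc] at hq
  have hstrict : t^2 * ‖v‖^2 < ‖toEuclideanLin X v‖^2 := by
    rw [hq.1, hq.2, Finset.mul_sum]
    refine Finset.sum_lt_sum (fun i hi => ?_) ⟨i0, hi0s, ?_⟩
    · have hit : t < singVals X i := by rw [hs] at hi; simpa using hi
      have hlam : t^2 ≤ (Matrix.isHermitian_conjTranspose_mul_self X).eigenvalues i := by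
        rw [← sq_singVals]
        exact pow_le_pow_left₀ ht hit.le 2
      exact mul_le_mul_of_nonneg_right hlam (by positivity)
    · have hit : t < singVals X i0 := by rw [hs] at hi0s; simpa using hi0s
      have hlam : t^2 < (Matrix.isHermitian_conjTranspose_mul_self X).eigenvalues i0 := by
        rw [← sq_singVals]
        exact pow_lt_pow_left₀ hit ht two_ne_zero
      have : (0:ℝ) < ‖c i0‖^2 := pow_pos (norm_pos_iff.mpr hi0) 2
      exact mul_lt_mul_of_pos_right hlam this
  have hVv := hV v hvmem.1
  nlinarith [norm_nonneg (toEuclideanLin X v), norm_nonneg v,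
    mul_nonneg ht (norm_nonneg v)]

lemma eigenvalues_congr {A B : Matrix (Fin n) (Fin n) ℂ} (h : A = B)
    (hA : A.IsHermitian) (hB : B.IsHermitian) : hA.eigenvalues = hB.eigenvalues := by
  subst h; rfl

lemma singVals_congr {X Y : Matrix (Fin n) (Fin n) ℂ} (h : Xᴴ*X = Yᴴ*Y) :
    singVals X = singVals Y := by
  funext i
  unfold singVals
  rw [eigenvalues_congr h (Matrix.isHermitian_conjTranspose_mul_self X)
    (Matrix.isHermitian_conjTranspose_mul_self Y)]

lemma cardBig_congr {X Y : Matrix (Fin n) (Fin n) ℂ} (h : Xᴴ*X = Yᴴ*Y) (t : ℝ) :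
    cardBig X t = cardBig Y t := by
  unfold cardBig
  rw [singVals_congr h]

lemma cardBig_neg (X : Matrix (Fin n) (Fin n) ℂ) (t : ℝ) :
    cardBig (-X) t = cardBig X t :=
  cardBig_congr (by simp) t

lemma cardBig_add (X Y : Matrix (Fin n) (Fin n) ℂ) {s t : ℝ} (hs : 0 ≤ s) (ht : 0 ≤ t) :
    cardBig (X + Y) (s + t) ≤ cardBig X s + cardBig Y t := by
  obtain ⟨Vx, hVx, hVxp⟩ := lemA X hs
  obtain ⟨Vy, hVy, hVyp⟩ := lemA Y ht
  have hsum : ∀ v ∈ Vx ⊓ Vy, ‖toEuclideanLin (X + Y) v‖ ≤ (s + t) * ‖v‖ := by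
    intro v hv
    have : toEuclideanLin (X + Y) v = toEuclideanLin X v + toEuclideanLin Y v := by
      rw [map_add]; rfl
    rw [this]
    calc ‖toEuclideanLin X v + toEuclideanLin Y v‖
        ≤ ‖toEuclideanLin X v‖ + ‖toEuclideanLin Y v‖ := norm_add_le _ _
      _ ≤ s * ‖v‖ + t * ‖v‖ := add_le_add (hVxp v hv.1) (hVyp v hv.2)
      _ = (s + t) * ‖v‖ := by ring
  have hB := lemB (X + Y) (by linarith) (Vx ⊓ Vy) hsum
  have h1 := Submodule.finrank_sup_add_finrank_inf_eq Vx Vy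
  have h2 : Module.finrank ℂ ↥(Vx ⊔ Vy) ≤ n := by
    have := Submodule.finrank_le (Vx ⊔ Vy)
    simpa [finrank_euclideanSpace] using this
  omega

lemma finrank_comap_ge (f : EuclideanSpace ℂ (Fin n) →ₗ[ℂ] EuclideanSpace ℂ (Fin n))
    (W : Submodule ℂ (EuclideanSpace ℂ (Fin n))) :
    Module.finrank ℂ W ≤ Module.finrank ℂ (W.comap f) := by
  have hker : W.comap f = LinearMap.ker (W.mkQ.comp f) := by
    rw [LinearMap.ker_comp, Submodule.ker_mkQ]
  have h1 := LinearMap.finrank_range_add_finrank_ker (W.mkQ.comp f)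
  have h2 : Module.finrank ℂ (LinearMap.range (W.mkQ.comp f)) ≤
      Module.finrank ℂ (EuclideanSpace ℂ (Fin n) ⧸ W) := Submodule.finrank_le _
  have h3 := Submodule.finrank_quotient_add_finrank W
  have h4 : Module.finrank ℂ (EuclideanSpace ℂ (Fin n)) = n := finrank_euclideanSpace_fin
  rw [hker]
  omega

lemma cardBig_mul (X Y : Matrix (Fin n) (Fin n) ℂ) {s t : ℝ} (hs : 0 ≤ s) (ht : 0 ≤ t) :
    cardBig (X * Y) (s * t) ≤ cardBig X s + cardBig Y t := by
  obtain ⟨Vx, hVx, hVxp⟩ := lemA X hs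
  obtain ⟨Vy, hVy, hVyp⟩ := lemA Y ht
  have hprop : ∀ v ∈ Vy ⊓ (Vx.comap (toEuclideanLin Y)), ‖toEuclideanLin (X * Y) v‖ ≤ (s * t) * ‖v‖ := by
    intro v hv
    have heq : toEuclideanLin (X * Y) v = toEuclideanLin X (toEuclideanLin Y v) := by
      simp [toEuclideanLin_apply, mulVec_mulVec]
    rw [heq]
    calc ‖toEuclideanLin X (toEuclideanLin Y v)‖
        ≤ s * ‖toEuclideanLin Y v‖ := hVxp _ hv.2
      _ ≤ s * (t * ‖v‖) := by
          exact mul_le_mul_of_nonneg_left (hVyp v hv.1) hs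
      _ = (s * t) * ‖v‖ := by ring
  have hB := lemB (X * Y) (mul_nonneg hs ht) _ hprop
  have h1 := Submodule.finrank_sup_add_finrank_inf_eq Vy (Vx.comap (toEuclideanLin Y))
  have h2 : Module.finrank ℂ ↥(Vy ⊔ Vx.comap (toEuclideanLin Y)) ≤ n := by
    have := Submodule.finrank_le (Vy ⊔ Vx.comap (toEuclideanLin Y))
    simpa [finrank_euclideanSpace] using this
  have h3 := finrank_comap_ge (toEuclideanLin Y) Vx
  omega

lemma cardBig_sq (X : Matrix (Fin n) (Fin n) ℂ) {t : ℝ} (ht : 0 ≤ t) :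
    cardBig X t ≤ cardBig (Xᴴ * X) (t^2) := by
  obtain ⟨V, hVrank, hVp⟩ := lemA (Xᴴ * X) (t := t^2) (by positivity)
  have hprop : ∀ v ∈ V, ‖toEuclideanLin X v‖ ≤ t * ‖v‖ := by
    intro v hv
    have h1 : ‖toEuclideanLin X v‖^2 = RCLike.re (inner ℂ v (toEuclideanLin (Xᴴ*X) v) : ℂ) := by
      have h1' : toEuclideanLin (Xᴴ*X) v = toEuclideanLin Xᴴ (toEuclideanLin X v) := by
        simp [toEuclideanLin_apply, mulVec_mulVec]
      rw [h1', Matrix.toEuclideanLin_conjTranspose_eq_adjoint, LinearMap.adjoint_inner_right,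
        inner_self_eq_norm_sq]
    have h2 : RCLike.re (inner ℂ v (toEuclideanLin (Xᴴ*X) v) : ℂ)
        ≤ ‖v‖ * ‖toEuclideanLin (Xᴴ*X) v‖ := by
      calc RCLike.re (inner ℂ v (toEuclideanLin (Xᴴ*X) v) : ℂ)
          ≤ ‖(inner ℂ v (toEuclideanLin (Xᴴ*X) v) : ℂ)‖ := RCLike.re_le_norm _
        _ ≤ ‖v‖ * ‖toEuclideanLin (Xᴴ*X) v‖ := norm_inner_le_norm _ _
    have h3 : ‖toEuclideanLin X v‖^2 ≤ t^2 * ‖v‖^2 := by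
      have := hVp v hv
      calc ‖toEuclideanLin X v‖^2 ≤ ‖v‖ * ‖toEuclideanLin (Xᴴ*X) v‖ := h1 ▸ h2
        _ ≤ ‖v‖ * (t^2 * ‖v‖) := mul_le_mul_of_nonneg_left this (norm_nonneg v)
        _ = t^2 * ‖v‖^2 := by ring
    nlinarith [norm_nonneg (toEuclideanLin X v), norm_nonneg v,
      mul_nonneg ht (norm_nonneg v)]
  have hB := lemB X ht V hprop
  omega

def Am (n : ℕ) : Matrix (Fin n) (Fin n) ℂ :=
  Matrix.of fun i j => if (i:ℕ) < n/2 ∧ (j:ℕ) = (i:ℕ) + n/2 then 1 else 0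

lemma Am_mul_self (n : ℕ) : Am n * Am n = 0 := by
  ext i k
  rw [Matrix.mul_apply]
  simp only [Matrix.zero_apply]
  apply Finset.sum_eq_zero
  intro j _
  simp only [Am, Matrix.of_apply]
  split_ifs with h1 h2 <;> try simp
  · omega

def dv (n : ℕ) : Fin n → ℂ := fun j => if n/2 ≤ (j:ℕ) ∧ (j:ℕ) < n/2 + n/2 then 1 else 0

lemma AmTA (n : ℕ) : (Am n)ᴴ * Am n = Matrix.diagonal (dv n) := by
  classical
  ext j k
  rw [Matrix.mul_apply, Matrix.diagonal_apply]
  have hterm : ∀ i : Fin n, (Am n)ᴴ j i * Am n i k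
      = if (((i:ℕ) < n/2 ∧ (j:ℕ) = (i:ℕ) + n/2) ∧ (k:ℕ) = (i:ℕ) + n/2) then 1 else 0 := by
    intro i
    simp only [Matrix.conjTranspose_apply, Am, Matrix.of_apply]
    split_ifs with h1 h2 h3 <;> simp_all
  rw [Finset.sum_congr rfl (fun i _ => hterm i)]
  rw [Finset.sum_boole]
  by_cases hc : n/2 ≤ (j:ℕ) ∧ (j:ℕ) < n/2 + n/2 ∧ j = k
  · obtain ⟨hc1, hc2, hc3⟩ := hc
    have hjn : (j:ℕ) - n/2 < n := by omega
    have hfilter : Finset.univ.filter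
        (fun i : Fin n => ((i:ℕ) < n/2 ∧ (j:ℕ) = (i:ℕ) + n/2) ∧ (k:ℕ) = (i:ℕ) + n/2)
        = {⟨(j:ℕ) - n/2, hjn⟩} := by
      ext i
      simp only [Finset.mem_filter, Finset.mem_univ, true_and, Finset.mem_singleton, Fin.ext_iff]
      subst hc3
      omega
    rw [hfilter]
    subst hc3
    simp [dv, hc1, hc2]
  · have hfilter : Finset.univ.filter
        (fun i : Fin n => ((i:ℕ) < n/2 ∧ (j:ℕ) = (i:ℕ) + n/2) ∧ (k:ℕ) = (i:ℕ) + n/2)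
        = ∅ := by
      ext i
      simp only [Finset.mem_filter, Finset.mem_univ, true_and, Finset.notMem_empty, iff_false]
      rintro ⟨⟨h1, h2⟩, h3⟩
      apply hc
      refine ⟨by omega, by omega, Fin.ext (by omega)⟩
    rw [hfilter]
    by_cases hjk : j = k
    · subst hjk
      have hnd : ¬(n/2 ≤ (j:ℕ) ∧ (j:ℕ) < n/2 + n/2) := fun h => hc ⟨h.1, h.2, rfl⟩
      simp [dv, hnd]
    · simp [hjk]

lemma dv_card (n : ℕ) : Finset.card (Finset.univ.filter (fun j : Fin n => n/2 ≤ (j:ℕ) ∧ (j:ℕ) < n/2 + n/2)) = n/2 := by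
  classical
  have h1 : (Finset.univ.filter (fun j : Fin n => n/2 ≤ (j:ℕ) ∧ (j:ℕ) < n/2 + n/2)).card
      = ((Finset.range n).filter (fun k => n/2 ≤ k ∧ k < n/2 + n/2)).card := by
    rw [Finset.card_filter, Finset.card_filter, Fin.sum_univ_eq_sum_range (fun k => if n/2 ≤ k ∧ k < n/2 + n/2 then 1 else 0)]
  rw [h1]
  have h2 : (Finset.range n).filter (fun k => n/2 ≤ k ∧ k < n/2 + n/2) = Finset.Ico (n/2) (n/2 + n/2) := by
    ext k
    simp only [Finset.mem_filter, Finset.mem_range, Finset.mem_Ico]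
    omega
  rw [h2, Nat.card_Ico]
  omega

lemma trace_AmTA (n : ℕ) : ((Am n)ᴴ * Am n).trace = ((n/2 : ℕ) : ℂ) := by
  rw [AmTA, Matrix.trace_diagonal]
  unfold dv
  rw [Finset.sum_boole]
  rw [dv_card]

lemma AmTA_idem (n : ℕ) : ((Am n)ᴴ * Am n) * ((Am n)ᴴ * Am n) = (Am n)ᴴ * Am n := by
  rw [AmTA, Matrix.diagonal_mul_diagonal]
  have hfun : (fun i => dv n i * dv n i) = dv n := by
    funext j; unfold dv; split_ifs <;> simp
  rw [hfun]

lemma sum_eig_eq_trace {A : Matrix (Fin n) (Fin n) ℂ} (hA : A.IsHermitian) :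
    ∑ i, (hA.eigenvalues i : ℂ) = A.trace := by
  exact hA.trace_eq_sum_eigenvalues.symm

lemma eig_idem {H : Matrix (Fin n) (Fin n) ℂ} (hH : H.IsHermitian) (hid : H * H = H)
    (i : Fin n) : hH.eigenvalues i = 0 ∨ hH.eigenvalues i = 1 := by
  set f := ⇑(hH.eigenvectorBasis i) with hf
  have h := hH.mulVec_eigenvectorBasis i
  have h2 : H *ᵥ (H *ᵥ f) = (hH.eigenvalues i * hH.eigenvalues i) • f := by
    rw [h, Matrix.mulVec_smul, h, smul_smul]
  have h3 : H *ᵥ (H *ᵥ f) = hH.eigenvalues i • f := by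
    rw [Matrix.mulVec_mulVec, hid, h]
  have h4 : (hH.eigenvalues i * hH.eigenvalues i - hH.eigenvalues i) • f = 0 := by
    rw [sub_smul, h2.symm.trans h3]
    simp
  have hfne : f ≠ 0 := by
    intro hzero
    have : hH.eigenvectorBasis i = 0 := by
      apply PiLp.ext
      intro j
      exact congrFun hzero j
    exact hH.eigenvectorBasis.orthonormal.ne_zero i this
  rcases smul_eq_zero.mp h4 with hcoef | hfz
  · have : hH.eigenvalues i * (hH.eigenvalues i - 1) = 0 := by ring_nf; ring_nf at hcoef; linarith
    rcases mul_eq_zero.mp this with h | h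
    · exact Or.inl h
    · exact Or.inr (by linarith)
  · exact absurd hfz hfne

lemma eigAm (n : ℕ) (i : Fin n) :
    (Matrix.isHermitian_conjTranspose_mul_self (Am n)).eigenvalues i = 0 ∨
    (Matrix.isHermitian_conjTranspose_mul_self (Am n)).eigenvalues i = 1 :=
  eig_idem _ (AmTA_idem n) i

lemma card_eigAm (n : ℕ) :
    (Finset.univ.filter (fun i : Fin n =>
      (Matrix.isHermitian_conjTranspose_mul_self (Am n)).eigenvalues i = 1)).card = n/2 := by
  classical
  have hsum := sum_eig_eq_trace (Matrix.isHermitian_conjTranspose_mul_self (Am n))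
  rw [trace_AmTA] at hsum
  have hr : ∑ i, (Matrix.isHermitian_conjTranspose_mul_self (Am n)).eigenvalues i = ((n/2 : ℕ) : ℝ) := by
    have := hsum
    push_cast at this ⊢
    exact_mod_cast this
  have h2 : ∑ i, (Matrix.isHermitian_conjTranspose_mul_self (Am n)).eigenvalues i
      = ∑ i : Fin n, (if (Matrix.isHermitian_conjTranspose_mul_self (Am n)).eigenvalues i = 1 then (1:ℝ) else 0) := by
    refine Finset.sum_congr rfl fun i _ => ?_
    rcases eigAm n i with h | h <;> simp [h]
  rw [h2, Finset.sum_boole] at hr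
  exact_mod_cast hr

lemma singVals_Am (n : ℕ) (i : Fin n) :
    singVals (Am n) i = if (Matrix.isHermitian_conjTranspose_mul_self (Am n)).eigenvalues i = 1 then 1 else 0 := by
  unfold singVals
  rcases eigAm n i with h | h <;> simp [h]

lemma cardBig_Am {t : ℝ} (ht0 : 0 ≤ t) (ht1 : t < 1) (n : ℕ) : cardBig (Am n) t = n/2 := by
  classical
  unfold cardBig
  rw [← card_eigAm n]
  apply congrArg
  apply Finset.filter_congr
  intro i _
  rw [singVals_Am]
  rcases eigAm n i with h | h <;> simp [h, ht1, not_lt.mpr ht0]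

lemma cardBig_Am_one (n : ℕ) : cardBig (Am n) 1 = 0 := by
  classical
  unfold cardBig
  rw [Finset.card_eq_zero, Finset.filter_eq_empty_iff]
  intro i _
  rw [singVals_Am]
  split_ifs <;> simp

lemma sumF_Am (n : ℕ) (F : ℝ → ℂ) :
    ∑ i, F (singVals (Am n) i) = ((n/2 : ℕ) : ℂ) * F 1 + ((n - n/2 : ℕ) : ℂ) * F 0 := by
  classical
  have h1 : ∀ i : Fin n, F (singVals (Am n) i)
      = if (Matrix.isHermitian_conjTranspose_mul_self (Am n)).eigenvalues i = 1 then F 1 else F 0 := by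
    intro i
    rw [singVals_Am]
    split_ifs <;> rfl
  rw [Finset.sum_congr rfl (fun i _ => h1 i), Finset.sum_ite, Finset.sum_const, Finset.sum_const]
  have hcard1 := card_eigAm n
  have hcard2 : (Finset.univ.filter (fun i : Fin n =>
      ¬ (Matrix.isHermitian_conjTranspose_mul_self (Am n)).eigenvalues i = 1)).card = n - n/2 := by
    have := Finset.card_filter_add_card_filter_not (s := (Finset.univ : Finset (Fin n)))
      (p := fun i => (Matrix.isHermitian_conjTranspose_mul_self (Am n)).eigenvalues i = 1)
    rw [hcard1] at this
    simp only [Finset.card_univ, Fintype.card_fin] at this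
    omega
  rw [hcard1, hcard2]
  simp [nsmul_eq_mul]

lemma half_tendsto : Tendsto (fun n : ℕ => ((n/2 : ℕ) : ℝ) / n) atTop (nhds (1/2)) := by
  have hup : ∀ᶠ n : ℕ in atTop, ((n/2 : ℕ) : ℝ) / n ≤ 1/2 := by
    filter_upwards [eventually_ge_atTop 1] with n hn
    have hn' : (0:ℝ) < n := by exact_mod_cast hn
    rw [div_le_iff₀ hn']
    have h2 : 2 * (n/2) ≤ n := by omega
    have : (2:ℝ) * ((n/2 : ℕ):ℝ) ≤ n := by exact_mod_cast h2
    linarith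
  have hlow : ∀ᶠ n : ℕ in atTop, 1/2 - 1/(n:ℝ) ≤ ((n/2 : ℕ) : ℝ) / n := by
    filter_upwards [eventually_ge_atTop 1] with n hn
    have hn' : (0:ℝ) < n := by exact_mod_cast hn
    rw [le_div_iff₀ hn']
    have h2 : n ≤ 2 * (n/2) + 1 := by omega
    have : (n:ℝ) ≤ 2 * ((n/2 : ℕ):ℝ) + 1 := by exact_mod_cast h2
    have hinv : 1/(n:ℝ) * n = 1 := by field_simp
    nlinarith
  have hlim : Tendsto (fun n : ℕ => 1/2 - 1/(n:ℝ)) atTop (nhds (1/2)) := by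
    have := tendsto_one_div_atTop_nhds_zero_nat (𝕜 := ℝ)
    simpa using (tendsto_const_nhds (x := (1/2:ℝ)) (f := atTop)).sub this
  exact tendsto_of_tendsto_of_tendsto_of_le_of_le' hlim tendsto_const_nhds hlow hup

lemma half_tendsto' : Tendsto (fun n : ℕ => ((n - n/2 : ℕ) : ℝ) / n) atTop (nhds (1/2)) := by
  have h : ∀ᶠ n : ℕ in atTop, ((n - n/2 : ℕ) : ℝ) / n = 1 - ((n/2 : ℕ) : ℝ) / n := by
    filter_upwards [eventually_ge_atTop 1] with n hn
    have hn' : (0:ℝ) < n := by exact_mod_cast hn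
    have hle : n/2 ≤ n := by omega
    rw [Nat.cast_sub hle]
    field_simp
  rw [tendsto_congr' h]
  have := tendsto_const_nhds (x := (1:ℝ)) (f := (atTop : Filter ℕ)) |>.sub half_tendsto
  norm_num at this ⊢
  exact this

lemma limit_lemma (F1 F0 : ℂ) :
    Tendsto (fun n : ℕ => (n:ℂ)⁻¹ * (((n/2 : ℕ):ℂ) * F1 + ((n - n/2 : ℕ):ℂ) * F0)) atTop
      (nhds ((1/2 : ℝ) • F1 + (1/2 : ℝ) • F0)) := by
  have heq : ∀ n : ℕ, (n:ℂ)⁻¹ * (((n/2 : ℕ):ℂ) * F1 + ((n - n/2 : ℕ):ℂ) * F0)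
      = ((((n/2 : ℕ):ℝ) / n : ℝ) : ℂ) * F1 + ((((n - n/2 : ℕ):ℝ) / n : ℝ) : ℂ) * F0 := by
    intro n
    push_cast
    ring
  simp only [heq]
  have h1 : Tendsto (fun n : ℕ => ((((n/2 : ℕ):ℝ) / n : ℝ) : ℂ)) atTop (nhds ((1/2 : ℝ) : ℂ)) :=
    (Complex.continuous_ofReal.tendsto _).comp half_tendsto
  have h2 : Tendsto (fun n : ℕ => ((((n - n/2 : ℕ):ℝ) / n : ℝ) : ℂ)) atTop (nhds ((1/2 : ℝ) : ℂ)) :=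
    (Complex.continuous_ofReal.tendsto _).comp half_tendsto'
  have hc1 : Tendsto (fun _ : ℕ => F1) atTop (nhds F1) := tendsto_const_nhds
  have hc0 : Tendsto (fun _ : ℕ => F0) atTop (nhds F0) := tendsto_const_nhds
  have := (h1.mul hc1).add (h2.mul hc0)
  simpa [Complex.real_smul] using this

lemma integral_step (F : ℝ → ℂ) (hF : Continuous F) :
    ∫ x in Set.Icc (0:ℝ) 1, F ‖(if x ≤ 1/2 then (1:ℂ) else 0)‖
      = (1/2 : ℝ) • F 1 + (1/2 : ℝ) • F 0 := by
  have hfun : ∀ x : ℝ, F ‖(if x ≤ 1/2 then (1:ℂ) else 0)‖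
      = if x ≤ 1/2 then F 1 else F 0 := by
    intro x; split_ifs <;> simp
  simp only [hfun]
  have hsplit : Set.Icc (0:ℝ) 1 = Set.Icc 0 (1/2) ∪ Set.Ioc (1/2) 1 :=
    (Set.Icc_union_Ioc_eq_Icc (by norm_num) (by norm_num)).symm
  rw [hsplit]
  have hdisj : Disjoint (Set.Icc (0:ℝ) (1/2)) (Set.Ioc (1/2) 1) := by
    apply Set.disjoint_left.mpr
    intro x hx hx2
    exact absurd hx.2 (not_le.mpr hx2.1)
  have hint1 : MeasureTheory.IntegrableOn (fun x : ℝ => if x ≤ 1/2 then F 1 else F 0)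
      (Set.Icc (0:ℝ) (1/2)) := by
    exact MeasureTheory.IntegrableOn.congr_fun
      (f := fun _ => F 1) ((MeasureTheory.integrableOn_const_iff (C := F 1)).mpr (Or.inr (by simp)))
      (fun x hx => (if_pos hx.2).symm) measurableSet_Icc
  have hint2 : MeasureTheory.IntegrableOn (fun x : ℝ => if x ≤ 1/2 then F 1 else F 0)
      (Set.Ioc (1/2:ℝ) 1) := by
    exact MeasureTheory.IntegrableOn.congr_fun
      (f := fun _ => F 0) ((MeasureTheory.integrableOn_const_iff (C := F 0)).mpr (Or.inr (by simp)))
      (fun x hx => (if_neg (not_le.mpr hx.1)).symm) measurableSet_Ioc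
  rw [MeasureTheory.setIntegral_union hdisj measurableSet_Ioc hint1 hint2]
  have he1 : ∫ x in Set.Icc (0:ℝ) (1/2), (if x ≤ 1/2 then F 1 else F 0)
      = (1/2 : ℝ) • F 1 := by
    rw [MeasureTheory.setIntegral_congr_fun measurableSet_Icc (g := fun _ => F 1)
      (fun x hx => if_pos hx.2)]
    rw [MeasureTheory.setIntegral_const]
    congr 1
    simp [Real.volume_Icc]
  have he2 : ∫ x in Set.Ioc (1/2:ℝ) 1, (if x ≤ 1/2 then F 1 else F 0)
      = (1/2 : ℝ) • F 0 := by
    rw [MeasureTheory.setIntegral_congr_fun measurableSet_Ioc (g := fun _ => F 0)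
      (fun x hx => if_neg (not_le.mpr hx.1))]
    rw [MeasureTheory.setIntegral_const]
    congr 1
    simp [Real.volume_Ioc]
    norm_num
  rw [he1, he2]

lemma zerodist_count {E : ∀ n : ℕ, Matrix (Fin n) (Fin n) ℂ} (h : ZeroDist E)
    {δ : ℝ} (hδ : 0 < δ) :
    ∀ᶠ n : ℕ in atTop, (cardBig (E n) δ : ℝ) ≤ n / 100 := by
  classical
  set f : ℝ → ℝ := fun x => max 0 (1 - |x|/δ) with hf
  have hfc : Continuous f := continuous_const.max (continuous_const.sub (continuous_abs.div_const δ))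
  set F : C(ℝ, ℂ) := ⟨fun x => ((f x : ℝ) : ℂ), Complex.continuous_ofReal.comp hfc⟩ with hF
  have hFcs : HasCompactSupport F := by
    apply HasCompactSupport.intro (isCompact_Icc (a := -δ) (b := δ))
    intro x hx
    have : δ < |x| := by
      rcases abs_cases x with ⟨h1, h2⟩ | ⟨h1, h2⟩ <;>
        simp only [Set.mem_Icc, not_and_or, not_le] at hx <;> rcases hx with h | h <;> linarith
    have : f x = 0 := by
      rw [hf]
      apply max_eq_left
      have : 1 - |x|/δ < 0 := by
        rw [sub_neg]
        rw [lt_div_iff₀ hδ]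
        linarith
      linarith
    simp [hF, this]
  have hT := h F hFcs
  have hF0 : F 0 = 1 := by
    simp [hF, hf, hδ.le]
  rw [hF0] at hT
  have hg : Tendsto (fun n : ℕ => (n:ℝ)⁻¹ * ∑ i, f (singVals (E n) i)) atTop (nhds 1) := by
    have hre := (Complex.continuous_re.tendsto _).comp hT
    have heq : ∀ n : ℕ, ((n : ℂ)⁻¹ * ∑ i, F (singVals (E n) i)).re
        = (n:ℝ)⁻¹ * ∑ i, f (singVals (E n) i) := by
      intro n
      have : ((n : ℂ)⁻¹ * ∑ i, F (singVals (E n) i))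
          = (((n:ℝ)⁻¹ * ∑ i, f (singVals (E n) i) : ℝ) : ℂ) := by
        push_cast
        rfl
      rw [this, Complex.ofReal_re]
    exact hre.congr heq
  have hev := hg.eventually (eventually_ge_nhds (by norm_num : (99/100 : ℝ) < 1))
  filter_upwards [hev, eventually_ge_atTop 1] with n hgn hn1
  have hnpos : (0:ℝ) < n := by exact_mod_cast hn1
  have hbound : ∑ i, f (singVals (E n) i)
      ≤ (n : ℝ) - cardBig (E n) δ := by
    have hle : ∀ i : Fin n, f (singVals (E n) i) ≤ if δ < singVals (E n) i then 0 else 1 := by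
      intro i
      split_ifs with hi
      · rw [hf]
        apply max_le le_rfl
        have habs : |singVals (E n) i| = singVals (E n) i := abs_of_nonneg (singVals_nonneg _ i)
        rw [habs, sub_nonpos, le_div_iff₀ hδ]
        linarith
      · rw [hf]
        apply max_le (by norm_num)
        have : 0 ≤ |singVals (E n) i| / δ := by positivity
        linarith
    calc ∑ i, f (singVals (E n) i) ≤ ∑ i : Fin n, (if δ < singVals (E n) i then (0:ℝ) else 1) :=
          Finset.sum_le_sum fun i _ => hle i
      _ = (n : ℝ) - cardBig (E n) δ := by
          rw [Finset.sum_ite, Finset.sum_const, Finset.sum_const, smul_zero, zero_add,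
            nsmul_eq_mul, mul_one]
          have hc := Finset.card_filter_add_card_filter_not
            (s := (Finset.univ : Finset (Fin n))) (p := fun i => δ < singVals (E n) i)
          simp only [Finset.card_univ, Fintype.card_fin] at hc
          have h5 : (Finset.filter (fun i => ¬ δ < singVals (E n) i) Finset.univ).card
              = n - cardBig (E n) δ := by
            unfold cardBig; omega
          rw [h5, Nat.cast_sub (cardBig_le _ _)]
  have h99 : 99/100 * (n:ℝ) ≤ (n:ℝ) - cardBig (E n) δ := by
    have h1 : 99/100 ≤ (n:ℝ)⁻¹ * ∑ i, f (singVals (E n) i) := hgn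
    have h2 : (n:ℝ)⁻¹ * ∑ i, f (singVals (E n) i) ≤ (n:ℝ)⁻¹ * ((n : ℝ) - cardBig (E n) δ) :=
      mul_le_mul_of_nonneg_left hbound (by positivity)
    have h3 : (n:ℝ)⁻¹ * ((n : ℝ) - cardBig (E n) δ) * n = (n : ℝ) - cardBig (E n) δ := by
      field_simp
    nlinarith
  linarith

lemma cardBig_normal_sq (N : Matrix (Fin n) (Fin n) ℂ) (hc : Nᴴ * N = N * Nᴴ) (t : ℝ) :
    cardBig (N * N) t = cardBig (Nᴴ * N) t := by
  apply cardBig_congr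
  have h1 : (N*N)ᴴ = Nᴴ * Nᴴ := by rw [Matrix.conjTranspose_mul]
  have h2 : (Nᴴ*N)ᴴ = Nᴴ*N := (Matrix.isHermitian_conjTranspose_mul_self N).eq
  rw [h1, h2]
  calc Nᴴ * Nᴴ * (N * N) = Nᴴ * ((Nᴴ * N) * N) := by simp only [mul_assoc]
    _ = Nᴴ * ((N * Nᴴ) * N) := by rw [hc]
    _ = Nᴴ * N * (Nᴴ * N) := by simp only [mul_assoc]

theorem main_contradiction (N : ∀ n : ℕ, Matrix (Fin n) (Fin n) ℂ)
    (hN : ∀ n, IsStarNormal (N n)) (hZD : ZeroDist (fun n => Am n - N n)) : False := by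
  have hcnt := zerodist_count hZD (δ := 1/20) (by norm_num)
  obtain ⟨n, hn⟩ := (hcnt.and (eventually_ge_atTop 2)).exists
  obtain ⟨hr, hn2⟩ := hn
  set E := Am n - N n with hE
  set r := cardBig E (1/20) with hrdef
  -- (i) half of singular values of Am are 1
  have hAm : cardBig (Am n) (1/2) = n/2 := cardBig_Am (by norm_num) (by norm_num) n
  -- (ii) lower bound on cardBig (N n) (9/20)
  have hsplit : Am n = N n + E := by rw [hE]; abel
  have hlow : (n/2 : ℕ) ≤ cardBig (N n) (9/20) + r := by
    have := cardBig_add (N n) E (s := 9/20) (t := 1/20) (by norm_num) (by norm_num)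
    rw [← hsplit] at this
    have h920 : (9/20 : ℝ) + 1/20 = 1/2 := by norm_num
    rw [h920, hAm] at this
    exact this
  -- (iii) via normality
  have hcomm : (N n)ᴴ * (N n) = (N n) * (N n)ᴴ := by
    have := (hN n).star_comm_self
    rw [Commute, SemiconjBy] at this
    rw [← Matrix.star_eq_conjTranspose]
    exact this
  have hsq : cardBig (N n) (9/20) ≤ cardBig (N n * N n) ((9/20)^2) := by
    have h1 := cardBig_sq (N n) (t := 9/20) (by norm_num)
    have h2 := cardBig_normal_sq (N n) hcomm ((9/20)^2)
    omega
  -- (iv) upper bound on cardBig (N n * N n)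
  have hexp : N n * N n = -(Am n * E) + (-(E * Am n) + E * E) := by
    calc N n * N n = Am n * Am n + (-(Am n * E) + (-(E * Am n) + E * E)) := by
          rw [hE]; noncomm_ring
      _ = -(Am n * E) + (-(E * Am n) + E * E) := by rw [Am_mul_self n]; simp
  have hA1 : cardBig (Am n) 1 = 0 := cardBig_Am_one n
  have hAE : cardBig (Am n * E) (1/20) ≤ r := by
    have := cardBig_mul (Am n) E (s := 1) (t := 1/20) (by norm_num) (by norm_num)
    rw [hA1, one_mul, zero_add] at this
    exact this
  have hEA : cardBig (E * Am n) (1/20) ≤ r := by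
    have := cardBig_mul E (Am n) (s := 1/20) (t := 1) (by norm_num) (by norm_num)
    rw [hA1, mul_one, add_zero] at this
    exact this
  have hEE : cardBig (E * E) (1/400) ≤ 2 * r := by
    have := cardBig_mul E E (s := 1/20) (t := 1/20) (by norm_num) (by norm_num)
    have h400 : (1/20 : ℝ) * (1/20) = 1/400 := by norm_num
    rw [h400] at this
    omega
  have hupper : cardBig (N n * N n) (41/400) ≤ 4 * r := by
    have hs1 := cardBig_add (-(E * Am n)) (E * E) (s := 1/20) (t := 1/400)
      (by norm_num) (by norm_num)
    rw [cardBig_neg] at hs1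
    have hs2 := cardBig_add (-(Am n * E)) (-(E * Am n) + E * E) (s := 1/20) (t := 1/20 + 1/400)
      (by norm_num) (by norm_num)
    rw [cardBig_neg] at hs2
    rw [← hexp] at hs2
    have h41 : (1/20 : ℝ) + (1/20 + 1/400) = 41/400 := by norm_num
    rw [h41] at hs2
    omega
  have hmono : cardBig (N n * N n) ((9/20)^2) ≤ cardBig (N n * N n) (41/400) :=
    cardBig_mono _ (by norm_num)
  -- combine
  have hfinal : (n/2 : ℕ) ≤ 5 * r := by omega
  have hnr : (n/2 : ℕ) ≥ (n-1)/2 := by omega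
  have hcast : ((n/2 : ℕ) : ℝ) ≤ 5 * (n/100 : ℝ) := by
    calc ((n/2 : ℕ) : ℝ) ≤ (5 * r : ℕ) := by exact_mod_cast hfinal
      _ = 5 * (r : ℝ) := by push_cast; ring
      _ ≤ 5 * ((n:ℝ)/100) := by linarith
  have hcast2 : ((n:ℝ) - 1)/2 ≤ ((n/2 : ℕ) : ℝ) := by
    have : n ≤ 2 * (n/2) + 1 := by omega
    have h2 : (n:ℝ) ≤ 2 * ((n/2 : ℕ):ℝ) + 1 := by exact_mod_cast this
    linarith
  have hn2' : (2:ℝ) ≤ n := by exact_mod_cast hn2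
  linarith

lemma singSymb_Am : SingSymb (Set.Icc (0:ℝ) 1) Am (fun x => if x ≤ 1/2 then (1:ℂ) else 0) := by
  intro F hFcs
  have hgoal : Tendsto (fun n : ℕ => (n:ℂ)⁻¹ * ∑ i, F (singVals (Am n) i)) atTop
      (nhds ((1/2:ℝ) • F 1 + (1/2:ℝ) • F 0)) := by
    refine Tendsto.congr (fun n => ?_) (limit_lemma (F 1) (F 0))
    rw [sumF_Am n F]
  convert hgoal using 2
  have h1 : (((volume (Set.Icc (0:ℝ) 1)).toReal)⁻¹ : ℝ) = 1 := by simp [Real.volume_Icc]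
  rw [h1, one_smul]
  exact integral_step F F.continuous

/-- There is a sequence `{A_n}` with `A_n² = 0` and singular value symbol
`χ_{[0,1/2]}` on `[0,1]` that is not acs equivalent to any sequence of normal
matrices. -/
theorem exists_no_normal_acs_equivalent :
    ∃ A : ∀ n : ℕ, Matrix (Fin n) (Fin n) ℂ,
      (∀ n, A n * A n = 0) ∧
      SingSymb (Set.Icc (0:ℝ) 1) A (fun x => if x ≤ 1/2 then (1:ℂ) else 0) ∧
      ∀ N : ∀ n : ℕ, Matrix (Fin n) (Fin n) ℂ,
        (∀ n, IsStarNormal (N n)) → ¬ ZeroDist (fun n => A n - N n) := by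
  refine ⟨Am, Am_mul_self, singSymb_Am, ?_⟩
  intro N hN hZD
  exact main_contradiction N hN hZD
end

section
/- There exists a sequence $\{D_n\}_n$ of diagonal (hence normal) matrices admitting singular value symbol $1$ such that $\{D_n + I_n\}_n$ admits no singular value symbol; concretely $D_{2n} = I_{2n}$, $D_{2n+1} = -I_{2n+1}$. Consequently $\{D_n\}_n$ admits no normal form: there is no unitary sequence $\{U_n\}_n$, diagonal sequence $\{E_n\}_n$ with a spectral symbol $k$, such that $\{U_n^H E_n U_n\}_n$ is acs equivalent to $\{D_n\}_n$. -/
open MeasureTheory Filter Matrix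

open Polynomial in
lemma charpoly_diagonal_eq {n : ℕ} (v : Fin n → ℂ) :
    (Matrix.diagonal v).charpoly = ∏ i, (X - C (v i)) := by
  have h : (Matrix.diagonal v).charmatrix
      = Matrix.diagonal (fun i => (X : ℂ[X]) - C (v i)) := by
    ext i j
    by_cases hij : i = j
    · subst hij; simp [Matrix.charmatrix_apply_eq]
    · rw [Matrix.charmatrix_apply_ne _ _ _ hij, Matrix.diagonal_apply_ne _ hij,
        Matrix.diagonal_apply_ne _ hij]
      simp
  rw [Matrix.charpoly, h, Matrix.det_diagonal]

open Polynomial in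
lemma charpoly_unitary_conj {n : ℕ} (U A : Matrix (Fin n) (Fin n) ℂ)
    (hU : U ∈ Matrix.unitaryGroup (Fin n) ℂ) :
    ((star U) * A * U).charpoly = A.charpoly := by
  have h1 : (star U) * U = 1 := Matrix.mem_unitaryGroup_iff'.mp hU
  set φ : Matrix (Fin n) (Fin n) ℂ →+* Matrix (Fin n) (Fin n) ℂ[X] :=
    (C : ℂ →+* ℂ[X]).mapMatrix with hφ
  have key : Matrix.charmatrix ((star U) * A * U) = φ (star U) * A.charmatrix * φ U := by
    have hcomm : ∀ M : Matrix (Fin n) (Fin n) ℂ[X],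
        Matrix.scalar (Fin n) (X : ℂ[X]) * M = M * Matrix.scalar (Fin n) (X : ℂ[X]) :=
      fun M => (Matrix.scalar_commute (X : ℂ[X]) (fun r' => Commute.all _ _) M)
    rw [Matrix.charmatrix, Matrix.charmatrix, mul_sub, sub_mul, ← _root_.map_mul φ,
      ← _root_.map_mul φ]
    congr 1
    rw [← hcomm (φ (star U)), mul_assoc, ← _root_.map_mul φ, h1, _root_.map_one φ, mul_one]
  rw [Matrix.charpoly, Matrix.charpoly, key, Matrix.det_mul, Matrix.det_mul]
  have h2 : (φ (star U)).det * (φ U).det = 1 := by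
    rw [← Matrix.det_mul, ← _root_.map_mul φ, h1, _root_.map_one φ, Matrix.det_one]
  calc (φ (star U)).det * A.charmatrix.det * (φ U).det
      = (φ (star U)).det * (φ U).det * A.charmatrix.det := by ring
    _ = A.charmatrix.det := by rw [h2, one_mul]

open Polynomial in
lemma hermitian_sum_eq {n : ℕ} {A : Matrix (Fin n) (Fin n) ℂ} (hA : A.IsHermitian)
    (v : Fin n → ℂ) (h : A.charpoly = (Matrix.diagonal v).charpoly) (f : ℂ → ℂ) :
    ∑ i, f ((hA.eigenvalues i : ℂ)) = ∑ i, f (v i) := by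
  have hAe : A.charpoly
      = (Matrix.diagonal (fun i => ((hA.eigenvalues i : ℝ) : ℂ))).charpoly := by
    have hmem : (star (hA.eigenvectorUnitary : Matrix (Fin n) (Fin n) ℂ))
        ∈ Matrix.unitaryGroup (Fin n) ℂ := Unitary.star_mem (hA.eigenvectorUnitary).2
    calc A.charpoly = ((star (star (hA.eigenvectorUnitary : Matrix (Fin n) (Fin n) ℂ)))
          * Matrix.diagonal (RCLike.ofReal ∘ hA.eigenvalues)
          * (star (hA.eigenvectorUnitary : Matrix (Fin n) (Fin n) ℂ))).charpoly := by
          rw [star_star]; exact congrArg _ hA.spectral_theorem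
      _ = (Matrix.diagonal (RCLike.ofReal ∘ hA.eigenvalues)).charpoly :=
          charpoly_unitary_conj _ _ hmem
      _ = _ := rfl
  rw [hAe, charpoly_diagonal_eq, charpoly_diagonal_eq] at h
  have hm : Multiset.map (fun i => ((hA.eigenvalues i : ℝ) : ℂ)) Finset.univ.val
      = Multiset.map v Finset.univ.val := by
    have h1 := congrArg Polynomial.roots h
    rw [Finset.prod_eq_multiset_prod, Finset.prod_eq_multiset_prod] at h1
    calc Multiset.map (fun i => ((hA.eigenvalues i : ℝ) : ℂ)) Finset.univ.val
        = (Multiset.map (fun a => X - C a)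
            (Multiset.map (fun i => ((hA.eigenvalues i : ℝ) : ℂ))
              Finset.univ.val)).prod.roots := (roots_multiset_prod_X_sub_C _).symm
      _ = (Multiset.map (fun a => X - C a)
            (Multiset.map v Finset.univ.val)).prod.roots := by
          rw [Multiset.map_map, Multiset.map_map]; exact h1
      _ = Multiset.map v Finset.univ.val := roots_multiset_prod_X_sub_C _
  calc ∑ i, f ((hA.eigenvalues i : ℂ))
      = (Multiset.map f (Multiset.map (fun i => ((hA.eigenvalues i : ℝ) : ℂ))
          Finset.univ.val)).sum := by
        rw [Multiset.map_map, Finset.sum_eq_multiset_sum]; rfl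
    _ = (Multiset.map f (Multiset.map v Finset.univ.val)).sum := by rw [hm]
    _ = ∑ i, f (v i) := by rw [Multiset.map_map, Finset.sum_eq_multiset_sum]; rfl

lemma sum_singVals_conj {n : ℕ} (U : Matrix (Fin n) (Fin n) ℂ)
    (hU : U ∈ Matrix.unitaryGroup (Fin n) ℂ) (v : Fin n → ℂ) (F : ℝ → ℂ) :
    ∑ i, F (singVals (Uᴴ * Matrix.diagonal v * U) i) = ∑ i, F (‖v i‖) := by
  set B := Uᴴ * Matrix.diagonal v * U with hBdef
  have hUU : U * Uᴴ = 1 := by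
    rw [← Matrix.star_eq_conjTranspose]; exact Matrix.mem_unitaryGroup_iff.mp hU
  have hB : Bᴴ * B = star U * Matrix.diagonal (fun i => star (v i) * v i) * U := by
    rw [Matrix.star_eq_conjTranspose]
    have h1 : Bᴴ = Uᴴ * Matrix.diagonal (star v) * U := by
      rw [hBdef, Matrix.conjTranspose_mul, Matrix.conjTranspose_mul,
        Matrix.conjTranspose_conjTranspose, Matrix.diagonal_conjTranspose, mul_assoc]
    rw [h1, hBdef]
    calc Uᴴ * Matrix.diagonal (star v) * U * (Uᴴ * Matrix.diagonal v * U)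
        = Uᴴ * Matrix.diagonal (star v) * ((U * Uᴴ) * (Matrix.diagonal v * U)) := by
          simp only [mul_assoc]
      _ = Uᴴ * (Matrix.diagonal (star v) * Matrix.diagonal v) * U := by
          rw [hUU, one_mul]; simp only [mul_assoc]
      _ = _ := by rw [Matrix.diagonal_mul_diagonal]; rfl
  have hch : (Bᴴ * B).charpoly
      = (Matrix.diagonal (fun i => star (v i) * v i)).charpoly := by
    rw [hB]; exact charpoly_unitary_conj _ _ hU
  have key := hermitian_sum_eq (Matrix.isHermitian_conjTranspose_mul_self B)
      (fun i => star (v i) * v i) hch (fun z => F (Real.sqrt z.re))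
  calc ∑ i, F (singVals B i)
      = ∑ i, (fun z => F (Real.sqrt z.re))
          (((Matrix.isHermitian_conjTranspose_mul_self B).eigenvalues i : ℂ)) := by
        refine Finset.sum_congr rfl fun i _ => ?_
        simp [singVals]
    _ = ∑ i, (fun z => F (Real.sqrt z.re)) (star (v i) * v i) := key
    _ = ∑ i, F (‖v i‖) := by
        refine Finset.sum_congr rfl fun i _ => ?_
        have h2 : star (v i) * v i = ((Complex.normSq (v i) : ℝ) : ℂ) := by
          rw [Complex.normSq_eq_conj_mul_self]; rfl
        simp only [h2, Complex.ofReal_re]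
        rw [← Complex.sq_norm, Real.sqrt_sq (norm_nonneg _)]

open Polynomial in
lemma roots_charpoly_diagonal {n : ℕ} (v : Fin n → ℂ) :
    (Matrix.diagonal v).charpoly.roots = Multiset.map v Finset.univ.val := by
  rw [charpoly_diagonal_eq, Finset.prod_eq_multiset_prod]
  calc (Multiset.map (fun i => X - C (v i)) Finset.univ.val).prod.roots
      = (Multiset.map (fun a => X - C a) (Multiset.map v Finset.univ.val)).prod.roots := by
        rw [Multiset.map_map]; rfl
    _ = Multiset.map v Finset.univ.val := roots_multiset_prod_X_sub_C _

lemma multiset_sum_eq {n : ℕ} (v : Fin n → ℂ) (G : ℂ → ℂ) :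
    (Multiset.map G (Multiset.map v Finset.univ.val)).sum = ∑ i, G (v i) := by
  rw [Multiset.map_map, Finset.sum_eq_multiset_sum]; rfl

noncomputable def bumpR : C(ℝ, ℂ) :=
  ⟨fun x => ((max 0 (1 - |x|) : ℝ) : ℂ),
    Complex.continuous_ofReal.comp (continuous_const.max (continuous_const.sub continuous_abs))⟩

lemma bumpR_support : HasCompactSupport bumpR := by
  apply HasCompactSupport.intro (isCompact_Icc (a := (-1:ℝ)) (b := 1))
  intro x hx
  have h1 : 1 < |x| := by
    by_contra h
    exact hx (Set.mem_Icc.mpr (abs_le.mp (not_lt.mp h)))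
  show ((max 0 (1 - |x|) : ℝ) : ℂ) = 0
  rw [max_eq_left (by linarith)]
  simp

lemma bumpR_zero : bumpR 0 = 1 := by
  show ((max 0 (1 - |(0:ℝ)|) : ℝ) : ℂ) = 1
  norm_num

lemma bumpR_two : bumpR 2 = 0 := by
  show ((max 0 (1 - |(2:ℝ)|) : ℝ) : ℂ) = 0
  norm_num

noncomputable def bumpC : C(ℂ, ℂ) :=
  ⟨fun z => ((max 0 (1 - ‖z - 1‖) : ℝ) : ℂ),
    Complex.continuous_ofReal.comp (continuous_const.max (continuous_const.sub
      (continuous_norm.comp (continuous_id.sub continuous_const))))⟩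

lemma bumpC_support : HasCompactSupport bumpC := by
  apply HasCompactSupport.intro (isCompact_closedBall (1:ℂ) 1)
  intro z hz
  have h1 : 1 < ‖z - 1‖ := by
    by_contra h
    exact hz (Metric.mem_closedBall.mpr (by rwa [Complex.dist_eq, ← not_lt]))
  show ((max 0 (1 - ‖z - 1‖) : ℝ) : ℂ) = 0
  rw [max_eq_left (by linarith)]
  simp

lemma bump_ineq (z : ℂ) :
    max 0 (1 - ‖z - 1‖) + max 0 (1 - |‖z + 1‖|) ≤ 1 := by
  rw [abs_of_nonneg (norm_nonneg _)]
  rcases le_or_gt 1 (‖z - 1‖) with h | h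
  · rw [max_eq_left (by linarith), zero_add]
    exact max_le (by norm_num) (by nlinarith [norm_nonneg (z + 1)])
  · have ht := norm_add_le (z + 1) (1 - z)
    have he : (z + 1) + (1 - z) = 2 := by ring
    rw [he, Complex.norm_two, norm_sub_rev] at ht
    have h2 : 1 - ‖z + 1‖ ≤ 0 := by linarith
    rw [max_eq_left h2, add_zero]
    exact max_le (by norm_num) (by linarith [norm_nonneg (z - 1)])

/-- There is a diagonal (hence normal) sequence `{D_n}` with singular value
symbol `1` such that `{D_n + I_n}` admits no singular value symbol (the
empirical singular value distributions do not converge); consequently `{D_n}`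
admits no normal form: no unitary sequence `{U_n}` and diagonal sequence
`{E_n}` with a spectral symbol `k` make `{U_nᴴ E_n U_n}` acs equivalent to `{D_n}`. -/
theorem exists_no_normal_form :
    ∃ d : ∀ n : ℕ, Fin n → ℂ,
      SingSymb (Set.Icc (0:ℝ) 1) (fun n => Matrix.diagonal (d n)) (fun _ => (1:ℂ)) ∧
      (∃ F : C(ℝ, ℂ), HasCompactSupport F ∧
        ∀ L : ℂ, ¬ Tendsto
          (fun n : ℕ => (n : ℂ)⁻¹ *
            ∑ i, F (singVals (Matrix.diagonal (d n) + (1 : Matrix (Fin n) (Fin n) ℂ)) i))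
          atTop (nhds L)) ∧
      ∀ (q : ℕ) (Dset : Set (EuclideanSpace ℝ (Fin q))),
        0 < volume Dset → volume Dset < ⊤ →
        ∀ U : ∀ n : ℕ, Matrix (Fin n) (Fin n) ℂ,
          (∀ n, U n ∈ Matrix.unitaryGroup (Fin n) ℂ) →
          ∀ (e : ∀ n : ℕ, Fin n → ℂ) (k : EuclideanSpace ℝ (Fin q) → ℂ),
            SpecSymb Dset (fun n => Matrix.diagonal (e n)) k →
            ¬ ZeroDist (fun n =>
                (U n)ᴴ * Matrix.diagonal (e n) * U n - Matrix.diagonal (d n)) := by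
  have hm2 : Tendsto (fun m : ℕ => 2*m) atTop atTop :=
    StrictMono.tendsto_atTop (fun a b h => by omega)
  have hm2' : Tendsto (fun m : ℕ => 2*m+1) atTop atTop :=
    StrictMono.tendsto_atTop (fun a b h => by omega)
  refine ⟨fun n _ => (-1:ℂ)^n, ?_, ?_, ?_⟩
  · -- Part 1 : SingSymb
    intro F hF
    have hRHS : (((volume (Set.Icc (0:ℝ) 1)).toReal)⁻¹ •
        ∫ x in Set.Icc (0:ℝ) 1, F (‖(1:ℂ)‖)) = F 1 := by
      rw [MeasureTheory.setIntegral_const]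
      simp [Real.volume_Icc]
    have heq : ∀ n : ℕ, 1 ≤ n →
        (n:ℂ)⁻¹ * ∑ i : Fin n, F (singVals (Matrix.diagonal
          (fun _ : Fin n => (-1:ℂ)^n)) i) = F 1 := by
      intro n hn
      have h1 : Matrix.diagonal (fun _ : Fin n => (-1:ℂ)^n)
          = (1 : Matrix (Fin n) (Fin n) ℂ)ᴴ * Matrix.diagonal (fun _ : Fin n => (-1:ℂ)^n)
            * (1 : Matrix (Fin n) (Fin n) ℂ) := by
        rw [Matrix.conjTranspose_one, one_mul, mul_one]
      rw [h1, sum_singVals_conj 1 (one_mem _) _ F]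
      have h2 : ‖(-1:ℂ)^n‖ = 1 := by
        rw [norm_pow]; simp
      simp only [h2]
      rw [Finset.sum_const, Finset.card_univ, Fintype.card_fin, nsmul_eq_mul, ← mul_assoc,
        inv_mul_cancel₀ (Nat.cast_ne_zero.mpr (by omega)), one_mul]
    have main : Tendsto (fun n : ℕ => (n:ℂ)⁻¹ * ∑ i : Fin n, F (singVals (Matrix.diagonal
        (fun _ : Fin n => (-1:ℂ)^n)) i)) atTop (nhds (F 1)) :=
      Tendsto.congr' (by filter_upwards [eventually_ge_atTop 1] with n hn
        using (heq n hn).symm) tendsto_const_nhds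
    convert main using 2
  · -- Part 2 : no singular value symbol for D + I
    refine ⟨bumpR, bumpR_support, fun L hL => ?_⟩
    have key : ∀ n : ℕ,
        (n:ℂ)⁻¹ * ∑ i, bumpR (singVals (Matrix.diagonal (fun _ : Fin n => (-1:ℂ)^n)
          + (1 : Matrix (Fin n) (Fin n) ℂ)) i)
        = (n:ℂ)⁻¹ * ∑ _i : Fin n, bumpR (‖(-1:ℂ)^n + 1‖) := by
      intro n
      congr 1
      have h1 : Matrix.diagonal (fun _ : Fin n => (-1:ℂ)^n) + (1 : Matrix (Fin n) (Fin n) ℂ)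
          = (1 : Matrix (Fin n) (Fin n) ℂ)ᴴ * Matrix.diagonal (fun _ : Fin n => (-1:ℂ)^n + 1)
            * (1 : Matrix (Fin n) (Fin n) ℂ) := by
        rw [Matrix.conjTranspose_one, one_mul, mul_one, ← Matrix.diagonal_one,
          Matrix.diagonal_add]
      rw [h1]
      exact sum_singVals_conj 1 (one_mem _) _ bumpR
    have hLeq0 : L = 0 := by
      refine tendsto_nhds_unique (hL.comp hm2) ?_
      have heven : ∀ m : ℕ, (((2*m : ℕ):ℂ)⁻¹ *
          ∑ i, bumpR (singVals (Matrix.diagonal (fun _ : Fin (2*m) => (-1:ℂ)^(2*m))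
            + (1 : Matrix (Fin (2*m)) (Fin (2*m)) ℂ)) i)) = 0 := by
        intro m
        rw [key (2*m)]
        have h2 : ((-1:ℂ))^(2*m) + 1 = 2 := by rw [pow_mul]; norm_num
        rw [h2, Complex.norm_two, bumpR_two, Finset.sum_const, smul_zero, mul_zero]
      exact Tendsto.congr (fun m => (heven m).symm) tendsto_const_nhds
    have hLeq1 : L = 1 := by
      refine tendsto_nhds_unique (hL.comp hm2') ?_
      have hodd : ∀ m : ℕ, (((2*m+1 : ℕ):ℂ)⁻¹ *
          ∑ i, bumpR (singVals (Matrix.diagonal (fun _ : Fin (2*m+1) => (-1:ℂ)^(2*m+1))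
            + (1 : Matrix (Fin (2*m+1)) (Fin (2*m+1)) ℂ)) i)) = 1 := by
        intro m
        rw [key (2*m+1)]
        have h2 : ((-1:ℂ))^(2*m+1) + 1 = 0 := by rw [pow_succ, pow_mul]; norm_num
        rw [h2, norm_zero, bumpR_zero, Finset.sum_const, Finset.card_univ, Fintype.card_fin,
          nsmul_eq_mul, mul_one, inv_mul_cancel₀ (Nat.cast_ne_zero.mpr (by omega))]
      exact Tendsto.congr (fun m => (hodd m).symm) tendsto_const_nhds
    rw [hLeq0] at hLeq1
    exact zero_ne_one hLeq1
  · -- Part 3 : no normal form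
    intro q Dset hv0 hvtop U hU e k hspec hzero
    have hZ : ∀ n : ℕ, (U n)ᴴ * Matrix.diagonal (e n) * U n
        - Matrix.diagonal (fun _ : Fin n => (-1:ℂ)^n)
        = (U n)ᴴ * Matrix.diagonal (fun i : Fin n => e n i - (-1:ℂ)^n) * U n := by
      intro n
      have hUstar : (U n)ᴴ * U n = 1 := by
        rw [← Matrix.star_eq_conjTranspose]
        exact Matrix.mem_unitaryGroup_iff'.mp (hU n)
      have h1 : Matrix.diagonal (fun i : Fin n => e n i - (-1:ℂ)^n)
          = Matrix.diagonal (e n) - ((-1:ℂ)^n) • (1 : Matrix (Fin n) (Fin n) ℂ) := by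
        rw [Matrix.smul_one_eq_diagonal, ← Matrix.diagonal_sub]
      have h2 : (U n)ᴴ * (((-1:ℂ)^n) • (1 : Matrix (Fin n) (Fin n) ℂ)) * U n
          = Matrix.diagonal (fun _ : Fin n => (-1:ℂ)^n) := by
        rw [Matrix.mul_smul, mul_one, Matrix.smul_mul, hUstar, Matrix.smul_one_eq_diagonal]
      rw [h1, mul_sub, sub_mul, h2]
    have ht := hzero bumpR bumpR_support
    rw [bumpR_zero] at ht
    have ht' : Tendsto (fun n : ℕ => (n:ℂ)⁻¹ *
        ∑ i, bumpR (‖e n i - (-1:ℂ)^n‖)) atTop (nhds 1) := by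
      refine ht.congr fun n => ?_
      show (n:ℂ)⁻¹ * ∑ i, bumpR (singVals ((U n)ᴴ * Matrix.diagonal (e n) * U n
        - Matrix.diagonal (fun _ : Fin n => (-1:ℂ)^n)) i) = _
      rw [hZ n, sum_singVals_conj (U n) (hU n) _ bumpR]
    have hs := hspec bumpC bumpC_support
    set L : ℂ := ((volume Dset).toReal)⁻¹ • ∫ x in Dset, bumpC (k x) with hLdef
    have hs' : Tendsto (fun n : ℕ => (n:ℂ)⁻¹ * ∑ i, bumpC (e n i)) atTop (nhds L) := by
      refine hs.congr fun n => ?_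
      rw [roots_charpoly_diagonal, multiset_sum_eq]
    have heq_even : ∀ m : ℕ, ((fun n : ℕ => (n:ℂ)⁻¹ * ∑ i, bumpC (e n i)) ∘
        (fun m : ℕ => 2*m)) m = ((fun n : ℕ => (n:ℂ)⁻¹ *
          ∑ i, bumpR (‖e n i - (-1:ℂ)^n‖)) ∘ (fun m : ℕ => 2*m)) m := by
      intro m
      show (((2*m:ℕ)):ℂ)⁻¹ * ∑ i, bumpC (e (2*m) i)
        = (((2*m:ℕ)):ℂ)⁻¹ * ∑ i, bumpR (‖e (2*m) i - (-1:ℂ)^(2*m)‖)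
      congr 1
      refine Finset.sum_congr rfl fun i _ => ?_
      have hne : ((-1:ℂ))^(2*m) = 1 := by rw [pow_mul]; norm_num
      rw [hne]
      show ((max 0 (1 - ‖e (2*m) i - 1‖) : ℝ) : ℂ)
        = ((max 0 (1 - |‖e (2*m) i - 1‖|) : ℝ) : ℂ)
      rw [abs_of_nonneg (norm_nonneg _)]
    have hL1 : L = 1 :=
      tendsto_nhds_unique (hs'.comp hm2) ((ht'.comp hm2).congr (fun m => (heq_even m).symm))
    have hre : ∀ (n : ℕ) (w : Fin n → ℝ),
        ((n:ℂ)⁻¹ * ∑ i, ((w i : ℝ) : ℂ)).re = (n:ℝ)⁻¹ * ∑ i, w i := by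
      intro n w
      have h : ((n:ℂ)⁻¹ * ∑ i, ((w i : ℝ) : ℂ)) = (((n:ℝ)⁻¹ * ∑ i, w i : ℝ) : ℂ) := by
        push_cast; ring
      rw [h, Complex.ofReal_re]
    have hsa : Tendsto (fun m : ℕ => (((2*m+1 : ℕ)):ℝ)⁻¹ *
        ∑ i, max 0 (1 - ‖e (2*m+1) i - 1‖)) atTop (nhds L.re) := by
      have h := (Complex.continuous_re.tendsto L).comp (hs'.comp hm2')
      refine h.congr fun m => ?_
      exact hre (2*m+1) (fun i => max 0 (1 - ‖e (2*m+1) i - 1‖))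
    have hta : Tendsto (fun m : ℕ => (((2*m+1 : ℕ)):ℝ)⁻¹ *
        ∑ i, max 0 (1 - |‖e (2*m+1) i + 1‖|)) atTop (nhds 1) := by
      have h := (Complex.continuous_re.tendsto 1).comp (ht'.comp hm2')
      rw [Complex.one_re] at h
      refine h.congr fun m => ?_
      show (((2*m+1:ℕ):ℂ)⁻¹ *
        ∑ i, bumpR (‖e (2*m+1) i - (-1:ℂ)^(2*m+1)‖)).re = _
      have hodd : ((-1:ℂ))^(2*m+1) = -1 := by rw [pow_succ, pow_mul]; norm_num
      simp only [hodd, sub_neg_eq_add]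
      exact hre (2*m+1) (fun i => max 0 (1 - |‖e (2*m+1) i + 1‖|))
    have hineq : ∀ m : ℕ, ((2*m+1:ℕ):ℝ)⁻¹ *
        ∑ i, max 0 (1 - ‖e (2*m+1) i - 1‖)
        ≤ 1 - ((2*m+1:ℕ):ℝ)⁻¹ * ∑ i, max 0 (1 - |‖e (2*m+1) i + 1‖|) := by
      intro m
      have hnpos : (0:ℝ) < ((2*m+1:ℕ):ℝ) := by
        exact_mod_cast Nat.succ_pos (2*m)
      have hsum : ∑ i : Fin (2*m+1), (max 0 (1 - ‖e (2*m+1) i - 1‖)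
          + max 0 (1 - |‖e (2*m+1) i + 1‖|)) ≤ ∑ _i : Fin (2*m+1), (1:ℝ) :=
        Finset.sum_le_sum fun i _ => bump_ineq (e (2*m+1) i)
      rw [Finset.sum_add_distrib, Finset.sum_const, Finset.card_univ, Fintype.card_fin,
        nsmul_eq_mul, mul_one] at hsum
      have h2 := mul_le_mul_of_nonneg_left hsum (le_of_lt (inv_pos.mpr hnpos))
      rw [mul_add, inv_mul_cancel₀ (ne_of_gt hnpos)] at h2
      linarith
    have hfinal := le_of_tendsto_of_tendsto' hsa
      ((tendsto_const_nhds (x := (1:ℝ)) (f := atTop)).sub hta) hineq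
    rw [hL1, Complex.one_re] at hfinal
    norm_num at hfinal
end

section
/- Let $E_n$ be the $n\times n$ matrix with $(E_n)_{i,i+1} = n^{-1}$ for $i<n$, $(E_n)_{n,1} = n^{n-1}$, and zeros elsewhere. Then $\{E_n\}_n$ is zero-distributed ($\sim_\sigma 0$), each $E_n$ is diagonalizable with the same eigenvalues as the cyclic shift $C_n$ (the $n$-th roots of unity), and for the continuous function $f(z) = z + 1 - |z|^2$ the sequence $\{f(E_n)\}_n = \{E_n\}_n$ does not have singular value symbol $f(0) = 1$. -/
open MeasureTheory Filter Matrix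

/-- The basic cyclic shift circulant: ones on the superdiagonal and in position `(n,1)`. -/
def shiftM (n : ℕ) : Matrix (Fin n) (Fin n) ℂ :=
  fun i j => if (i : ℕ) + 1 = (j : ℕ) ∨ ((i : ℕ) = n - 1 ∧ (j : ℕ) = 0) then 1 else 0

/-- `E_n`: `n⁻¹` on the superdiagonal, `n^{n-1}` in position `(n,1)`. -/
noncomputable def Emat (n : ℕ) : Matrix (Fin n) (Fin n) ℂ :=
  fun i j =>
    if (i : ℕ) + 1 = (j : ℕ) then ((n : ℂ))⁻¹
    else if (i : ℕ) = n - 1 ∧ (j : ℕ) = 0 then (n : ℂ) ^ (n - 1)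
    else 0

open Polynomial

lemma charpoly_conj_aux {n : ℕ} (P Q M : Matrix (Fin n) (Fin n) ℂ)
    (h1 : P * Q = 1) : (P * M * Q).charpoly = M.charpoly := by
  unfold Matrix.charpoly
  have hmap : (P.map (C : ℂ → ℂ[X])) * (Q.map C) = 1 := by
    rw [← Matrix.map_mul, h1]
    ext i j
    simp [Matrix.map_apply, Matrix.one_apply, apply_ite]
  have key : charmatrix (P * M * Q) = P.map C * charmatrix M * Q.map C := by
    unfold charmatrix
    have hs : P.map (C : ℂ → ℂ[X]) * Matrix.scalar (Fin n) (X : ℂ[X]) * Q.map C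
        = Matrix.scalar (Fin n) (X : ℂ[X]) := by
      rw [(Matrix.scalar_commute (X : ℂ[X]) (fun r => Commute.all _ _) (P.map C)).symm.eq,
        mul_assoc, hmap, mul_one]
    rw [mul_sub, sub_mul]
    rw [hs]
    congr 1
    simp only [RingHom.mapMatrix_apply]
    rw [← Matrix.map_mul, ← Matrix.map_mul]
  rw [key, Matrix.det_mul, Matrix.det_mul]
  have : (P.map (C : ℂ → ℂ[X])).det * (Q.map C).det = 1 := by
    rw [← Matrix.det_mul, hmap, Matrix.det_one]
  calc (P.map (C : ℂ → ℂ[X])).det * (charmatrix M).det * (Q.map C).det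
      = (P.map (C : ℂ → ℂ[X])).det * (Q.map C).det * (charmatrix M).det := by ring
    _ = (charmatrix M).det := by rw [this, one_mul]

lemma charpoly_diag_aux {n : ℕ} (d : Fin n → ℂ) :
    (Matrix.diagonal d).charpoly = ∏ i, (X - C (d i)) := by
  unfold Matrix.charpoly
  have : charmatrix (Matrix.diagonal d) = Matrix.diagonal (fun i => X - C (d i)) := by
    ext i j
    rw [charmatrix_apply]
    by_cases h : i = j
    · subst h; simp
    · simp [Matrix.diagonal_apply_ne _ h, h]
  rw [this, Matrix.det_diagonal]

noncomputable def dR (n : ℕ) : Fin n → ℝ :=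
  fun j => if (j : ℕ) = 0 then ((n : ℝ) ^ (n - 1)) ^ 2 else ((n : ℝ)⁻¹) ^ 2

lemma EHE (n : ℕ) :
    (Emat n)ᴴ * Emat n = Matrix.diagonal (fun j : Fin n => ((dR n j : ℝ) : ℂ)) := by
  ext j k
  rw [Matrix.mul_apply]
  simp only [Matrix.conjTranspose_apply]
  by_cases hjk : j = k
  · subst hjk
    rw [Matrix.diagonal_apply_eq]
    by_cases hj : (j : ℕ) = 0
    · have hn : 0 < n := j.pos
      rw [Finset.sum_eq_single (⟨n - 1, by omega⟩ : Fin n)]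
      · have h1 : ¬((n - 1) + 1 = (j : ℕ)) := by have := j.isLt; omega
        have hE : Emat n ⟨n - 1, by omega⟩ j = (n : ℂ) ^ (n - 1) := by
          simp [Emat, h1, hj]
        rw [hE]
        simp only [dR, if_pos hj]
        push_cast
        simp [star_pow, star_natCast, sq]
      · intro i _ hi
        have hi' : (i : ℕ) ≠ n - 1 := fun h => hi (Fin.ext h)
        have h1 : ¬((i : ℕ) + 1 = (j : ℕ)) := by omega
        simp [Emat, h1, hi']
      · simp
    · obtain ⟨m, hm⟩ : ∃ m, (j : ℕ) = m + 1 := ⟨(j : ℕ) - 1, by omega⟩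
      rw [Finset.sum_eq_single (⟨m, by have := j.isLt; omega⟩ : Fin n)]
      · have hE : Emat n ⟨m, by have := j.isLt; omega⟩ j = (n : ℂ)⁻¹ := by
          simp only [Emat]
          rw [if_pos (show m + 1 = (j : ℕ) by omega)]
        rw [hE]
        simp only [dR, if_neg hj]
        push_cast
        simp [star_inv₀, star_natCast, sq]
      · intro i _ hi
        have hi' : (i : ℕ) ≠ m := fun h => hi (Fin.ext (by simpa using h))
        have h1 : ¬((i : ℕ) + 1 = (j : ℕ)) := by omega
        simp [Emat, h1, hj]
      · simp
  · rw [Matrix.diagonal_apply_ne _ hjk]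
    apply Finset.sum_eq_zero
    intro i _
    have hjk' : (j : ℕ) ≠ (k : ℕ) := fun h => hjk (Fin.ext h)
    by_cases h1 : (i : ℕ) + 1 = (j : ℕ)
    · have hk1 : ¬((i : ℕ) + 1 = (k : ℕ)) := by omega
      have hk2 : ¬((i : ℕ) = n - 1 ∧ (k : ℕ) = 0) := by
        rintro ⟨a, b⟩; have := j.isLt; omega
      have hEk : Emat n i k = 0 := by
        simp only [Emat]; rw [if_neg hk1, if_neg hk2]
      rw [hEk, mul_zero]
    · by_cases h2 : (i : ℕ) = n - 1 ∧ (j : ℕ) = 0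
      · have hk1 : ¬((i : ℕ) + 1 = (k : ℕ)) := by have := k.isLt; omega
        have hk2 : ¬((i : ℕ) = n - 1 ∧ (k : ℕ) = 0) := by rintro ⟨a, b⟩; omega
        have hEk : Emat n i k = 0 := by
          simp only [Emat]; rw [if_neg hk1, if_neg hk2]
        rw [hEk, mul_zero]
      · have hEj : Emat n i j = 0 := by
          simp only [Emat]; rw [if_neg h1, if_neg h2]
        rw [hEj, star_zero, zero_mul]

lemma prod_eq_multiset {n : ℕ} (f : Fin n → ℂ) :
    ∏ i, (X - C (f i)) = ((Finset.univ.val.map f).map fun a => X - C a).prod := by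
  rw [Multiset.map_map]
  rfl

lemma eig_multiset (n : ℕ) :
    Finset.univ.val.map (Matrix.isHermitian_conjTranspose_mul_self (Emat n)).eigenvalues
      = Finset.univ.val.map (dR n) := by
  set hH := Matrix.isHermitian_conjTranspose_mul_self (Emat n)
  have hU := (Matrix.mem_unitaryGroup_iff).mp (hH.eigenvectorUnitary).2
  have hcp2 : ((Emat n)ᴴ * Emat n).charpoly
      = ∏ i, (X - C ((hH.eigenvalues i : ℝ) : ℂ)) := by
    conv_lhs => rw [hH.spectral_theorem, Unitary.conjStarAlgAut_apply]
    rw [charpoly_conj_aux _ _ _ hU, charpoly_diag_aux]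
    rfl
  have hcp : ((Emat n)ᴴ * Emat n).charpoly = ∏ i, (X - C ((dR n i : ℝ) : ℂ)) := by
    rw [EHE n, charpoly_diag_aux]
  have key : Finset.univ.val.map (fun i => ((hH.eigenvalues i : ℝ) : ℂ))
      = Finset.univ.val.map (fun i => ((dR n i : ℝ) : ℂ)) := by
    have := congrArg Polynomial.roots (hcp2.symm.trans hcp)
    rwa [prod_eq_multiset, prod_eq_multiset, Polynomial.roots_multiset_prod_X_sub_C,
      Polynomial.roots_multiset_prod_X_sub_C] at this
  have : (Finset.univ.val.map hH.eigenvalues).map (fun x : ℝ => (x : ℂ))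
      = (Finset.univ.val.map (dR n)).map (fun x : ℝ => (x : ℂ)) := by
    rw [Multiset.map_map, Multiset.map_map]; exact key
  exact Multiset.map_injective Complex.ofReal_injective this

lemma natCast_inv_tendsto : Tendsto (fun n : ℕ => ((n : ℂ))⁻¹) atTop (nhds 0) := by
  have hre : Tendsto (fun n : ℕ => ((n : ℝ))⁻¹) atTop (nhds 0) :=
    tendsto_inv_atTop_zero.comp tendsto_natCast_atTop_atTop
  apply squeeze_zero_norm (a := fun n : ℕ => ((n : ℝ))⁻¹) _ (by simpa using hre.norm)
  intro n
  simp

lemma Emat_zeroDist : ZeroDist Emat := by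
  intro F hF
  obtain ⟨C, hC⟩ := hF.exists_bound_of_continuous F.continuous
  have hsum : ∀ n : ℕ, ∑ i, F (singVals (Emat n) i) = ∑ i, F (Real.sqrt (dR n i)) := by
    intro n
    have h1 : ∑ i, F (singVals (Emat n) i)
        = ((Finset.univ.val.map
            (Matrix.isHermitian_conjTranspose_mul_self (Emat n)).eigenvalues).map
            (fun x => F (Real.sqrt x))).sum := by
      rw [Multiset.map_map]; rfl
    rw [h1, eig_multiset, Multiset.map_map]; rfl
  have heq : ∀ᶠ n : ℕ in atTop,
      ((n : ℂ)⁻¹ * F (((n : ℝ)) ^ (n - 1)) +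
        ((n - 1 : ℕ) : ℂ) * (n : ℂ)⁻¹ * F (((n : ℝ))⁻¹))
      = (n : ℂ)⁻¹ * ∑ i, F (singVals (Emat n) i) := by
    filter_upwards [eventually_ge_atTop 1] with n hn
    obtain ⟨m, rfl⟩ : ∃ m, n = m + 1 := ⟨n - 1, by omega⟩
    rw [hsum]
    rw [Fin.sum_univ_succ]
    have h0 : Real.sqrt (dR (m + 1) 0) = ((m + 1 : ℕ) : ℝ) ^ (m + 1 - 1) := by
      simp only [dR]
      rw [if_pos (by simp)]
      exact Real.sqrt_sq (by positivity)
    have hs : ∀ i : Fin m, Real.sqrt (dR (m + 1) i.succ) = (((m + 1 : ℕ) : ℝ))⁻¹ := by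
      intro i
      simp only [dR]
      rw [if_neg (by simp)]
      exact Real.sqrt_sq (by positivity)
    rw [h0]
    have : ∑ i : Fin m, F (Real.sqrt (dR (m + 1) i.succ)) = (m : ℂ) * F (((m + 1 : ℕ) : ℝ))⁻¹ := by
      rw [Finset.sum_congr rfl (fun i _ => by rw [hs i])]
      simp [Finset.sum_const, mul_comm]
    rw [this]
    push_cast
    ring
  have hT1 : Tendsto (fun n : ℕ => (n : ℂ)⁻¹ * F (((n : ℝ)) ^ (n - 1))) atTop (nhds 0) := by
    apply squeeze_zero_norm (a := fun n : ℕ => ((n : ℝ))⁻¹ * C)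
    · intro n
      rw [norm_mul]
      apply mul_le_mul _ (hC _) (norm_nonneg _) (by positivity)
      simp
    · have hre : Tendsto (fun n : ℕ => ((n : ℝ))⁻¹) atTop (nhds 0) :=
        tendsto_inv_atTop_zero.comp tendsto_natCast_atTop_atTop
      simpa using hre.mul_const C
  have hT2a : Tendsto (fun n : ℕ => ((n - 1 : ℕ) : ℂ) * (n : ℂ)⁻¹) atTop (nhds 1) := by
    have : ∀ᶠ n : ℕ in atTop, (1 : ℂ) - (n : ℂ)⁻¹ = ((n - 1 : ℕ) : ℂ) * (n : ℂ)⁻¹ := by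
      filter_upwards [eventually_ge_atTop 1] with n hn
      have hn0 : (n : ℂ) ≠ 0 := by
        exact_mod_cast Nat.cast_ne_zero.mpr (by omega : n ≠ 0)
      have : ((n - 1 : ℕ) : ℂ) = (n : ℂ) - 1 := by
        push_cast [hn]; ring
      rw [this]
      field_simp
    apply Tendsto.congr' this
    simpa using (tendsto_const_nhds (x := (1 : ℂ))).sub natCast_inv_tendsto
  have hT2b : Tendsto (fun n : ℕ => F (((n : ℝ))⁻¹)) atTop (nhds (F 0)) := by
    exact (F.continuous.tendsto 0).comp
      (tendsto_inv_atTop_zero.comp tendsto_natCast_atTop_atTop)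
  have := (hT1.add (hT2a.mul hT2b)).congr' heq
  simpa using this

lemma pow_ne (n : ℕ) (i : Fin n) : ((n : ℂ)) ^ (i : ℕ) ≠ 0 :=
  pow_ne_zero _ (Nat.cast_ne_zero.mpr (by have := i.pos; omega))

lemma diag_inv (n : ℕ) :
    (Matrix.diagonal (fun i : Fin n => (n : ℂ) ^ (i : ℕ)))⁻¹
      = Matrix.diagonal (fun i : Fin n => ((n : ℂ) ^ (i : ℕ))⁻¹) := by
  apply Matrix.inv_eq_right_inv
  rw [Matrix.diagonal_mul_diagonal,
    show (fun i : Fin n => (n : ℂ) ^ (i : ℕ) * ((n : ℂ) ^ (i : ℕ))⁻¹) = fun _ => (1 : ℂ) from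
      funext fun i => mul_inv_cancel₀ (pow_ne n i), Matrix.diagonal_one]

lemma SinvS (n : ℕ) :
    Matrix.diagonal (fun i : Fin n => (n : ℂ) ^ (i : ℕ)) *
      (Matrix.diagonal (fun i : Fin n => (n : ℂ) ^ (i : ℕ)))⁻¹ = 1 := by
  rw [diag_inv, Matrix.diagonal_mul_diagonal,
    show (fun i : Fin n => (n : ℂ) ^ (i : ℕ) * ((n : ℂ) ^ (i : ℕ))⁻¹) = fun _ => (1 : ℂ) from
      funext fun i => mul_inv_cancel₀ (pow_ne n i), Matrix.diagonal_one]

lemma Emat_eq (n : ℕ) : Emat n =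
    Matrix.diagonal (fun i : Fin n => (n : ℂ) ^ (i : ℕ)) * shiftM n *
      (Matrix.diagonal (fun i : Fin n => (n : ℂ) ^ (i : ℕ)))⁻¹ := by
  rw [diag_inv]
  ext i j
  rw [Matrix.mul_diagonal, Matrix.diagonal_mul]
  by_cases h1 : (i : ℕ) + 1 = (j : ℕ)
  · have hsh : shiftM n i j = 1 := by
      simp [shiftM, h1]
    have hE : Emat n i j = ((n : ℂ))⁻¹ := by simp [Emat, h1]
    rw [hE, hsh, mul_one]
    have hj : (j : ℕ) = (i : ℕ) + 1 := h1.symm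
    rw [hj, pow_succ, mul_inv]
    rw [← mul_assoc, mul_inv_cancel₀ (pow_ne n i), one_mul]
  · by_cases h2 : (i : ℕ) = n - 1 ∧ (j : ℕ) = 0
    · have hsh : shiftM n i j = 1 := by simp [shiftM, h2]
      have hE : Emat n i j = (n : ℂ) ^ (n - 1) := by
        simp only [Emat]; rw [if_neg h1, if_pos h2]
      rw [hE, hsh, mul_one, h2.1, h2.2, pow_zero, inv_one, mul_one]
    · have hsh : shiftM n i j = 0 := by
        simp only [shiftM]; rw [if_neg (by tauto)]
      have hE : Emat n i j = 0 := by
        simp only [Emat]; rw [if_neg h1, if_neg h2]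
      rw [hE, hsh, mul_zero, zero_mul]

noncomputable def F0 : C(ℝ, ℂ) :=
  ⟨fun x => ((max 0 (1 - |x - 1|) : ℝ) : ℂ),
    Complex.continuous_ofReal.comp
      (continuous_const.max (continuous_const.sub (continuous_id.sub continuous_const).abs))⟩

lemma F0_compact : HasCompactSupport (F0 : ℝ → ℂ) := by
  apply HasCompactSupport.intro (isCompact_Icc (a := (0:ℝ)) (b := 2))
  intro x hx
  simp only [Set.mem_Icc, not_and_or, not_le] at hx
  have h1 : (1:ℝ) ≤ |x - 1| := by
    rcases hx with h | h
    · exact le_abs.mpr (Or.inr (by linarith))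
    · exact le_abs.mpr (Or.inl (by linarith))
  show ((max 0 (1 - |x - 1|) : ℝ) : ℂ) = 0
  rw [max_eq_left (by linarith)]
  simp

lemma F0_zero : F0 0 = 0 := by
  show ((max 0 (1 - |(0:ℝ) - 1|) : ℝ) : ℂ) = 0
  norm_num

lemma F0_one : F0 1 = 1 := by
  show ((max 0 (1 - |(1:ℝ) - 1|) : ℝ) : ℂ) = 1
  norm_num

/-- `{E_n}` is zero-distributed, each `E_n = S_n C_n S_n⁻¹` (with
`S_n = diag(1, n, …, n^{n-1})`) is diagonalizable with the same eigenvalues as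
the cyclic shift `C_n` (the `n`-th roots of unity), `f(z) = z + 1 - |z|²`
fixes every unit-modulus eigenvalue (so `f(E_n) = E_n`), yet `{E_n} = {f(E_n)}`
does not have the constant `f(0) = 1` as a singular value symbol. -/
theorem Emat_counterexample :
    ZeroDist Emat ∧
    (∀ n : ℕ, Emat n =
        Matrix.diagonal (fun i : Fin n => (n : ℂ) ^ (i : ℕ)) * shiftM n *
          (Matrix.diagonal (fun i : Fin n => (n : ℂ) ^ (i : ℕ)))⁻¹) ∧
    (∀ n : ℕ, (Emat n).charpoly = (shiftM n).charpoly) ∧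
    (∀ z : ℂ, ‖z‖ = 1 → z + 1 - ((‖z‖ : ℂ)) ^ 2 = z) ∧
    ¬ SingSymb (Set.Icc (0:ℝ) 1) Emat (fun _ => (1:ℂ)) := by
  refine ⟨Emat_zeroDist, Emat_eq, fun n => ?_, fun z hz => ?_, fun hS => ?_⟩
  · rw [Emat_eq n, charpoly_conj_aux _ _ _ (SinvS n)]
  · rw [hz]; norm_num
  · have h1 := Emat_zeroDist F0 F0_compact
    have h2 := hS F0 F0_compact
    have hval : ((volume (Set.Icc (0:ℝ) 1)).toReal)⁻¹ •
        ∫ x in Set.Icc (0:ℝ) 1, F0 ‖(fun _ : ℝ => (1:ℂ)) x‖ = F0 1 := by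
      rw [MeasureTheory.setIntegral_const]
      simp [Real.volume_Icc]
    rw [hval] at h2
    have := tendsto_nhds_unique h1 h2
    rw [F0_zero, F0_one] at this
    exact zero_ne_one this
end
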